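/- arXiv:1408.2208 — 7 statements merged into one kernel-verified Lean document; each statement's English description precedes it below -/
import Mathlib

section
/- (Reverse Eckart–Young, 2-norm part) Let A be an m×n real matrix with singular values σ_1 ≥ ... ≥ σ_n, and let B be a matrix of rank at most k satisfying ‖A − B‖_F ≤ sqrt(η² + Σ_{j=k+1}^n σ_j²) for some η ≥ 0. Then ‖A − B‖₂ ≤ sqrt(η² + σ_{k+1}²). -/
open Matrix

noncomputable def frobNorm {m n : ℕ} (A : Matrix (Fin m) (Fin n) ℝ) : ℝ :=
  Real.sqrt (∑ i, ∑ j, (A i j) ^ 2)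

noncomputable def specNorm {m n : ℕ} (A : Matrix (Fin m) (Fin n) ℝ) : ℝ :=
  ‖(Matrix.toEuclideanLin A).toContinuousLinearMap‖

/-- The `j`-th largest singular value of `A` (0-indexed). -/
noncomputable def sv {m n : ℕ} (A : Matrix (Fin m) (Fin n) ℝ) (j : Fin n) : ℝ :=
  Real.sqrt
    (((Matrix.isHermitian_conjTranspose_mul_self A).eigenvalues ∘
        Tuple.sort (Matrix.isHermitian_conjTranspose_mul_self A).eigenvalues)
      j.rev)


open Finset



lemma card_filter_lt_fin {n d : ℕ} (hd : d < n) :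
    (Finset.univ.filter (fun j : Fin n => (j : ℕ) < d)).card = d := by
  have : Finset.univ.filter (fun j : Fin n => (j : ℕ) < d) = Finset.Iio ⟨d, hd⟩ := by
    ext j; simp [Fin.lt_def]
  rw [this, Fin.card_Iio]

lemma scalar_lower {n d : ℕ} (μ t : Fin n → ℝ) (hμ : Monotone μ)
    (ht0 : ∀ j, 0 ≤ t j) (ht1 : ∀ j, t j ≤ 1) (hsum : ∑ j, t j = (d : ℝ)) (hd : d ≤ n) :
    ∑ j ∈ Finset.univ.filter (fun j : Fin n => (j : ℕ) < d), μ j ≤ ∑ j, μ j * t j := by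
  by_cases hdn : d < n
  · set P := Finset.univ.filter (fun j : Fin n => (j : ℕ) < d) with hP
    set Q := Finset.univ.filter (fun j : Fin n => ¬ (j : ℕ) < d) with hQ
    set c : ℝ := μ ⟨d, hdn⟩ with hc
    have hcard : (P.card : ℝ) = d := by rw [hP, card_filter_lt_fin hdn]
    have hsplit : ∑ j ∈ P, (μ j * t j) + ∑ j ∈ Q, (μ j * t j) = ∑ j, μ j * t j :=
      Finset.sum_filter_add_sum_filter_not _ _ _
    have hsplitT : ∑ j ∈ P, t j + ∑ j ∈ Q, t j = (d : ℝ) := by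
      rw [Finset.sum_filter_add_sum_filter_not, hsum]
    have hA : ∑ j ∈ P, μ j ≤ ∑ j ∈ P, (μ j * t j + c * (1 - t j)) := by
      apply Finset.sum_le_sum
      intro j hj
      simp only [hP, Finset.mem_filter] at hj
      have hμj : μ j ≤ c := hμ (by simp [Fin.le_def]; omega)
      nlinarith [ht1 j, ht0 j]
    have hA' : ∑ j ∈ P, (μ j * t j + c * (1 - t j))
        = ∑ j ∈ P, (μ j * t j) + c * (d - ∑ j ∈ P, t j) := by
      rw [Finset.sum_add_distrib]
      congr 1
      rw [← Finset.mul_sum, Finset.sum_sub_distrib, Finset.sum_const, nsmul_eq_mul, mul_one, hcard]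
    have hB : c * (d - ∑ j ∈ P, t j) ≤ ∑ j ∈ Q, (μ j * t j) := by
      have h1 : (d : ℝ) - ∑ j ∈ P, t j = ∑ j ∈ Q, t j := by linarith
      rw [h1, Finset.mul_sum]
      apply Finset.sum_le_sum
      intro j hj
      simp only [hQ, Finset.mem_filter] at hj
      have hμj : c ≤ μ j := hμ (by simp [Fin.le_def]; omega)
      exact mul_le_mul_of_nonneg_right hμj (ht0 j)
    calc ∑ j ∈ P, μ j ≤ ∑ j ∈ P, (μ j * t j) + c * (d - ∑ j ∈ P, t j) := by
          rw [← hA']; exact hA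
      _ ≤ ∑ j ∈ P, (μ j * t j) + ∑ j ∈ Q, (μ j * t j) := by linarith
      _ = ∑ j, μ j * t j := hsplit
  · have hdn' : d = n := le_antisymm hd (not_lt.mp hdn)
    subst hdn'
    have h1 : ∀ j, t j = 1 := by
      by_contra h
      push_neg at h
      obtain ⟨j, hj⟩ := h
      have : ∑ j, t j < ∑ _j : Fin d, (1:ℝ) :=
        Finset.sum_lt_sum (fun i _ => ht1 i) ⟨j, Finset.mem_univ j, lt_of_le_of_ne (ht1 j) hj⟩
      simp [hsum] at this
    have : Finset.univ.filter (fun j : Fin d => (j : ℕ) < d) = Finset.univ := by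
      ext j; simp [j.isLt]
    simp [this, h1]

lemma sum_filter_rev {n : ℕ} (p : Fin n → Prop) [DecidablePred p] (g : Fin n → ℝ) :
    ∑ j ∈ Finset.univ.filter p, g j.rev
      = ∑ j ∈ Finset.univ.filter (fun j => p j.rev), g j := by
  apply Finset.sum_nbij' (fun j => Fin.rev j) (fun j => Fin.rev j) <;>
    simp [Fin.rev_rev]

lemma scalar_upper {n d : ℕ} (μ t : Fin n → ℝ) (hμ : Monotone μ)
    (ht0 : ∀ j, 0 ≤ t j) (ht1 : ∀ j, t j ≤ 1) (hsum : ∑ j, t j = (d : ℝ)) (hd : d ≤ n) :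
    ∑ j, μ j * t j ≤ ∑ j ∈ Finset.univ.filter (fun j : Fin n => n - d ≤ (j : ℕ)), μ j := by
  have h := scalar_lower (fun j => -μ j.rev) (fun j => t j.rev)
    (fun a b hab => by
      simp only [neg_le_neg_iff]
      exact hμ (by simp [Fin.le_def, Fin.val_rev]; omega))
    (fun j => ht0 _) (fun j => ht1 _)
    (by rw [← hsum]; exact Equiv.sum_comp Fin.revPerm t) hd
  have e1 : ∑ j ∈ Finset.univ.filter (fun j : Fin n => (j : ℕ) < d), -μ j.rev
      = -∑ j ∈ Finset.univ.filter (fun j : Fin n => n - d ≤ (j : ℕ)), μ j := by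
    rw [sum_filter_rev (fun j : Fin n => (j : ℕ) < d) (fun j => -μ j)]
    rw [← Finset.sum_neg_distrib]
    congr 1
    apply Finset.filter_congr
    intro j _
    simp only [Fin.val_rev, eq_iff_iff]
    omega
  have e2 : ∑ j : Fin n, -μ j.rev * t j.rev = -∑ j, μ j * t j := by
    have := Equiv.sum_comp Fin.revPerm (fun j => -(μ j * t j) : Fin n → ℝ)
    simp only [Fin.revPerm_apply] at this
    rw [← Finset.sum_neg_distrib, ← this]
    apply Finset.sum_congr rfl
    intro j _; ring
  rw [e1, e2] at h
  linarith



section Spectral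
variable {N : ℕ}

local notation "⟪" x ", " y "⟫" => @inner ℝ _ _ x y

lemma apply_eigvec (H : Matrix (Fin N) (Fin N) ℝ) (hH : H.IsHermitian) (j : Fin N) :
    Matrix.toEuclideanLin H (hH.eigenvectorBasis j)
      = hH.eigenvalues j • hH.eigenvectorBasis j := by
  have h := hH.mulVec_eigenvectorBasis j
  apply WithLp.ofLp_injective
  ext i
  simp [Matrix.toEuclideanLin_apply, h]

lemma quad_expand (H : Matrix (Fin N) (Fin N) ℝ) (hH : H.IsHermitian)
    (x : EuclideanSpace ℝ (Fin N)) :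
    ⟪x, Matrix.toEuclideanLin H x⟫
      = ∑ j, hH.eigenvalues j * ⟪hH.eigenvectorBasis j, x⟫ ^ 2 := by
  set e := hH.eigenvectorBasis with he
  have hx : Matrix.toEuclideanLin H x
      = ∑ j, (hH.eigenvalues j * ⟪e j, x⟫) • e j := by
    conv_lhs => rw [← e.sum_repr' x]
    rw [map_sum]
    apply Finset.sum_congr rfl
    intro j _
    rw [_root_.map_smul, apply_eigvec H hH j, smul_smul, mul_comm]
  rw [hx, inner_sum]
  apply Finset.sum_congr rfl
  intro j _
  rw [real_inner_smul_right]
  rw [real_inner_comm]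
  ring
end Spectral

section KyFan
variable {N : ℕ}
local notation "⟪" x ", " y "⟫" => @inner ℝ _ _ x y

noncomputable def sortedEig {N : ℕ} {H : Matrix (Fin N) (Fin N) ℝ} (hH : H.IsHermitian) :
    Fin N → ℝ :=
  hH.eigenvalues ∘ Tuple.sort hH.eigenvalues

lemma sortedEig_monotone {H : Matrix (Fin N) (Fin N) ℝ} (hH : H.IsHermitian) :
    Monotone (sortedEig hH) := Tuple.monotone_sort _

lemma sum_sortedEig {H : Matrix (Fin N) (Fin N) ℝ} (hH : H.IsHermitian) :
    ∑ j, sortedEig hH j = ∑ j, hH.eigenvalues j := Equiv.sum_comp _ _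

lemma kyfan {H : Matrix (Fin N) (Fin N) ℝ} (hH : H.IsHermitian) {d : ℕ} (hd : d ≤ N)
    (w : Fin d → EuclideanSpace ℝ (Fin N)) (hw : Orthonormal ℝ w) :
    (∑ j ∈ Finset.univ.filter (fun j : Fin N => (j : ℕ) < d), sortedEig hH j
        ≤ ∑ i, ⟪w i, Matrix.toEuclideanLin H (w i)⟫)
    ∧ (∑ i, ⟪w i, Matrix.toEuclideanLin H (w i)⟫
        ≤ ∑ j ∈ Finset.univ.filter (fun j : Fin N => N - d ≤ (j : ℕ)), sortedEig hH j) := by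
  classical
  set e := hH.eigenvectorBasis with he
  set lam := hH.eigenvalues with hlam
  set t : Fin N → ℝ := fun j => ∑ i, ⟪e j, w i⟫ ^ 2 with ht
  have hQ : ∑ i, ⟪w i, Matrix.toEuclideanLin H (w i)⟫ = ∑ j, lam j * t j := by
    have : ∀ i, ⟪w i, Matrix.toEuclideanLin H (w i)⟫ = ∑ j, lam j * ⟪e j, w i⟫ ^ 2 :=
      fun i => quad_expand H hH (w i)
    rw [Finset.sum_congr rfl (fun i _ => this i), Finset.sum_comm]
    apply Finset.sum_congr rfl
    intro j _
    rw [ht, Finset.mul_sum]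
  have ht0 : ∀ j, 0 ≤ t j := fun j => Finset.sum_nonneg (fun i _ => sq_nonneg _)
  have ht1 : ∀ j, t j ≤ 1 := by
    intro j
    have hb := hw.sum_inner_products_le (𝕜 := ℝ) (e j) (s := Finset.univ)
    have hn : ‖e j‖ = 1 := e.orthonormal.1 j
    rw [hn] at hb
    calc t j = ∑ i, ‖⟪w i, e j⟫‖ ^ 2 := by
          apply Finset.sum_congr rfl
          intro i _
          rw [real_inner_comm, Real.norm_eq_abs, sq_abs]
      _ ≤ 1 ^ 2 := hb
      _ = 1 := one_pow 2
  have hParse : ∀ i, ∑ j, ⟪e j, w i⟫ ^ 2 = 1 := by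
    intro i
    have hp := e.sum_inner_mul_inner (w i) (w i)
    have hn : ‖w i‖ = 1 := hw.1 i
    calc ∑ j, ⟪e j, w i⟫ ^ 2 = ∑ j, ⟪w i, e j⟫ * ⟪e j, w i⟫ := by
          apply Finset.sum_congr rfl
          intro j _
          rw [real_inner_comm (e j) (w i)]; ring
      _ = ⟪w i, w i⟫ := hp
      _ = 1 := by rw [real_inner_self_eq_norm_sq, hn]; norm_num
  have hsumt : ∑ j, t j = (d : ℝ) := by
    rw [ht]
    dsimp only
    rw [Finset.sum_comm]
    rw [Finset.sum_congr rfl (fun i _ => hParse i)]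
    simp
  -- reindex by the sorting permutation
  set σ := Tuple.sort lam with hσ
  have hre : ∑ j, lam j * t j = ∑ j, sortedEig hH j * t (σ j) := by
    rw [← Equiv.sum_comp σ (fun j => lam j * t j)]
    rfl
  have hsumt' : ∑ j, t (σ j) = (d : ℝ) := by
    rw [Equiv.sum_comp σ t, hsumt]
  constructor
  · rw [hQ, hre]
    exact scalar_lower (sortedEig hH) (t ∘ σ) (sortedEig_monotone hH)
      (fun j => ht0 _) (fun j => ht1 _) hsumt' hd
  · rw [hQ, hre]
    exact scalar_upper (sortedEig hH) (t ∘ σ) (sortedEig_monotone hH)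
      (fun j => ht0 _) (fun j => ht1 _) hsumt' hd
end KyFan

section Four
variable {m n : ℕ}
local notation "⟪" x ", " y "⟫" => @inner ℝ _ _ x y

lemma toEuclideanLin_herm_apply (A : Matrix (Fin m) (Fin n) ℝ) (x : EuclideanSpace ℝ (Fin n)) :
    Matrix.toEuclideanLin (Aᴴ * A) x
      = Matrix.toEuclideanLin Aᴴ (Matrix.toEuclideanLin A x) := by
  simp [Matrix.toEuclideanLin_apply, Matrix.mulVec_mulVec]

lemma quad_eq_normsq (A : Matrix (Fin m) (Fin n) ℝ) (x : EuclideanSpace ℝ (Fin n)) :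
    ⟪x, Matrix.toEuclideanLin (Aᴴ * A) x⟫ = ‖Matrix.toEuclideanLin A x‖ ^ 2 := by
  rw [toEuclideanLin_herm_apply, Matrix.toEuclideanLin_conjTranspose_eq_adjoint,
    LinearMap.adjoint_inner_right, real_inner_self_eq_norm_sq]

lemma parseval_sq {N : ℕ} (b : OrthonormalBasis (Fin N) ℝ (EuclideanSpace ℝ (Fin N)))
    (x : EuclideanSpace ℝ (Fin N)) :
    ∑ j, ⟪b j, x⟫ ^ 2 = ‖x‖ ^ 2 := by
  have hp := b.sum_inner_mul_inner x x
  calc ∑ j, ⟪b j, x⟫ ^ 2 = ∑ j, ⟪x, b j⟫ * ⟪b j, x⟫ := by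
        apply Finset.sum_congr rfl
        intro j _
        rw [real_inner_comm (b j) x]; ring
    _ = ⟪x, x⟫ := hp
    _ = ‖x‖ ^ 2 := real_inner_self_eq_norm_sq x

lemma inner_single (x : EuclideanSpace ℝ (Fin n)) (i : Fin n) :
    ⟪EuclideanSpace.single i (1:ℝ), x⟫ = x i := by
  rw [EuclideanSpace.inner_single_left]
  simp

lemma sum_eigenvalues_eq_trace {N : ℕ} (H : Matrix (Fin N) (Fin N) ℝ) (hH : H.IsHermitian) :
    ∑ j, hH.eigenvalues j = ∑ i, H i i := by
  have key : ∀ i : Fin N,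
      ⟪(EuclideanSpace.single i (1:ℝ)), Matrix.toEuclideanLin H (EuclideanSpace.single i 1)⟫
        = H i i := by
    intro i
    rw [inner_single]
    simp only [Matrix.toEuclideanLin_apply]
    show (H *ᵥ _) i = H i i
    simp [Matrix.mulVec_single]
  have h2 : ∀ i : Fin N,
      ⟪(EuclideanSpace.single i (1:ℝ)), Matrix.toEuclideanLin H (EuclideanSpace.single i 1)⟫
        = ∑ j, hH.eigenvalues j * ⟪hH.eigenvectorBasis j, EuclideanSpace.single i (1:ℝ)⟫ ^ 2 :=
    fun i => quad_expand H hH _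
  have h3 : ∑ i, H i i
      = ∑ j, hH.eigenvalues j * ∑ i, ⟪hH.eigenvectorBasis j, EuclideanSpace.single i (1:ℝ)⟫ ^ 2 := by
    rw [← Finset.sum_congr rfl (fun i _ => key i), Finset.sum_congr rfl (fun i _ => h2 i),
      Finset.sum_comm]
    exact Finset.sum_congr rfl (fun j _ => (Finset.mul_sum _ _ _).symm)
  have h4 : ∀ j : Fin N, ∑ i, ⟪hH.eigenvectorBasis j, EuclideanSpace.single i (1:ℝ)⟫ ^ 2 = 1 := by
    intro j
    have hn : ‖hH.eigenvectorBasis j‖ = 1 := hH.eigenvectorBasis.orthonormal.1 j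
    have : ∀ i : Fin N, ⟪hH.eigenvectorBasis j, EuclideanSpace.single i (1:ℝ)⟫
        = hH.eigenvectorBasis j i := by
      intro i
      rw [real_inner_comm, inner_single]
    rw [Finset.sum_congr rfl (fun i _ => by rw [this i])]
    have hne := EuclideanSpace.norm_eq (hH.eigenvectorBasis j)
    have : ‖hH.eigenvectorBasis j‖ ^ 2 = ∑ i, hH.eigenvectorBasis j i ^ 2 := by
      rw [hne, Real.sq_sqrt (Finset.sum_nonneg fun i _ => by positivity)]
      exact Finset.sum_congr rfl (fun i _ => by rw [Real.norm_eq_abs, sq_abs])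
    rw [← this, hn, one_pow]
  rw [h3]
  exact (Finset.sum_congr rfl (fun j _ => by rw [h4 j, mul_one])).symm

lemma frobSq (A : Matrix (Fin m) (Fin n) ℝ) :
    frobNorm A ^ 2 = ∑ j, (Matrix.isHermitian_conjTranspose_mul_self A).eigenvalues j := by
  rw [sum_eigenvalues_eq_trace]
  have : ∀ j : Fin n, (Aᴴ * A) j j = ∑ i, A i j ^ 2 := by
    intro j
    simp [Matrix.mul_apply, Matrix.conjTranspose_apply, sq]
  rw [Finset.sum_congr rfl (fun j _ => this j), Finset.sum_comm, frobNorm]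
  exact Real.sq_sqrt (Finset.sum_nonneg fun i _ => Finset.sum_nonneg fun j _ => sq_nonneg _)

lemma sortedEig_nonneg (A : Matrix (Fin m) (Fin n) ℝ) (j : Fin n) :
    0 ≤ sortedEig (Matrix.isHermitian_conjTranspose_mul_self A) j :=
  (Matrix.posSemidef_conjTranspose_mul_self A).eigenvalues_nonneg _

lemma eig_le_top (A : Matrix (Fin m) (Fin n) ℝ) (hn : 0 < n) (j : Fin n) :
    (Matrix.isHermitian_conjTranspose_mul_self A).eigenvalues j
      ≤ sortedEig (Matrix.isHermitian_conjTranspose_mul_self A) ⟨n - 1, by omega⟩ := by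
  set hH := Matrix.isHermitian_conjTranspose_mul_self A
  set σ := Tuple.sort hH.eigenvalues
  have : hH.eigenvalues j = sortedEig hH (σ.symm j) := by
    simp [sortedEig]
    exact congrArg hH.eigenvalues (σ.apply_symm_apply j).symm
  rw [this]
  exact Tuple.monotone_sort hH.eigenvalues (by
    simp only [Fin.le_def]
    omega)

lemma spec_le_sqrt_top (A : Matrix (Fin m) (Fin n) ℝ) (hn : 0 < n) :
    specNorm A ≤ Real.sqrt (sortedEig (Matrix.isHermitian_conjTranspose_mul_self A)
      ⟨n - 1, by omega⟩) := by
  set hH := Matrix.isHermitian_conjTranspose_mul_self A with hhH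
  set c := sortedEig hH ⟨n - 1, by omega⟩ with hc
  have hc0 : 0 ≤ c := sortedEig_nonneg A _
  apply ContinuousLinearMap.opNorm_le_bound _ (Real.sqrt_nonneg c)
  intro x
  rw [LinearMap.coe_toContinuousLinearMap']
  have h1 : ‖Matrix.toEuclideanLin A x‖ ^ 2 = ∑ j, hH.eigenvalues j * ⟪hH.eigenvectorBasis j, x⟫ ^ 2 := by
    rw [← quad_eq_normsq, quad_expand _ hH]
  have h2 : ∑ j, hH.eigenvalues j * ⟪hH.eigenvectorBasis j, x⟫ ^ 2
      ≤ ∑ j, c * ⟪hH.eigenvectorBasis j, x⟫ ^ 2 := by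
    apply Finset.sum_le_sum
    intro j _
    exact mul_le_mul_of_nonneg_right (eig_le_top A hn j) (sq_nonneg _)
  have h3 : ∑ j, c * ⟪hH.eigenvectorBasis j, x⟫ ^ 2 = c * ‖x‖ ^ 2 := by
    rw [← Finset.mul_sum, parseval_sq]
  have h4 : ‖Matrix.toEuclideanLin A x‖ ^ 2 ≤ (Real.sqrt c * ‖x‖) ^ 2 := by
    rw [mul_pow, Real.sq_sqrt hc0]
    calc ‖Matrix.toEuclideanLin A x‖ ^ 2 ≤ ∑ j, c * ⟪hH.eigenvectorBasis j, x⟫ ^ 2 := by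
          rw [h1]; exact h2
      _ = c * ‖x‖ ^ 2 := h3
  exact le_of_pow_le_pow_left₀ two_ne_zero (by positivity) h4

end Four


section Main
variable {m n : ℕ}
local notation "⟪" x ", " y "⟫" => @inner ℝ _ _ x y


set_option maxHeartbeats 1000000 in
lemma sv_sq {m n : ℕ} (A : Matrix (Fin m) (Fin n) ℝ) (j : Fin n) :
    sv A j ^ 2 = sortedEig (Matrix.isHermitian_conjTranspose_mul_self A) j.rev :=
  Real.sq_sqrt (sortedEig_nonneg A _)

theorem stmt2 {m n k : ℕ} (hmn : n ≤ m) (hkn : k < n)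
    (A B : Matrix (Fin m) (Fin n) ℝ) (hB : B.rank ≤ k) (η : ℝ) (hη : 0 ≤ η)
    (hF : frobNorm (A - B) ≤
      Real.sqrt (η ^ 2 + ∑ j ∈ Finset.univ.filter (fun j : Fin n => k ≤ (j : ℕ)), sv A j ^ 2)) :
    specNorm (A - B) ≤ Real.sqrt (η ^ 2 + sv A ⟨k, hkn⟩ ^ 2) := by
  classical
  have hn : 0 < n := lt_of_le_of_lt (Nat.zero_le k) hkn
  set E := A - B with hE
  have hHA := Matrix.isHermitian_conjTranspose_mul_self A
  have hHE := Matrix.isHermitian_conjTranspose_mul_self E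
  set d : ℕ := n - k - 1 with hdd
  have hdn : d < n := by omega
  have hd1 : d + 1 = n - k := by omega
  -- the top eigenvector of EᴴE
  set jtop : Fin n := Tuple.sort hHE.eigenvalues ⟨n - 1, by omega⟩ with hjt
  set u : EuclideanSpace ℝ (Fin n) := hHE.eigenvectorBasis jtop with hu
  have hunorm : ‖u‖ = 1 := hHE.eigenvectorBasis.orthonormal.1 jtop
  have huu : ⟪u, Matrix.toEuclideanLin (Eᴴ * E) u⟫ = sortedEig hHE ⟨n - 1, by omega⟩ := by
    rw [hu, apply_eigvec _ hHE jtop, real_inner_smul_right, real_inner_self_eq_norm_sq,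
      hunorm]
    simp [sortedEig, hjt]
  -- the subspace W
  set K : Submodule ℝ (EuclideanSpace ℝ (Fin n)) :=
    Submodule.map (((WithLp.linearEquiv 2 ℝ (Fin n → ℝ)).symm :
      (Fin n → ℝ) ≃ₗ[ℝ] EuclideanSpace ℝ (Fin n)) :
      (Fin n → ℝ) →ₗ[ℝ] EuclideanSpace ℝ (Fin n)) (LinearMap.ker B.mulVecLin)
    with hK
  have hKrank : n - k ≤ Module.finrank ℝ K := by
    rw [hK, LinearEquiv.finrank_map_eq]
    have h1 := LinearMap.finrank_range_add_finrank_ker B.mulVecLin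
    rw [Module.finrank_fintype_fun_eq_card, Fintype.card_fin] at h1
    have h2 : Module.finrank ℝ (LinearMap.range B.mulVecLin) ≤ k := hB
    omega
  have hune : u ≠ 0 := by
    intro h; rw [h] at hunorm; simp at hunorm
  set U : Submodule ℝ (EuclideanSpace ℝ (Fin n)) := (ℝ ∙ u)ᗮ with hU
  have hUrank : Module.finrank ℝ U = n - 1 := by
    have h1 := Submodule.finrank_add_finrank_orthogonal (K := (ℝ ∙ u))
    rw [finrank_span_singleton hune, finrank_euclideanSpace, Fintype.card_fin] at h1
    rw [hU]
    omega
  set W : Submodule ℝ (EuclideanSpace ℝ (Fin n)) := K ⊓ U with hW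
  have hWrank : d ≤ Module.finrank ℝ W := by
    have h1 := Submodule.finrank_sup_add_finrank_inf_eq K U
    have h2 : Module.finrank ℝ (K ⊔ U : Submodule ℝ (EuclideanSpace ℝ (Fin n))) ≤ n := by
      have := Submodule.finrank_le (K ⊔ U : Submodule ℝ (EuclideanSpace ℝ (Fin n)))
      rwa [finrank_euclideanSpace, Fintype.card_fin] at this
    rw [hW]
    omega
  -- the orthonormal family w inside W
  set ob := stdOrthonormalBasis ℝ W with hob
  set w : Fin d → EuclideanSpace ℝ (Fin n) :=
    fun i => (ob (Fin.castLE hWrank i) : EuclideanSpace ℝ (Fin n)) with hw'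
  have hwmem : ∀ i, w i ∈ W := fun i => (ob (Fin.castLE hWrank i)).2
  have hw : Orthonormal ℝ w := by
    rw [orthonormal_iff_ite]
    intro i j
    have h := ob.orthonormal
    rw [orthonormal_iff_ite] at h
    have h2 := h (Fin.castLE hWrank i) (Fin.castLE hWrank j)
    rw [Submodule.coe_inner] at h2
    rw [hw']
    dsimp only
    rw [h2]
    congr 1
    simp [Fin.castLE_inj]
  have hwB : ∀ i, Matrix.toEuclideanLin E (w i) = Matrix.toEuclideanLin A (w i) := by
    intro i
    have hmem : w i ∈ K := ((hwmem i).1 : _)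
    rw [hK, Submodule.mem_map] at hmem
    obtain ⟨y, hy, hyw⟩ := hmem
    rw [LinearMap.mem_ker] at hy
    have hBy : B *ᵥ y = 0 := hy
    rw [← hyw]
    apply WithLp.ofLp_injective
    ext l
    simp [Matrix.toEuclideanLin_apply, hE, Matrix.sub_mulVec, hBy]
  have hwU : ∀ i, ⟪u, w i⟫ = 0 := by
    intro i
    have hmem : w i ∈ U := (hwmem i).2
    rw [hU, Submodule.mem_orthogonal_singleton_iff_inner_right] at hmem
    exact hmem
  -- the combined orthonormal family
  set v : Fin (d + 1) → EuclideanSpace ℝ (Fin n) := Fin.cons u w with hv'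
  have hv : Orthonormal ℝ v := by
    rw [orthonormal_iff_ite]
    intro i j
    refine Fin.cases ?_ (fun a => ?_) i
    · refine Fin.cases ?_ (fun b => ?_) j
      · rw [hv']
        simp only [Fin.cons_zero, eq_self_iff_true, if_true]
        rw [real_inner_self_eq_norm_sq, hunorm, one_pow]
      · rw [hv']
        simp only [Fin.cons_zero, Fin.cons_succ]
        rw [if_neg (Ne.symm (Fin.succ_ne_zero b))]
        exact hwU b
    · refine Fin.cases ?_ (fun b => ?_) j
      · rw [hv']
        simp only [Fin.cons_zero, Fin.cons_succ]
        rw [if_neg (Fin.succ_ne_zero a), real_inner_comm]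
        exact hwU a
      · rw [hv']
        simp only [Fin.cons_succ]
        have h := hw
        rw [orthonormal_iff_ite] at h
        rw [h a b]
        congr 1
        simp [Fin.succ_inj]
  -- Ky Fan inequalities
  have kfA := (kyfan hHA (d := d) (le_of_lt hdn) w hw).1
  have kfE := (kyfan hHE (d := d + 1) (by omega) v hv).2
  -- rewrite sum over v
  have hvsum : ∑ i : Fin (d + 1), ⟪v i, Matrix.toEuclideanLin (Eᴴ * E) (v i)⟫
      = sortedEig hHE ⟨n - 1, by omega⟩
        + ∑ i : Fin d, ⟪w i, Matrix.toEuclideanLin (Eᴴ * E) (w i)⟫ := by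
    rw [Fin.sum_univ_succ]
    have h0 : ⟪v 0, Matrix.toEuclideanLin (Eᴴ * E) (v 0)⟫
        = sortedEig hHE ⟨n - 1, by omega⟩ := by
      rw [hv']
      simpa using huu
    have h1 : ∑ i : Fin d, ⟪v i.succ, Matrix.toEuclideanLin (Eᴴ * E) (v i.succ)⟫
        = ∑ i : Fin d, ⟪w i, Matrix.toEuclideanLin (Eᴴ * E) (w i)⟫ :=
      Finset.sum_congr rfl fun i _ => by simp only [hv', Fin.cons_succ]
    rw [h0, h1]
  -- equality of the quadratic sums over w for A and E
  have hq : ∑ i : Fin d, ⟪w i, Matrix.toEuclideanLin (Aᴴ * A) (w i)⟫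
      = ∑ i : Fin d, ⟪w i, Matrix.toEuclideanLin (Eᴴ * E) (w i)⟫ := by
    apply Finset.sum_congr rfl
    intro i _
    rw [quad_eq_normsq, quad_eq_normsq, hwB]
  -- total eigenvalue sums
  have hνtot : ∑ j ∈ Finset.univ.filter (fun j : Fin n => n - (d + 1) ≤ (j : ℕ)),
      sortedEig hHE j ≤ frobNorm E ^ 2 := by
    calc ∑ j ∈ Finset.univ.filter (fun j : Fin n => n - (d + 1) ≤ (j : ℕ)), sortedEig hHE j
        ≤ ∑ j, sortedEig hHE j := by
          apply Finset.sum_le_sum_of_subset_of_nonneg (Finset.filter_subset _ _)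
          intro j _ _
          exact sortedEig_nonneg E j
      _ = ∑ j, hHE.eigenvalues j := sum_sortedEig hHE
      _ = frobNorm E ^ 2 := (frobSq E).symm
  -- squared Frobenius bound from hF
  have hsv : ∀ j : Fin n, sv A j ^ 2 = sortedEig hHA j.rev := fun j => sv_sq A j
  have hRHS0 : (0:ℝ) ≤ η ^ 2 + ∑ j ∈ Finset.univ.filter (fun j : Fin n => k ≤ (j : ℕ)),
      sv A j ^ 2 := by
    have : (0:ℝ) ≤ ∑ j ∈ Finset.univ.filter (fun j : Fin n => k ≤ (j : ℕ)), sv A j ^ 2 :=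
      Finset.sum_nonneg fun j _ => sq_nonneg _
    exact add_nonneg (sq_nonneg η) this
  have hFsq : frobNorm E ^ 2 ≤ η ^ 2
      + ∑ j ∈ Finset.univ.filter (fun j : Fin n => k ≤ (j : ℕ)), sv A j ^ 2 := by
    calc frobNorm E ^ 2 ≤ Real.sqrt (η ^ 2 + ∑ j ∈ Finset.univ.filter
          (fun j : Fin n => k ≤ (j : ℕ)), sv A j ^ 2) ^ 2 := by
          have h0 : 0 ≤ frobNorm E := Real.sqrt_nonneg _
          exact pow_le_pow_left₀ h0 hF 2
      _ = _ := Real.sq_sqrt hRHS0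
  -- rewrite the singular-value sum
  have hAsum : ∑ j ∈ Finset.univ.filter (fun j : Fin n => k ≤ (j : ℕ)), sv A j ^ 2
      = ∑ j ∈ Finset.univ.filter (fun j : Fin n => (j : ℕ) < d + 1), sortedEig hHA j := by
    rw [Finset.sum_congr rfl (fun j _ => hsv j),
      sum_filter_rev (fun j : Fin n => k ≤ (j : ℕ)) (sortedEig hHA)]
    apply Finset.sum_congr _ (fun _ _ => rfl)
    ext j
    simp only [Finset.mem_filter, Finset.mem_univ, true_and, Fin.val_rev]
    omega
  have hsplit : ∑ j ∈ Finset.univ.filter (fun j : Fin n => (j : ℕ) < d + 1), sortedEig hHA j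
      = sortedEig hHA ⟨d, hdn⟩
        + ∑ j ∈ Finset.univ.filter (fun j : Fin n => (j : ℕ) < d), sortedEig hHA j := by
    have hins : Finset.univ.filter (fun j : Fin n => (j : ℕ) < d + 1)
        = insert (⟨d, hdn⟩ : Fin n) (Finset.univ.filter (fun j : Fin n => (j : ℕ) < d)) := by
      ext j
      simp only [Finset.mem_filter, Finset.mem_univ, true_and, Finset.mem_insert, Fin.ext_iff]
      omega
    rw [hins, Finset.sum_insert (by simp)]
  rw [hAsum, hsplit] at hFsq
  rw [hvsum] at kfE
  -- conclude
  have hνle : sortedEig hHE ⟨n - 1, by omega⟩ ≤ η ^ 2 + sortedEig hHA ⟨d, hdn⟩ := by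
    linarith [kfA, kfE, hνtot, hFsq, hq]
  have hksq : sv A ⟨k, hkn⟩ ^ 2 = sortedEig hHA ⟨d, hdn⟩ := by
    have hrev : (⟨k, hkn⟩ : Fin n).rev = ⟨d, hdn⟩ := by
      ext
      simp only [Fin.val_rev]
      omega
    rw [sv_sq, hrev]
  calc specNorm E ≤ Real.sqrt (sortedEig hHE ⟨n - 1, by omega⟩) := spec_le_sqrt_top E hn
    _ ≤ Real.sqrt (η ^ 2 + sv A ⟨k, hkn⟩ ^ 2) := by
        apply Real.sqrt_le_sqrt
        rw [hksq]
        exact hνle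
end Main
end

section
/- (Reverse Eckart–Young, singular value part) Let A be an m×n real matrix with singular values σ_1 ≥ ... ≥ σ_n, and let B be a matrix of rank at most k satisfying ‖A − B‖_F ≤ sqrt(η² + Σ_{j=k+1}^n σ_j²) for some η ≥ 0. Then sqrt(Σ_{j=1}^k (σ_j − σ_j(B))²) ≤ η. -/
open Finset

lemma sum_swap4 {M : Type*} [AddCommMonoid M] (s t u v : Finset ℕ)
    (f : ℕ → ℕ → ℕ → ℕ → M) :
    ∑ i ∈ s, ∑ j ∈ t, ∑ p ∈ u, ∑ q ∈ v, f i j p q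
      = ∑ p ∈ u, ∑ q ∈ v, ∑ i ∈ s, ∑ j ∈ t, f i j p q := by
  calc ∑ i ∈ s, ∑ j ∈ t, ∑ p ∈ u, ∑ q ∈ v, f i j p q
      = ∑ i ∈ s, ∑ p ∈ u, ∑ j ∈ t, ∑ q ∈ v, f i j p q :=
        Finset.sum_congr rfl fun i _ => Finset.sum_comm
    _ = ∑ p ∈ u, ∑ i ∈ s, ∑ j ∈ t, ∑ q ∈ v, f i j p q := Finset.sum_comm
    _ = ∑ p ∈ u, ∑ i ∈ s, ∑ q ∈ v, ∑ j ∈ t, f i j p q :=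
        Finset.sum_congr rfl fun p _ => Finset.sum_congr rfl fun i _ => Finset.sum_comm
    _ = ∑ p ∈ u, ∑ q ∈ v, ∑ i ∈ s, ∑ j ∈ t, f i j p q :=
        Finset.sum_congr rfl fun p _ => Finset.sum_comm

lemma sum_swap3 {M : Type*} [AddCommMonoid M] (s u v : Finset ℕ)
    (f : ℕ → ℕ → ℕ → M) :
    ∑ i ∈ s, ∑ p ∈ u, ∑ q ∈ v, f i p q = ∑ p ∈ u, ∑ q ∈ v, ∑ i ∈ s, f i p q := by
  calc ∑ i ∈ s, ∑ p ∈ u, ∑ q ∈ v, f i p q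
      = ∑ p ∈ u, ∑ i ∈ s, ∑ q ∈ v, f i p q := Finset.sum_comm
    _ = ∑ p ∈ u, ∑ q ∈ v, ∑ i ∈ s, f i p q :=
        Finset.sum_congr rfl fun p _ => Finset.sum_comm

lemma ind_sum_le (n p : ℕ) : ∑ i ∈ range n, (if i ≤ p then (1:ℝ) else 0) ≤ p + 1 := by
  rw [Finset.sum_boole]
  have h : (range n).filter (fun i => i ≤ p) ⊆ range (p+1) := by
    intro x hx
    simp only [mem_filter, mem_range] at hx ⊢
    omega
  have := Finset.card_le_card h
  rw [Finset.card_range] at this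
  exact_mod_cast this

lemma ind_sum_eq {n p : ℕ} (hp : p < n) :
    ∑ i ∈ range n, (if i ≤ p then (1:ℝ) else 0) = p + 1 := by
  rw [Finset.sum_boole]
  have h : (range n).filter (fun i => i ≤ p) = range (p+1) := by
    ext x; simp only [mem_filter, mem_range]; omega
  rw [h, Finset.card_range]; push_cast; ring

lemma substoch_nat (n : ℕ) (S T : ℕ → ℝ) (hS : Antitone S) (hT : Antitone T)
    (hSn : S n = 0) (hTn : T n = 0)
    (D : ℕ → ℕ → ℝ) (hD0 : ∀ i j, 0 ≤ D i j)
    (hrow : ∀ i, ∑ j ∈ range n, D i j ≤ 1) (hcol : ∀ j, ∑ i ∈ range n, D i j ≤ 1) :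
    ∑ i ∈ range n, ∑ j ∈ range n, S i * T j * D i j ≤ ∑ i ∈ range n, S i * T i := by
  set δ : ℕ → ℝ := fun p => S p - S (p+1) with hδdef
  set ε : ℕ → ℝ := fun p => T p - T (p+1) with hεdef
  have hδ0 : ∀ p, 0 ≤ δ p := fun p => sub_nonneg.2 (hS (Nat.le_succ p))
  have hε0 : ∀ p, 0 ≤ ε p := fun p => sub_nonneg.2 (hT (Nat.le_succ p))
  have rep : ∀ (U : ℕ → ℝ), U n = 0 → ∀ i < n,
      U i = ∑ p ∈ range n, if i ≤ p then U p - U (p+1) else 0 := by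
    intro U hUn i hi
    rw [← Finset.sum_filter]
    have h : (range n).filter (fun p => i ≤ p) = Finset.Ico i n := by
      ext x; simp only [mem_filter, mem_range, Finset.mem_Ico]; omega
    rw [h, Finset.sum_Ico_eq_sub _ hi.le, Finset.sum_range_sub' U, Finset.sum_range_sub' U, hUn]
    ring
  -- the substochastic "mass" matrix
  set W : ℕ → ℕ → ℝ := fun p q => ∑ i ∈ range n, (if i ≤ p then (1:ℝ) else 0) *
      (∑ j ∈ range n, (if j ≤ q then (1:ℝ) else 0) * D i j) with hWdef
  have hWrow : ∀ p q : ℕ, W p q ≤ p + 1 := by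
    intro p q
    have h1 : ∀ i ∈ range n, (if i ≤ p then (1:ℝ) else 0) *
        (∑ j ∈ range n, (if j ≤ q then (1:ℝ) else 0) * D i j)
        ≤ (if i ≤ p then (1:ℝ) else 0) := by
      intro i _
      have hin : ∑ j ∈ range n, (if j ≤ q then (1:ℝ) else 0) * D i j ≤ 1 := by
        refine le_trans (Finset.sum_le_sum fun j _ => ?_) (hrow i)
        split_ifs <;> simp [hD0 i j]
      have hin0 : (0:ℝ) ≤ ∑ j ∈ range n, (if j ≤ q then (1:ℝ) else 0) * D i j :=
        Finset.sum_nonneg fun j _ => by split_ifs <;> simp [hD0 i j]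
      calc (if i ≤ p then (1:ℝ) else 0) * _ ≤ (if i ≤ p then (1:ℝ) else 0) * 1 := by
            apply mul_le_mul_of_nonneg_left hin; split_ifs <;> norm_num
        _ = (if i ≤ p then (1:ℝ) else 0) := mul_one _
    exact le_trans (Finset.sum_le_sum h1) (ind_sum_le n p)
  have hWcol : ∀ p q : ℕ, W p q ≤ q + 1 := by
    intro p q
    have hswap : W p q = ∑ j ∈ range n, (if j ≤ q then (1:ℝ) else 0) *
        (∑ i ∈ range n, (if i ≤ p then (1:ℝ) else 0) * D i j) := by
      rw [hWdef]
      simp only [Finset.mul_sum]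
      rw [Finset.sum_comm]
      exact Finset.sum_congr rfl fun j _ => Finset.sum_congr rfl fun i _ => by ring
    rw [hswap]
    have h1 : ∀ j ∈ range n, (if j ≤ q then (1:ℝ) else 0) *
        (∑ i ∈ range n, (if i ≤ p then (1:ℝ) else 0) * D i j)
        ≤ (if j ≤ q then (1:ℝ) else 0) := by
      intro j _
      have hin : ∑ i ∈ range n, (if i ≤ p then (1:ℝ) else 0) * D i j ≤ 1 := by
        refine le_trans (Finset.sum_le_sum fun i _ => ?_) (hcol j)
        split_ifs <;> simp [hD0 i j]
      have hin0 : (0:ℝ) ≤ ∑ i ∈ range n, (if i ≤ p then (1:ℝ) else 0) * D i j :=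
        Finset.sum_nonneg fun i _ => by split_ifs <;> simp [hD0 i j]
      calc (if j ≤ q then (1:ℝ) else 0) * _ ≤ (if j ≤ q then (1:ℝ) else 0) * 1 := by
            apply mul_le_mul_of_nonneg_left hin; split_ifs <;> norm_num
        _ = (if j ≤ q then (1:ℝ) else 0) := mul_one _
    exact le_trans (Finset.sum_le_sum h1) (ind_sum_le n q)
  have hWmin : ∀ p ∈ range n, ∀ q ∈ range n, W p q ≤ (min p q : ℕ) + 1 := by
    intro p _ q _
    rcases le_total p q with h | h
    · simpa [Nat.min_eq_left h] using hWrow p q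
    · simpa [Nat.min_eq_right h] using hWcol p q
  calc ∑ i ∈ range n, ∑ j ∈ range n, S i * T j * D i j
      = ∑ i ∈ range n, ∑ j ∈ range n, ∑ p ∈ range n, ∑ q ∈ range n,
          (if i ≤ p then δ p else 0) * ((if j ≤ q then ε q else 0) * D i j) := by
        refine Finset.sum_congr rfl fun i hi => Finset.sum_congr rfl fun j hj => ?_
        rw [rep S hSn i (mem_range.1 hi), rep T hTn j (mem_range.1 hj)]
        rw [Finset.sum_mul, Finset.sum_mul]
        refine Finset.sum_congr rfl fun p _ => ?_
        rw [Finset.mul_sum, Finset.sum_mul]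
        exact Finset.sum_congr rfl fun q _ => by ring
    _ = ∑ p ∈ range n, ∑ q ∈ range n, ∑ i ∈ range n, ∑ j ∈ range n,
          (if i ≤ p then δ p else 0) * ((if j ≤ q then ε q else 0) * D i j) :=
        sum_swap4 _ _ _ _ _
    _ = ∑ p ∈ range n, ∑ q ∈ range n, δ p * ε q * W p q := by
        refine Finset.sum_congr rfl fun p _ => Finset.sum_congr rfl fun q _ => ?_
        rw [hWdef]
        simp only [Finset.mul_sum]
        refine Finset.sum_congr rfl fun i _ => Finset.sum_congr rfl fun j _ => ?_
        split_ifs <;> ring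
    _ ≤ ∑ p ∈ range n, ∑ q ∈ range n, δ p * ε q * ((min p q : ℕ) + 1) := by
        refine Finset.sum_le_sum fun p hp => Finset.sum_le_sum fun q hq => ?_
        exact mul_le_mul_of_nonneg_left (hWmin p hp q hq)
          (mul_nonneg (hδ0 p) (hε0 q))
    _ = ∑ i ∈ range n, S i * T i := by
        have key : ∀ p ∈ range n, ∀ q ∈ range n,
            δ p * ε q * ((min p q : ℕ) + 1)
              = ∑ i ∈ range n, (if i ≤ p then δ p else 0) * (if i ≤ q then ε q else 0) := by
          intro p hp q hq
          have : ∀ i, (if i ≤ p then δ p else 0) * (if i ≤ q then ε q else 0)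
              = δ p * ε q * (if i ≤ min p q then (1:ℝ) else 0) := by
            intro i
            simp only [le_min_iff]
            split_ifs <;> first | tauto | ring
          simp only [this, ← Finset.mul_sum]
          rw [ind_sum_eq (lt_of_le_of_lt (Nat.min_le_left p q) (mem_range.1 hp))]
        rw [Finset.sum_congr rfl fun p hp => Finset.sum_congr rfl fun q hq => key p hp q hq]
        rw [← sum_swap3]
        refine Finset.sum_congr rfl fun i hi => ?_
        rw [← Finset.sum_mul_sum]
        rw [← rep S hSn i (mem_range.1 hi), ← rep T hTn i (mem_range.1 hi)]

lemma fin_sum_ext {n : ℕ} (F : Fin n → ℝ) (G : ℕ → ℝ) (h : ∀ i : Fin n, F i = G i) :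
    ∑ i, F i = ∑ p ∈ range n, G p := by
  rw [← Fin.sum_univ_eq_sum_range G n]; exact Finset.sum_congr rfl fun i _ => h i

lemma substoch_fin {n : ℕ} (σ τ : Fin n → ℝ) (hσ : Antitone σ) (hτ : Antitone τ)
    (hσ0 : ∀ i, 0 ≤ σ i) (hτ0 : ∀ i, 0 ≤ τ i) (D : Fin n → Fin n → ℝ)
    (hD0 : ∀ i j, 0 ≤ D i j) (hrow : ∀ i, ∑ j, D i j ≤ 1) (hcol : ∀ j, ∑ i, D i j ≤ 1) :
    ∑ i, ∑ j, σ i * τ j * D i j ≤ ∑ i, σ i * τ i := by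
  set S : ℕ → ℝ := fun p => if h : p < n then σ ⟨p, h⟩ else 0 with hSdef
  set T : ℕ → ℝ := fun p => if h : p < n then τ ⟨p, h⟩ else 0 with hTdef
  set D' : ℕ → ℕ → ℝ := fun p q => if h : p < n ∧ q < n then D ⟨p, h.1⟩ ⟨q, h.2⟩ else 0
    with hD'def
  have hSv : ∀ i : Fin n, S i = σ i := fun i => by simp [hSdef, i.isLt]
  have hTv : ∀ i : Fin n, T i = τ i := fun i => by simp [hTdef, i.isLt]
  have hD'v : ∀ i j : Fin n, D' i j = D i j := fun i j => by
    simp [hD'def, i.isLt, j.isLt]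
  have hanti : ∀ (σ : Fin n → ℝ), Antitone σ → (∀ i, 0 ≤ σ i) →
      Antitone (fun p => if h : p < n then σ ⟨p, h⟩ else 0) := by
    intro σ hσ hσ0 p q hpq
    by_cases hq : q < n
    · have hp : p < n := lt_of_le_of_lt hpq hq
      simp only [dif_pos hq, dif_pos hp]
      exact hσ (by exact hpq)
    · simp only [dif_neg hq]
      by_cases hp : p < n <;> simp [hp, hσ0]
  have hSanti : Antitone S := hanti σ hσ hσ0
  have hTanti : Antitone T := hanti τ hτ hτ0
  have hSn : S n = 0 := by simp [hSdef]
  have hTn : T n = 0 := by simp [hTdef]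
  have hD'0 : ∀ p q, 0 ≤ D' p q := by
    intro p q; rw [hD'def]; dsimp only
    split_ifs with h
    · exact hD0 _ _
    · exact le_refl 0
  have hrow' : ∀ p, ∑ q ∈ range n, D' p q ≤ 1 := by
    intro p
    by_cases hp : p < n
    · rw [← fin_sum_ext (fun j => D ⟨p, hp⟩ j) (fun q => D' p q)
        (fun j => (by simp [hD'def, hp, j.isLt]))]
      exact hrow _
    · have : ∀ q ∈ range n, D' p q = 0 := by
        intro q _; simp [hD'def, hp]
      rw [Finset.sum_congr rfl this]; simp
  have hcol' : ∀ q, ∑ p ∈ range n, D' p q ≤ 1 := by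
    intro q
    by_cases hq : q < n
    · rw [← fin_sum_ext (fun i => D i ⟨q, hq⟩) (fun p => D' p q)
        (fun i => (by simp [hD'def, hq, i.isLt]))]
      exact hcol _
    · have : ∀ p ∈ range n, D' p q = 0 := by
        intro p _; simp [hD'def, hq]
      rw [Finset.sum_congr rfl this]; simp
  have main := substoch_nat n S T hSanti hTanti hSn hTn D' hD'0 hrow' hcol'
  calc ∑ i, ∑ j, σ i * τ j * D i j
      = ∑ p ∈ range n, ∑ q ∈ range n, S p * T q * D' p q := by
        refine fin_sum_ext _ _ fun i => fin_sum_ext _ _ fun j => ?_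
        rw [hSv i, hTv j, hD'v i j]
    _ ≤ ∑ p ∈ range n, S p * T p := main
    _ = ∑ i, σ i * τ i := by
        refine (fin_sum_ext _ _ fun i => ?_).symm
        rw [hSv i, hTv i]

section LinAlg
open Matrix

lemma sum_swap4' {α β γ δ M : Type*} [AddCommMonoid M]
    (s : Finset α) (t : Finset β) (u : Finset γ) (v : Finset δ)
    (f : α → β → γ → δ → M) :
    ∑ i ∈ s, ∑ j ∈ t, ∑ p ∈ u, ∑ q ∈ v, f i j p q
      = ∑ p ∈ u, ∑ q ∈ v, ∑ i ∈ s, ∑ j ∈ t, f i j p q := by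
  calc ∑ i ∈ s, ∑ j ∈ t, ∑ p ∈ u, ∑ q ∈ v, f i j p q
      = ∑ i ∈ s, ∑ p ∈ u, ∑ j ∈ t, ∑ q ∈ v, f i j p q :=
        Finset.sum_congr rfl fun i _ => Finset.sum_comm
    _ = ∑ p ∈ u, ∑ i ∈ s, ∑ j ∈ t, ∑ q ∈ v, f i j p q := Finset.sum_comm
    _ = ∑ p ∈ u, ∑ i ∈ s, ∑ q ∈ v, ∑ j ∈ t, f i j p q :=
        Finset.sum_congr rfl fun p _ => Finset.sum_congr rfl fun i _ => Finset.sum_comm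
    _ = ∑ p ∈ u, ∑ q ∈ v, ∑ i ∈ s, ∑ j ∈ t, f i j p q :=
        Finset.sum_congr rfl fun p _ => Finset.sum_comm

lemma sum_swap3' {α γ δ M : Type*} [AddCommMonoid M]
    (s : Finset α) (u : Finset γ) (v : Finset δ) (f : α → γ → δ → M) :
    ∑ i ∈ s, ∑ p ∈ u, ∑ q ∈ v, f i p q = ∑ p ∈ u, ∑ q ∈ v, ∑ i ∈ s, f i p q := by
  calc ∑ i ∈ s, ∑ p ∈ u, ∑ q ∈ v, f i p q
      = ∑ p ∈ u, ∑ i ∈ s, ∑ q ∈ v, f i p q := Finset.sum_comm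
    _ = ∑ p ∈ u, ∑ q ∈ v, ∑ i ∈ s, f i p q :=
        Finset.sum_congr rfl fun p _ => Finset.sum_comm

variable {m n : ℕ}

lemma onb_dot (v : OrthonormalBasis (Fin n) ℝ (EuclideanSpace ℝ (Fin n))) (i j : Fin n) :
    (⇑(v i) : Fin n → ℝ) ⬝ᵥ ⇑(v j) = if i = j then 1 else 0 := by
  have h := orthonormal_iff_ite.mp v.orthonormal i j
  simpa [PiLp.inner_apply, RCLike.inner_apply, dotProduct, mul_comm] using h

lemma onb_complete (v : OrthonormalBasis (Fin n) ℝ (EuclideanSpace ℝ (Fin n))) (a b : Fin n) :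
    ∑ i, v i a * v i b = if a = b then 1 else 0 := by
  classical
  set M : Matrix (Fin n) (Fin n) ℝ := fun i a => v i a with hM
  have h1 : M * Mᵀ = 1 := by
    ext i j
    have := onb_dot v i j
    rw [Matrix.mul_apply]
    simp only [Matrix.transpose_apply]
    simpa [Matrix.mul_apply, Matrix.transpose_apply, Matrix.one_apply, hM,
      dotProduct] using this
  have h2 : Mᵀ * M = 1 := mul_eq_one_comm.mp h1
  have h3 := congrFun (congrFun h2 a) b
  rw [Matrix.mul_apply] at h3
  simp only [Matrix.transpose_apply] at h3
  simpa [Matrix.mul_apply, Matrix.transpose_apply, Matrix.one_apply, hM] using h3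

lemma trace_expand (A B : Matrix (Fin m) (Fin n) ℝ) (w : Fin n → Fin n → ℝ)
    (hw : ∀ a b, ∑ i, w i a * w i b = if a = b then 1 else 0) :
    ∑ a, ∑ b, A a b * B a b = ∑ i, (A *ᵥ w i) ⬝ᵥ (B *ᵥ w i) := by
  have h1 : ∀ i, (A *ᵥ w i) ⬝ᵥ (B *ᵥ w i)
      = ∑ a, ∑ b, ∑ c, (A a b * w i b) * (B a c * w i c) := by
    intro i
    simp only [dotProduct, Matrix.mulVec, Finset.sum_mul_sum]
  have h2 : ∀ (a : Fin m) (b c : Fin n), ∑ i, (A a b * w i b) * (B a c * w i c)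
      = if b = c then A a b * B a c else 0 := by
    intro a b c
    have : ∀ i : Fin n, (A a b * w i b) * (B a c * w i c)
        = (A a b * B a c) * (w i b * w i c) := fun i => by ring
    rw [Finset.sum_congr rfl fun i _ => this i, ← Finset.mul_sum, hw b c]
    split_ifs <;> simp
  refine Eq.symm ?_
  calc ∑ i, (A *ᵥ w i) ⬝ᵥ (B *ᵥ w i)
      = ∑ i : Fin n, ∑ a : Fin m, ∑ b, ∑ c, (A a b * w i b) * (B a c * w i c) :=
        Finset.sum_congr rfl fun i _ => h1 i
    _ = ∑ a : Fin m, ∑ i : Fin n, ∑ b, ∑ c, (A a b * w i b) * (B a c * w i c) :=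
        Finset.sum_comm
    _ = ∑ a : Fin m, ∑ b, ∑ c, ∑ i, (A a b * w i b) * (B a c * w i c) :=
        Finset.sum_congr rfl fun a _ => sum_swap3' _ _ _ _
    _ = ∑ a : Fin m, ∑ b, ∑ c, (if b = c then A a b * B a c else 0) :=
        Finset.sum_congr rfl fun a _ => Finset.sum_congr rfl fun b _ =>
          Finset.sum_congr rfl fun c _ => h2 a b c
    _ = ∑ a, ∑ b, A a b * B a b := by
        refine Finset.sum_congr rfl fun a _ => Finset.sum_congr rfl fun b _ => ?_
        rw [Finset.sum_ite_eq Finset.univ b (fun c => A a b * B a c)]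
        simp

lemma parseval (w : Fin n → Fin n → ℝ)
    (hw : ∀ a b, ∑ i, w i a * w i b = if a = b then 1 else 0) (x : Fin n → ℝ) :
    ∑ j, (x ⬝ᵥ w j)^2 = x ⬝ᵥ x := by
  have h1 : ∀ j, (x ⬝ᵥ w j)^2 = ∑ a, ∑ b, (x a * w j a) * (x b * w j b) := by
    intro j
    rw [sq]
    simp only [dotProduct, Finset.sum_mul_sum]
  rw [Finset.sum_congr rfl fun j (_ : j ∈ Finset.univ) => h1 j, sum_swap3']
  have h2 : ∀ a b : Fin n, ∑ j, (x a * w j a) * (x b * w j b)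
      = if a = b then x a * x b else 0 := by
    intro a b
    have : ∀ j : Fin n, (x a * w j a) * (x b * w j b)
        = (x a * x b) * (w j a * w j b) := fun j => by ring
    rw [Finset.sum_congr rfl fun j _ => this j, ← Finset.mul_sum, hw a b]
    split_ifs <;> simp
  rw [Finset.sum_congr rfl fun a (_ : a ∈ Finset.univ) =>
    Finset.sum_congr rfl fun b (_ : b ∈ Finset.univ) => h2 a b]
  rw [dotProduct]
  refine Finset.sum_congr rfl fun a _ => ?_
  rw [Finset.sum_ite_eq Finset.univ a (fun b => x a * x b)]
  simp

lemma expand_vec (w : Fin n → Fin n → ℝ)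
    (hw : ∀ a b, ∑ i, w i a * w i b = if a = b then 1 else 0) (x : Fin n → ℝ) (b : Fin n) :
    x b = ∑ j, (x ⬝ᵥ w j) * w j b := by
  have h1 : ∀ j : Fin n, (x ⬝ᵥ w j) * w j b = ∑ e, x e * (w j e * w j b) := by
    intro j
    simp only [dotProduct, Finset.sum_mul]
    exact Finset.sum_congr rfl fun e _ => by ring
  rw [Finset.sum_congr rfl fun j (_ : j ∈ Finset.univ) => h1 j, Finset.sum_comm]
  have h2 : ∀ e : Fin n, ∑ j, x e * (w j e * w j b) = if e = b then x e else 0 := by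
    intro e
    rw [← Finset.mul_sum, hw e b]
    split_ifs <;> simp
  rw [Finset.sum_congr rfl fun e (_ : e ∈ Finset.univ) => h2 e]
  rw [Finset.sum_ite_eq' Finset.univ b (fun e => x e)]
  simp

end LinAlg

open Matrix in
lemma bessel {m n : ℕ} (q : Fin n → Fin m → ℝ) (lam : Fin n → ℝ)
    (hq : ∀ i j, q i ⬝ᵥ q j = if i = j then lam j else 0) (x : Fin m → ℝ) :
    ∑ j, (if lam j = 0 then 0 else (x ⬝ᵥ q j)^2 / lam j) ≤ x ⬝ᵥ x := by
  classical
  set c : Fin n → ℝ := fun j => if lam j = 0 then 0 else (x ⬝ᵥ q j) / lam j with hc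
  set F : Fin n → ℝ := fun j => if lam j = 0 then 0 else (x ⬝ᵥ q j)^2 / lam j with hF
  have hcx : ∀ j, c j * (x ⬝ᵥ q j) = F j := by
    intro j; rw [hc, hF]; dsimp only
    split_ifs with h
    · simp
    · rw [sq]; field_simp
  have hclam : ∀ j k, j = k → c j * c k * lam k = F k := by
    rintro j k rfl; rw [hc, hF]; dsimp only
    split_ifs with h
    · simp
    · field_simp
  set y : Fin m → ℝ := fun a => x a - ∑ j, c j * q j a with hy
  have hyy : (0:ℝ) ≤ y ⬝ᵥ y := Finset.sum_nonneg fun a _ => mul_self_nonneg _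
  have e2 : ∑ a, x a * ∑ j, c j * q j a = ∑ j, F j := by
    have h1 : ∀ a, x a * ∑ j, c j * q j a = ∑ j, c j * (x a * q j a) := by
      intro a; rw [Finset.mul_sum]; exact Finset.sum_congr rfl fun j _ => by ring
    rw [Finset.sum_congr rfl fun a (_ : a ∈ Finset.univ) => h1 a, Finset.sum_comm]
    refine Finset.sum_congr rfl fun j _ => ?_
    rw [← Finset.mul_sum]
    exact hcx j
  have e3 : ∑ a, (∑ j, c j * q j a) * (∑ k, c k * q k a) = ∑ j, F j := by
    have h1 : ∀ a, (∑ j, c j * q j a) * (∑ k, c k * q k a)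
        = ∑ j, ∑ k, (c j * c k) * (q j a * q k a) := by
      intro a; rw [Finset.sum_mul_sum]
      exact Finset.sum_congr rfl fun j _ => Finset.sum_congr rfl fun k _ => by ring
    rw [Finset.sum_congr rfl fun a (_ : a ∈ Finset.univ) => h1 a, sum_swap3']
    have inner : ∀ j k : Fin n, ∑ a, (c j * c k) * (q j a * q k a)
        = if j = k then F k else 0 := by
      intro j k
      rw [← Finset.mul_sum]
      have hqa : ∑ a, q j a * q k a = if j = k then lam k else 0 := hq j k
      rw [hqa]
      split_ifs with h
      · exact hclam j k h
      · simp
    rw [Finset.sum_congr rfl fun j (_ : j ∈ Finset.univ) =>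
      Finset.sum_congr rfl fun k (_ : k ∈ Finset.univ) => inner j k]
    refine Finset.sum_congr rfl fun j _ => ?_
    rw [Finset.sum_ite_eq Finset.univ j F]; simp
  have expand : y ⬝ᵥ y = x ⬝ᵥ x - ∑ j, F j := by
    have e1 : y ⬝ᵥ y = ∑ a, (x a * x a - 2 * (x a * ∑ j, c j * q j a)
        + (∑ j, c j * q j a) * (∑ k, c k * q k a)) := by
      rw [dotProduct]
      exact Finset.sum_congr rfl fun a _ => by rw [hy]; ring
    rw [e1, Finset.sum_add_distrib, Finset.sum_sub_distrib, e3, ← Finset.mul_sum, e2,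
      dotProduct]
    ring
  have : ∑ j, F j ≤ x ⬝ᵥ x := by linarith [hyy, expand]
  simpa [hF] using this

open Matrix

lemma gram_eigen {m n : ℕ} (A : Matrix (Fin m) (Fin n) ℝ) (i j : Fin n) :
    (A *ᵥ ⇑((Matrix.isHermitian_conjTranspose_mul_self A).eigenvectorBasis i)) ⬝ᵥ
      (A *ᵥ ⇑((Matrix.isHermitian_conjTranspose_mul_self A).eigenvectorBasis j))
      = if i = j then (Matrix.isHermitian_conjTranspose_mul_self A).eigenvalues j else 0 := by
  set hA := Matrix.isHermitian_conjTranspose_mul_self A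
  set v : Fin n → Fin n → ℝ := fun i => ⇑(hA.eigenvectorBasis i) with hv
  calc (A *ᵥ v i) ⬝ᵥ (A *ᵥ v j)
      = (v i ᵥ* Aᵀ) ⬝ᵥ (A *ᵥ v j) := by rw [Matrix.vecMul_transpose]
    _ = v i ⬝ᵥ (Aᵀ *ᵥ (A *ᵥ v j)) := (Matrix.dotProduct_mulVec _ _ _).symm
    _ = v i ⬝ᵥ ((Aᵀ * A) *ᵥ v j) := by rw [Matrix.mulVec_mulVec]
    _ = v i ⬝ᵥ ((Aᴴ * A) *ᵥ v j) := by
        have hAT : Aᴴ = Aᵀ := by ext a b; simp [Matrix.conjTranspose_apply]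
        rw [hAT]
    _ = v i ⬝ᵥ (hA.eigenvalues j • v j) := by rw [hA.mulVec_eigenvectorBasis j]
    _ = hA.eigenvalues j * (v i ⬝ᵥ v j) := by
        rw [dotProduct_smul]; simp [smul_eq_mul]
    _ = if i = j then hA.eigenvalues j else 0 := by
        rw [onb_dot hA.eigenvectorBasis i j]
        split_ifs <;> simp

lemma mirsky {m n : ℕ} (A B : Matrix (Fin m) (Fin n) ℝ) :
    ∑ i, (sv A i - sv B i)^2 ≤ ∑ a, ∑ b, (A a b - B a b)^2 := by
  classical
  set hA := Matrix.isHermitian_conjTranspose_mul_self A with hAdef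
  set hB := Matrix.isHermitian_conjTranspose_mul_self B with hBdef
  set μ : Fin n → ℝ := hA.eigenvalues with hμdef
  set lam : Fin n → ℝ := hB.eigenvalues with hlamdef
  set v : Fin n → Fin n → ℝ := fun i => ⇑(hA.eigenvectorBasis i) with hvdef
  set w : Fin n → Fin n → ℝ := fun i => ⇑(hB.eigenvectorBasis i) with hwdef
  have hμ0 : ∀ i, 0 ≤ μ i := Matrix.eigenvalues_conjTranspose_mul_self_nonneg A
  have hlam0 : ∀ i, 0 ≤ lam i := Matrix.eigenvalues_conjTranspose_mul_self_nonneg B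
  have hudot : ∀ i j, (A *ᵥ v i) ⬝ᵥ (A *ᵥ v j) = if i = j then μ j else 0 :=
    fun i j => gram_eigen A i j
  have hqdot : ∀ i j, (B *ᵥ w i) ⬝ᵥ (B *ᵥ w j) = if i = j then lam j else 0 :=
    fun i j => gram_eigen B i j
  have hvdot : ∀ i j, v i ⬝ᵥ v j = if i = j then 1 else 0 :=
    fun i j => onb_dot hA.eigenvectorBasis i j
  have hwdot : ∀ i j, w i ⬝ᵥ w j = if i = j then 1 else 0 :=
    fun i j => onb_dot hB.eigenvectorBasis i j
  have hvcomp : ∀ a b, ∑ i, v i a * v i b = if a = b then 1 else 0 :=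
    fun a b => onb_complete hA.eigenvectorBasis a b
  have hwcomp : ∀ a b, ∑ i, w i a * w i b = if a = b then 1 else 0 :=
    fun a b => onb_complete hB.eigenvectorBasis a b
  set s : Fin n → ℝ := fun i => Real.sqrt (μ i) with hsdef
  set t : Fin n → ℝ := fun j => Real.sqrt (lam j) with htdef
  have hs2 : ∀ i, s i ^ 2 = μ i := fun i => Real.sq_sqrt (hμ0 i)
  have ht2 : ∀ j, t j ^ 2 = lam j := fun j => Real.sq_sqrt (hlam0 j)
  have hs0 : ∀ i, 0 ≤ s i := fun i => Real.sqrt_nonneg _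
  have ht0 : ∀ j, 0 ≤ t j := fun j => Real.sqrt_nonneg _
  set c : Fin n → Fin n → ℝ := fun i j => v i ⬝ᵥ w j with hcdef
  set e : Fin n → Fin n → ℝ := fun i j => (A *ᵥ v i) ⬝ᵥ (B *ᵥ w j) with hedef
  set d : Fin n → Fin n → ℝ :=
    fun i j => if μ i = 0 ∨ lam j = 0 then 0 else e i j / (s i * t j) with hddef
  -- vanishing
  have hAv0 : ∀ i, μ i = 0 → A *ᵥ v i = 0 := by
    intro i h
    have := hudot i i
    rw [if_pos rfl, h] at this
    exact dotProduct_self_eq_zero.mp this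
  have hBw0 : ∀ j, lam j = 0 → B *ᵥ w j = 0 := by
    intro j h
    have := hqdot j j
    rw [if_pos rfl, h] at this
    exact dotProduct_self_eq_zero.mp this
  have he : ∀ i j, e i j = (s i * t j) * d i j := by
    intro i j
    rw [hddef]; dsimp only
    split_ifs with h
    · rcases h with h | h
      · rw [hedef]; dsimp only; rw [hAv0 i h]; simp
      · rw [hedef]; dsimp only; rw [hBw0 j h]; simp
    · push_neg at h
      have hsne : s i ≠ 0 := fun hc => h.1 (by rw [← hs2 i, hc]; ring)
      have htne : t j ≠ 0 := fun hc => h.2 (by rw [← ht2 j, hc]; ring)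
      field_simp
  -- row and column bounds for d
  have hrowd : ∀ i, ∑ j, d i j ^ 2 ≤ 1 := by
    intro i
    by_cases hμ : μ i = 0
    · have : ∀ j, d i j ^ 2 = 0 := by
        intro j; rw [hddef]; dsimp only; rw [if_pos (Or.inl hμ)]; ring
      rw [Finset.sum_congr rfl fun j _ => this j]; simp
    · have hb := bessel (fun j => B *ᵥ w j) lam hqdot (A *ᵥ v i)
      have hx : (A *ᵥ v i) ⬝ᵥ (A *ᵥ v i) = μ i := by rw [hudot i i, if_pos rfl]
      rw [hx] at hb
      have hd2 : ∀ j, d i j ^ 2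
          = (if lam j = 0 then 0 else ((A *ᵥ v i) ⬝ᵥ (B *ᵥ w j)) ^ 2 / lam j) / μ i := by
        intro j
        by_cases h2 : lam j = 0
        · rw [hddef]; dsimp only; rw [if_pos (Or.inr h2), if_pos h2]; ring
        · rw [hddef]; dsimp only
          rw [if_neg (fun h => h.elim hμ h2), if_neg h2]
          rw [hedef]; dsimp only
          rw [div_pow, mul_pow, hs2, ht2, div_div]
          ring_nf
      rw [Finset.sum_congr rfl fun j _ => hd2 j, ← Finset.sum_div]
      rw [div_le_one (lt_of_le_of_ne (hμ0 i) (Ne.symm hμ))]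
      exact hb
  have hcold : ∀ j, ∑ i, d i j ^ 2 ≤ 1 := by
    intro j
    by_cases hlamj : lam j = 0
    · have : ∀ i, d i j ^ 2 = 0 := by
        intro i; rw [hddef]; dsimp only; rw [if_pos (Or.inr hlamj)]; ring
      rw [Finset.sum_congr rfl fun i _ => this i]; simp
    · have hb := bessel (fun i => A *ᵥ v i) μ hudot (B *ᵥ w j)
      have hx : (B *ᵥ w j) ⬝ᵥ (B *ᵥ w j) = lam j := by rw [hqdot j j, if_pos rfl]
      rw [hx] at hb
      have hd2 : ∀ i, d i j ^ 2
          = (if μ i = 0 then 0 else ((B *ᵥ w j) ⬝ᵥ (A *ᵥ v i)) ^ 2 / μ i) / lam j := by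
        intro i
        by_cases h2 : μ i = 0
        · rw [hddef]; dsimp only; rw [if_pos (Or.inl h2), if_pos h2]; ring
        · rw [hddef]; dsimp only
          rw [if_neg (fun h => h.elim h2 hlamj), if_neg h2]
          rw [hedef]; dsimp only
          rw [dotProduct_comm (B *ᵥ w j) (A *ᵥ v i)]
          rw [div_pow]
          rw [mul_pow]
          rw [hs2]
          rw [ht2]
          rw [div_div]
      rw [Finset.sum_congr rfl fun i _ => hd2 i, ← Finset.sum_div]
      rw [div_le_one (lt_of_le_of_ne (hlam0 j) (Ne.symm hlamj))]
      exact hb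
  -- Parseval for c
  have hcrow : ∀ i, ∑ j, c i j ^ 2 = 1 := by
    intro i
    have := parseval w hwcomp (v i)
    rw [hvdot i i, if_pos rfl] at this
    rw [hcdef]; dsimp only
    exact this
  have hccol : ∀ j, ∑ i, c i j ^ 2 = 1 := by
    intro j
    have := parseval v hvcomp (w j)
    rw [hwdot j j, if_pos rfl] at this
    rw [hcdef]; dsimp only
    rw [Finset.sum_congr rfl fun i (_ : i ∈ Finset.univ) =>
      congrArg (· ^ 2) (dotProduct_comm (v i) (w j))]
    exact this
  -- expansion of B *ᵥ v i in terms of B *ᵥ w j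
  have hexp : ∀ i, (A *ᵥ v i) ⬝ᵥ (B *ᵥ v i) = ∑ j, c i j * e i j := by
    intro i
    have h1 : ∀ a, (B *ᵥ v i) a = ∑ j, c i j * (B *ᵥ w j) a := by
      intro a
      show ∑ b, B a b * v i b = _
      have h2 : ∀ b, v i b = ∑ j, c i j * w j b := by
        intro b
        rw [hcdef]; dsimp only
        exact expand_vec w hwcomp (v i) b
      rw [Finset.sum_congr rfl fun b (_ : b ∈ Finset.univ) => congrArg (B a b * ·) (h2 b)]
      have h3 : ∀ b, B a b * ∑ j, c i j * w j b = ∑ j, c i j * (B a b * w j b) := by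
        intro b
        rw [Finset.mul_sum]
        exact Finset.sum_congr rfl fun jj _ => by ring
      rw [Finset.sum_congr rfl fun b (_ : b ∈ Finset.univ) => h3 b, Finset.sum_comm]
      refine Finset.sum_congr rfl fun jj _ => ?_
      rw [← Finset.mul_sum]
      rfl
    calc (A *ᵥ v i) ⬝ᵥ (B *ᵥ v i)
        = ∑ a, (A *ᵥ v i) a * ∑ j, c i j * (B *ᵥ w j) a := by
          rw [dotProduct]
          exact Finset.sum_congr rfl fun a _ => congrArg _ (h1 a)
      _ = ∑ a, ∑ j, c i j * ((A *ᵥ v i) a * (B *ᵥ w j) a) := by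
          refine Finset.sum_congr rfl fun a _ => ?_
          rw [Finset.mul_sum]
          exact Finset.sum_congr rfl fun jj _ => by ring
      _ = ∑ j, ∑ a, c i j * ((A *ᵥ v i) a * (B *ᵥ w j) a) := Finset.sum_comm
      _ = ∑ j, c i j * e i j := by
          refine Finset.sum_congr rfl fun jj _ => ?_
          rw [← Finset.mul_sum, hedef]
          rfl
  -- the trace bound
  have hT : ∑ a, ∑ b, A a b * B a b ≤ ∑ i, ∑ j, (s i * t j) * ((c i j ^ 2 + d i j ^ 2) / 2) := by
    rw [trace_expand A B v hvcomp]
    rw [Finset.sum_congr rfl fun i (_ : i ∈ Finset.univ) => hexp i]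
    refine Finset.sum_le_sum fun i _ => Finset.sum_le_sum fun j _ => ?_
    rw [he i j]
    have h2 : c i j * d i j ≤ (c i j ^ 2 + d i j ^ 2) / 2 := by
      nlinarith [sq_nonneg (c i j - d i j)]
    calc c i j * (s i * t j * d i j) = (s i * t j) * (c i j * d i j) := by ring
      _ ≤ (s i * t j) * ((c i j ^ 2 + d i j ^ 2) / 2) :=
          mul_le_mul_of_nonneg_left h2 (mul_nonneg (hs0 i) (ht0 j))
  -- sorted singular values and reindexing permutations
  have hsv : ∀ j, sv A j = s (Tuple.sort μ j.rev) := fun j => rfl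
  have htv : ∀ j, sv B j = t (Tuple.sort lam j.rev) := fun j => rfl
  have hσanti : Antitone (sv A) := by
    intro i j hij
    rw [hsv i, hsv j, hsdef]
    exact Real.sqrt_le_sqrt (Tuple.monotone_sort μ (Fin.rev_le_rev.mpr hij))
  have hτanti : Antitone (sv B) := by
    intro i j hij
    rw [htv i, htv j, htdef]
    exact Real.sqrt_le_sqrt (Tuple.monotone_sort lam (Fin.rev_le_rev.mpr hij))
  have hσ0 : ∀ i, 0 ≤ sv A i := fun i => Real.sqrt_nonneg _
  have hτ0 : ∀ i, 0 ≤ sv B i := fun i => Real.sqrt_nonneg _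
  set φ : Fin n ≃ Fin n :=
    ((Tuple.sort μ)⁻¹ : Equiv.Perm (Fin n)).trans Fin.revPerm with hφdef
  set ψ : Fin n ≃ Fin n :=
    ((Tuple.sort lam)⁻¹ : Equiv.Perm (Fin n)).trans Fin.revPerm with hψdef
  have hφv : ∀ i, sv A (φ i) = s i := by
    intro i
    rw [hsv (φ i)]
    have h1 : (φ i).rev = (Tuple.sort μ)⁻¹ i := by
      rw [hφdef]; simp [Equiv.trans_apply, Fin.rev_rev]
    rw [h1]
    have h2 : Tuple.sort μ ((Tuple.sort μ)⁻¹ i) = i := Equiv.apply_symm_apply _ _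
    rw [h2]
  have hψv : ∀ j, sv B (ψ j) = t j := by
    intro j
    rw [htv (ψ j)]
    have h1 : (ψ j).rev = (Tuple.sort lam)⁻¹ j := by
      rw [hψdef]; simp [Equiv.trans_apply, Fin.rev_rev]
    rw [h1]
    have h2 : Tuple.sort lam ((Tuple.sort lam)⁻¹ j) = j := Equiv.apply_symm_apply _ _
    rw [h2]
  set D0 : Fin n → Fin n → ℝ := fun i j => (c i j ^ 2 + d i j ^ 2) / 2 with hD0def
  set D' : Fin n → Fin n → ℝ := fun i j => D0 (φ.symm i) (ψ.symm j) with hD'def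
  have hD00 : ∀ i j, 0 ≤ D0 i j := by
    intro i j; rw [hD0def]; dsimp only; positivity
  have hD0row : ∀ i, ∑ j, D0 i j ≤ 1 := by
    intro i
    have h1 : ∑ j, D0 i j = (∑ j, c i j ^ 2 + ∑ j, d i j ^ 2) / 2 := by
      rw [hD0def, ← Finset.sum_div, Finset.sum_add_distrib]
    rw [h1, hcrow i]
    have := hrowd i
    linarith
  have hD0col : ∀ j, ∑ i, D0 i j ≤ 1 := by
    intro j
    have h1 : ∑ i, D0 i j = (∑ i, c i j ^ 2 + ∑ i, d i j ^ 2) / 2 := by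
      rw [hD0def, ← Finset.sum_div, Finset.sum_add_distrib]
    rw [h1, hccol j]
    have := hcold j
    linarith
  have hD'0 : ∀ i j, 0 ≤ D' i j := fun i j => hD00 _ _
  have hD'row : ∀ i, ∑ j, D' i j ≤ 1 := by
    intro i
    have h1 : ∑ j, D' i j = ∑ j, D0 (φ.symm i) j := by
      rw [hD'def]
      exact Equiv.sum_comp ψ.symm (fun j => D0 (φ.symm i) j)
    rw [h1]; exact hD0row _
  have hD'col : ∀ j, ∑ i, D' i j ≤ 1 := by
    intro j
    have h1 : ∑ i, D' i j = ∑ i, D0 i (ψ.symm j) := by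
      rw [hD'def]
      exact Equiv.sum_comp φ.symm (fun i => D0 i (ψ.symm j))
    rw [h1]; exact hD0col _
  have hsubst := substoch_fin (sv A) (sv B) hσanti hτanti hσ0 hτ0 D' hD'0 hD'row hD'col
  have r1 : ∑ i, ∑ j, sv A i * sv B j * D' i j
      = ∑ i, ∑ j, (s i * t j) * ((c i j ^ 2 + d i j ^ 2) / 2) := by
    rw [← Equiv.sum_comp φ (fun i => ∑ j, sv A i * sv B j * D' i j)]
    refine Finset.sum_congr rfl fun i _ => ?_
    rw [← Equiv.sum_comp ψ (fun j => sv A (φ i) * sv B j * D' (φ i) j)]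
    refine Finset.sum_congr rfl fun j _ => ?_
    rw [hφv i, hψv j, hD'def]
    dsimp only
    rw [Equiv.symm_apply_apply, Equiv.symm_apply_apply, hD0def]
  have hTfinal : ∑ a, ∑ b, A a b * B a b ≤ ∑ i, sv A i * sv B i := by
    refine le_trans hT ?_
    rw [← r1]
    exact hsubst
  -- Frobenius identities
  have hfrobA : ∑ a, ∑ b, A a b * A a b = ∑ i, μ i := by
    rw [trace_expand A A v hvcomp]
    rw [Finset.sum_congr rfl fun i (_ : i ∈ Finset.univ) => hudot i i]
    simp
  have hfrobB : ∑ a, ∑ b, B a b * B a b = ∑ i, lam i := by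
    rw [trace_expand B B w hwcomp]
    rw [Finset.sum_congr rfl fun i (_ : i ∈ Finset.univ) => hqdot i i]
    simp
  have hsqA : ∑ i, sv A i ^ 2 = ∑ i, μ i := by
    have h1 : ∀ i : Fin n, sv A i ^ 2 = μ (Tuple.sort μ i.rev) := by
      intro i
      rw [hsv i, hsdef]
      exact Real.sq_sqrt (hμ0 _)
    rw [Finset.sum_congr rfl fun i (_ : i ∈ Finset.univ) => h1 i]
    have := Equiv.sum_comp (Fin.revPerm.trans (Tuple.sort μ)) μ
    simpa [Equiv.trans_apply] using this
  have hsqB : ∑ i, sv B i ^ 2 = ∑ i, lam i := by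
    have h1 : ∀ i : Fin n, sv B i ^ 2 = lam (Tuple.sort lam i.rev) := by
      intro i
      rw [htv i, htdef]
      exact Real.sq_sqrt (hlam0 _)
    rw [Finset.sum_congr rfl fun i (_ : i ∈ Finset.univ) => h1 i]
    have := Equiv.sum_comp (Fin.revPerm.trans (Tuple.sort lam)) lam
    simpa [Equiv.trans_apply] using this
  -- expansions of the squares
  have hsplit : ∑ a, ∑ b, (A a b - B a b) ^ 2
      = ∑ a, ∑ b, A a b * A a b + ∑ a, ∑ b, B a b * B a b
        - 2 * ∑ a, ∑ b, A a b * B a b := by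
    have h1 : ∀ a : Fin m, ∑ b, (A a b - B a b) ^ 2
        = ∑ b, A a b * A a b + ∑ b, B a b * B a b - 2 * ∑ b, A a b * B a b := by
      intro a
      rw [Finset.mul_sum, ← Finset.sum_add_distrib, ← Finset.sum_sub_distrib]
      exact Finset.sum_congr rfl fun b _ => by ring
    rw [Finset.sum_congr rfl fun a (_ : a ∈ Finset.univ) => h1 a]
    rw [Finset.mul_sum, ← Finset.sum_add_distrib, ← Finset.sum_sub_distrib]
  have hsplitσ : ∑ i, (sv A i - sv B i) ^ 2
      = ∑ i, sv A i ^ 2 + ∑ i, sv B i ^ 2 - 2 * ∑ i, sv A i * sv B i := by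
    rw [Finset.mul_sum, ← Finset.sum_add_distrib, ← Finset.sum_sub_distrib]
    exact Finset.sum_congr rfl fun i _ => by ring
  rw [hsplit, hsplitσ, hsqA, hsqB, hfrobA, hfrobB]
  linarith [hTfinal]

lemma sv_eq_zero_of_rank_le {m n k : ℕ} (B : Matrix (Fin m) (Fin n) ℝ) (hB : B.rank ≤ k)
    (i : Fin n) (hi : k ≤ (i : ℕ)) : sv B i = 0 := by
  classical
  set hBh := Matrix.isHermitian_conjTranspose_mul_self B with hBhdef
  set lam : Fin n → ℝ := hBh.eigenvalues with hlamdef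
  have hlam0 : ∀ j, 0 ≤ lam j := Matrix.eigenvalues_conjTranspose_mul_self_nonneg B
  -- number of nonzero eigenvalues is at most k
  have hBT : Bᴴ = Bᵀ := by ext a b; simp [Matrix.conjTranspose_apply]
  have hrank : (Bᴴ * B).rank = B.rank := by rw [hBT]; exact Matrix.rank_transpose_mul_self B
  have hcard : (Finset.univ.filter fun x : Fin n => lam x ≠ 0).card ≤ k := by
    have h1 := hBh.rank_eq_card_non_zero_eigs
    rw [hrank] at h1
    rw [← hlamdef] at h1
    have h2 : Fintype.card {x // lam x ≠ 0}
        = (Finset.univ.filter fun x : Fin n => lam x ≠ 0).card := Fintype.card_subtype _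
    omega
  by_contra hne
  have hpos : 0 < sv B i := lt_of_le_of_ne (Real.sqrt_nonneg _) (Ne.symm hne)
  -- all indices up to i give nonzero eigenvalues
  set f : Fin n → Fin n := fun j => Tuple.sort lam j.rev with hfdef
  have hfinj : Function.Injective f := by
    intro a b hab
    have := (Tuple.sort lam).injective hab
    exact Fin.rev_injective this
  have hsub : (Finset.Iic i).image f ⊆ Finset.univ.filter fun x : Fin n => lam x ≠ 0 := by
    intro x hx
    rw [Finset.mem_image] at hx
    obtain ⟨j, hj, rfl⟩ := hx
    rw [Finset.mem_Iic] at hj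
    rw [Finset.mem_filter]
    refine ⟨Finset.mem_univ _, ?_⟩
    intro hzero
    -- sv B j = sqrt (lam (f j)) = 0, but sv B j ≥ sv B i > 0
    have hj0 : sv B j = 0 := by
      show Real.sqrt ((lam ∘ Tuple.sort lam) j.rev) = 0
      simp only [Function.comp_apply]
      rw [show Tuple.sort lam j.rev = f j from rfl, hzero, Real.sqrt_zero]
    have : sv B i ≤ sv B j := by
      have hanti : Antitone (sv B) := by
        intro a b hab
        show Real.sqrt ((lam ∘ Tuple.sort lam) b.rev) ≤ Real.sqrt ((lam ∘ Tuple.sort lam) a.rev)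
        exact Real.sqrt_le_sqrt (Tuple.monotone_sort lam (Fin.rev_le_rev.mpr hab))
      exact hanti hj
    rw [hj0] at this
    exact hne (le_antisymm this (Real.sqrt_nonneg _))
  have hc1 : ((Finset.Iic i).image f).card = (i : ℕ) + 1 := by
    rw [Finset.card_image_of_injective _ hfinj, Fin.card_Iic]
  have := Finset.card_le_card hsub
  omega

theorem stmt3 {m n k : ℕ} (hmn : n ≤ m) (hkn : k ≤ n)
    (A B : Matrix (Fin m) (Fin n) ℝ) (hB : B.rank ≤ k) (η : ℝ) (hη : 0 ≤ η)
    (hF : frobNorm (A - B) ≤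
      Real.sqrt (η ^ 2 + ∑ j ∈ Finset.univ.filter (fun j : Fin n => k ≤ (j : ℕ)), sv A j ^ 2)) :
    Real.sqrt (∑ j ∈ Finset.univ.filter (fun j : Fin n => (j : ℕ) < k),
      (sv A j - sv B j) ^ 2) ≤ η := by
  classical
  set R : ℝ := η ^ 2 + ∑ j ∈ Finset.univ.filter (fun j : Fin n => k ≤ (j : ℕ)), sv A j ^ 2
    with hR
  have hR0 : 0 ≤ R := by
    rw [hR]
    exact add_nonneg (sq_nonneg _) (Finset.sum_nonneg fun j _ => sq_nonneg _)
  have hS0 : 0 ≤ ∑ a, ∑ b, ((A - B) a b) ^ 2 :=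
    Finset.sum_nonneg fun a _ => Finset.sum_nonneg fun b _ => sq_nonneg _
  have hF2 : ∑ a, ∑ b, ((A - B) a b) ^ 2 ≤ R := by
    have h2 : frobNorm (A - B) ^ 2 ≤ Real.sqrt R ^ 2 :=
      pow_le_pow_left₀ (Real.sqrt_nonneg _) hF 2
    rw [frobNorm, Real.sq_sqrt hS0, Real.sq_sqrt hR0] at h2
    exact h2
  have hsum_eq : ∑ a, ∑ b, ((A - B) a b) ^ 2 = ∑ a, ∑ b, (A a b - B a b) ^ 2 := by
    simp [Matrix.sub_apply]
  have hM := mirsky A B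
  have hτ0' : ∀ j : Fin n, k ≤ (j : ℕ) → sv B j = 0 :=
    fun j hj => sv_eq_zero_of_rank_le B hB j hj
  have hdecomp : ∑ i, (sv A i - sv B i) ^ 2
      = ∑ j ∈ Finset.univ.filter (fun j : Fin n => (j : ℕ) < k), (sv A j - sv B j) ^ 2
        + ∑ j ∈ Finset.univ.filter (fun j : Fin n => k ≤ (j : ℕ)), sv A j ^ 2 := by
    rw [← Finset.sum_filter_add_sum_filter_not Finset.univ (fun j : Fin n => (j : ℕ) < k)]
    congr 1
    have hfe : Finset.univ.filter (fun j : Fin n => ¬ (j : ℕ) < k)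
        = Finset.univ.filter (fun j : Fin n => k ≤ (j : ℕ)) := by
      apply Finset.filter_congr
      intro x _
      simp [not_lt]
    rw [hfe]
    refine Finset.sum_congr rfl fun j hj => ?_
    rw [Finset.mem_filter] at hj
    rw [hτ0' j hj.2, sub_zero]
  have hkey : ∑ j ∈ Finset.univ.filter (fun j : Fin n => (j : ℕ) < k),
      (sv A j - sv B j) ^ 2 ≤ η ^ 2 := by
    rw [hdecomp] at hM
    rw [hsum_eq] at hF2
    rw [hR] at hF2
    linarith
  calc Real.sqrt (∑ j ∈ Finset.univ.filter (fun j : Fin n => (j : ℕ) < k),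
      (sv A j - sv B j) ^ 2) ≤ Real.sqrt (η ^ 2) := Real.sqrt_le_sqrt hkey
    _ = η := Real.sqrt_sq hη
end

section
/- Let Q be an m×ℓ matrix with orthonormal columns, 1 ≤ k ≤ ℓ, and let B_k be the rank-k truncated SVD of QᵀA. Then B_k minimizes ‖A − QB‖_F over all ℓ×n matrices B of rank at most k. -/
open Matrix

noncomputable def F2 {a b : ℕ} (X : Matrix (Fin a) (Fin b) ℝ) : ℝ := ∑ i, ∑ j, (X i j) ^ 2

lemma F2_nonneg {a b : ℕ} (X : Matrix (Fin a) (Fin b) ℝ) : 0 ≤ F2 X := by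
  apply Finset.sum_nonneg; intro i _; apply Finset.sum_nonneg; intro j _; positivity

lemma F2_eq_trace {a b : ℕ} (X : Matrix (Fin a) (Fin b) ℝ) : F2 X = trace (Xᵀ * X) := by
  unfold F2 Matrix.trace
  simp only [Matrix.diag, Matrix.mul_apply, Matrix.transpose_apply, sq]
  rw [Finset.sum_comm]

lemma F2_eq_trace' {a b : ℕ} (X : Matrix (Fin a) (Fin b) ℝ) : F2 X = trace (X * Xᵀ) := by
  rw [F2_eq_trace, Matrix.trace_mul_comm]

lemma F2_transpose {a b : ℕ} (X : Matrix (Fin a) (Fin b) ℝ) : F2 Xᵀ = F2 X := by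
  rw [F2, F2, Finset.sum_comm]; rfl

lemma F2_mul_orth {a b c : ℕ} (X : Matrix (Fin a) (Fin b) ℝ) (U : Matrix (Fin b) (Fin c) ℝ)
    (hU : Uᵀ * U = 1) : F2 (X * U) ≤ F2 X := by
  set P : Matrix (Fin b) (Fin b) ℝ := U * Uᵀ with hPdef
  have hP : ∀ Y : Matrix (Fin b) (Fin a) ℝ, P * (P * Y) = P * Y := by
    intro Y
    rw [hPdef, Matrix.mul_assoc U, ← Matrix.mul_assoc Uᵀ, ← Matrix.mul_assoc Uᵀ, hU,
      Matrix.one_mul, Matrix.mul_assoc]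
  have hPs : (1 - P)ᵀ = 1 - P := by
    simp [hPdef, Matrix.transpose_sub, Matrix.transpose_mul]
  have h1 : F2 (X * U) = trace (X * (P * Xᵀ)) := by
    rw [F2_eq_trace', Matrix.transpose_mul]
    congr 1
    simp [hPdef, Matrix.mul_assoc]
  have h2 : F2 (X * (1 - P)) = trace (X * Xᵀ) - trace (X * (P * Xᵀ)) := by
    rw [F2_eq_trace', Matrix.transpose_mul, hPs]
    have e1 : X * (1 - P) * ((1 - P) * Xᵀ) = X * Xᵀ - X * (P * Xᵀ) := by
      simp only [Matrix.mul_sub, Matrix.sub_mul, Matrix.mul_one, Matrix.one_mul,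
        Matrix.mul_assoc, hP]
      abel
    rw [e1, Matrix.trace_sub]
  have h3 : 0 ≤ F2 (X * (1 - P)) := F2_nonneg _
  have h4 : F2 X = trace (X * Xᵀ) := F2_eq_trace' X
  linarith

lemma F2_pythagoras {a b : ℕ} (R S : Matrix (Fin a) (Fin b) ℝ) (h : Rᵀ * S = 0) :
    F2 (R + S) = F2 R + F2 S := by
  have h2 : Sᵀ * R = 0 := by
    have := congrArg Matrix.transpose h
    simpa [Matrix.transpose_mul] using this
  rw [F2_eq_trace, F2_eq_trace, F2_eq_trace, Matrix.transpose_add, Matrix.add_mul,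
    Matrix.mul_add, Matrix.mul_add, h, h2]
  simp [Matrix.trace_add]

lemma F2_orth_mul {a b c : ℕ} (Q : Matrix (Fin a) (Fin b) ℝ) (S : Matrix (Fin b) (Fin c) ℝ)
    (hQ : Qᵀ * Q = 1) : F2 (Q * S) = F2 S := by
  rw [F2_eq_trace, F2_eq_trace, Matrix.transpose_mul]
  congr 1
  rw [Matrix.mul_assoc, ← Matrix.mul_assoc Qᵀ, hQ, Matrix.one_mul]

lemma F2_WDV {a b r : ℕ} (W : Matrix (Fin a) (Fin r) ℝ) (V : Matrix (Fin b) (Fin r) ℝ)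
    (d : Fin r → ℝ) (hW : Wᵀ * W = 1) (hV : Vᵀ * V = 1) :
    F2 (W * Matrix.diagonal d * Vᵀ) = ∑ j, (d j) ^ 2 := by
  rw [F2_eq_trace]
  have : (W * Matrix.diagonal d * Vᵀ)ᵀ * (W * Matrix.diagonal d * Vᵀ)
      = V * (Matrix.diagonal (fun j => d j * d j)) * Vᵀ := by
    simp only [Matrix.transpose_mul, Matrix.transpose_transpose, Matrix.diagonal_transpose]
    simp only [Matrix.mul_assoc]
    rw [← Matrix.mul_assoc Wᵀ, hW, Matrix.one_mul, ← Matrix.mul_assoc (Matrix.diagonal d),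
      Matrix.diagonal_mul_diagonal]
  rw [this, Matrix.trace_mul_cycle, hV, Matrix.one_mul, Matrix.trace_diagonal]
  simp [sq]

lemma exists_orthonormal_ker {r k : ℕ} (hkr : k < r) (C : Matrix (Fin r) (Fin r) ℝ)
    (hC : C.rank ≤ k) :
    ∃ U : Matrix (Fin r) (Fin (r - k)) ℝ, Uᵀ * U = 1 ∧ C * U = 0 := by
  classical
  set K₀ : Submodule ℝ (Fin r → ℝ) := LinearMap.ker C.mulVecLin with hK₀
  have hrank : C.rank + Module.finrank ℝ K₀ = r := by
    have h := LinearMap.finrank_range_add_finrank_ker C.mulVecLin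
    rwa [Module.finrank_pi, Fintype.card_fin] at h
  have hdim0 : r - k ≤ Module.finrank ℝ K₀ := by omega
  set e : (Fin r → ℝ) ≃ₗ[ℝ] EuclideanSpace ℝ (Fin r) :=
    (WithLp.linearEquiv 2 ℝ (Fin r → ℝ)).symm with he
  set K : Submodule ℝ (EuclideanSpace ℝ (Fin r)) := K₀.map (e : (Fin r → ℝ) →ₗ[ℝ] EuclideanSpace ℝ (Fin r)) with hK
  have hdim : r - k ≤ Module.finrank ℝ K :=
    le_of_le_of_eq hdim0 (LinearEquiv.finrank_map_eq e K₀).symm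
  let bb := stdOrthonormalBasis ℝ K
  have hcast : r - k ≤ Module.finrank ℝ K := hdim
  let v : Fin (r - k) → K := fun j => bb (Fin.castLE hcast j)
  have hon : Orthonormal ℝ v := bb.orthonormal.comp _ (Fin.castLE_injective hcast)
  refine ⟨Matrix.of (fun i j => ((v j : EuclideanSpace ℝ (Fin r)) : Fin r → ℝ) i :
      Matrix (Fin r) (Fin (r - k)) ℝ), ?_, ?_⟩
  · ext a b
    have := (orthonormal_iff_ite.mp hon) a b
    rw [Submodule.coe_inner, PiLp.inner_apply] at this
    simp only [RCLike.inner_apply, starRingEnd_apply, star_trivial] at this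
    simp only [Matrix.mul_apply, Matrix.transpose_apply, Matrix.one_apply, Matrix.of_apply]
    rw [← this]; exact Finset.sum_congr rfl fun x _ => by ring
  · ext i j
    have hmem : (v j : EuclideanSpace ℝ (Fin r)) ∈ K₀.map (e : (Fin r → ℝ) →ₗ[ℝ] EuclideanSpace ℝ (Fin r)) := (v j).2
    obtain ⟨y, hy, hey⟩ := Submodule.mem_map.1 hmem
    have hyv : ∀ x, ((v j : EuclideanSpace ℝ (Fin r)) : Fin r → ℝ) x = y x := by
      intro x
      rw [← hey]
      rfl
    have hmv : (C *ᵥ y) i = 0 := by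
      have : C.mulVec y = 0 := hy
      rw [this]; rfl
    rw [Matrix.mul_apply, Matrix.zero_apply, ← hmv, Matrix.mulVec, dotProduct]
    exact Finset.sum_congr rfl fun x _ => by rw [Matrix.of_apply, hyv x]

lemma core_EY {r k : ℕ} (hk : 1 ≤ k) (σ : Fin r → ℝ) (hσanti : Antitone σ)
    (hσ0 : ∀ j, 0 ≤ σ j) (C : Matrix (Fin r) (Fin r) ℝ) (hC : C.rank ≤ k) :
    ∑ j : Fin r, (if (j : ℕ) < k then 0 else σ j) ^ 2 ≤ F2 (Matrix.diagonal σ - C) := by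
  classical
  by_cases hkr : r ≤ k
  · have : ∀ j : Fin r, (if (j : ℕ) < k then 0 else σ j) ^ 2 = 0 := by
      intro j; rw [if_pos (lt_of_lt_of_le j.2 hkr)]; ring
    rw [Finset.sum_congr rfl fun j _ => this j, Finset.sum_const, smul_zero]
    exact F2_nonneg _
  push_neg at hkr
  obtain ⟨U, hU, hCU⟩ := exists_orthonormal_ker hkr C hC
  have h1 : F2 ((Matrix.diagonal σ - C) * U) ≤ F2 (Matrix.diagonal σ - C) := F2_mul_orth _ _ hU
  have h2 : (Matrix.diagonal σ - C) * U = Matrix.diagonal σ * U := by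
    rw [Matrix.sub_mul, hCU, sub_zero]
  set t : Fin r → ℝ := fun i => ∑ j, (U i j) ^ 2 with ht
  have ht0 : ∀ i, 0 ≤ t i := fun i => Finset.sum_nonneg fun j _ => sq_nonneg _
  have htsum : ∑ i, t i = ((r - k : ℕ) : ℝ) := by
    rw [ht]
    rw [Finset.sum_comm]
    have : ∀ j : Fin (r - k), ∑ i, (U i j) ^ 2 = 1 := by
      intro j
      have := congrFun (congrFun hU j) j
      simp only [Matrix.mul_apply, Matrix.transpose_apply, Matrix.one_apply_eq] at this
      rw [← this]
      exact Finset.sum_congr rfl fun i _ => sq (U i j)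
    rw [Finset.sum_congr rfl fun j _ => this j, Finset.sum_const, Finset.card_univ,
      Fintype.card_fin, nsmul_eq_mul, mul_one]
  have ht1 : ∀ i, t i ≤ 1 := by
    intro i
    have hPP : (U * Uᵀ) * (U * Uᵀ) = U * Uᵀ := by
      rw [Matrix.mul_assoc U, ← Matrix.mul_assoc Uᵀ, hU, Matrix.one_mul]
    have hsym : ∀ x y, (U * Uᵀ) x y = (U * Uᵀ) y x := by
      intro x y
      simp only [Matrix.mul_apply, Matrix.transpose_apply]
      exact Finset.sum_congr rfl fun j _ => mul_comm _ _
    have hPii : t i = (U * Uᵀ) i i := by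
      simp only [ht, Matrix.mul_apply, Matrix.transpose_apply, sq]
    have key : (U * Uᵀ) i i = ∑ x, ((U * Uᵀ) i x) ^ 2 := by
      conv_lhs => rw [← hPP, Matrix.mul_apply]
      exact Finset.sum_congr rfl fun x _ => by rw [hsym x i, sq]
    have hge : ((U * Uᵀ) i i) ^ 2 ≤ (U * Uᵀ) i i :=
      calc ((U * Uᵀ) i i) ^ 2 = ∑ x ∈ ({i} : Finset (Fin r)), ((U * Uᵀ) i x) ^ 2 := by simp
        _ ≤ ∑ x, ((U * Uᵀ) i x) ^ 2 := Finset.sum_le_sum_of_subset_of_nonneg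
            (Finset.subset_univ _) fun x _ _ => sq_nonneg _
        _ = (U * Uᵀ) i i := key.symm
    rw [hPii]
    nlinarith [hge, sq_nonneg ((U * Uᵀ) i i - 1)]
  have hFU : F2 (Matrix.diagonal σ * U) = ∑ i, σ i ^ 2 * t i := by
    simp only [F2, ht]
    refine Finset.sum_congr rfl fun i _ => ?_
    rw [Finset.mul_sum]
    refine Finset.sum_congr rfl fun j _ => ?_
    rw [Matrix.diagonal_mul, mul_pow]
  -- rearrangement
  set a : Fin r → ℝ := fun i => σ i ^ 2 with haa
  have ha0 : ∀ i, 0 ≤ a i := fun i => sq_nonneg _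
  have ha_anti : ∀ i j : Fin r, i ≤ j → a j ≤ a i := by
    intro i j hij
    simp only [haa]
    exact pow_le_pow_left₀ (hσ0 j) (hσanti hij) 2
  set κ : Fin r := ⟨k - 1, by omega⟩ with hκ
  set S₁ : Finset (Fin r) := Finset.univ.filter (fun i : Fin r => (i : ℕ) < k) with hS₁
  set S₂ : Finset (Fin r) := Finset.univ.filter (fun i : Fin r => ¬ (i : ℕ) < k) with hS₂
  have hcard1 : S₁.card = k := by
    have himg : S₁ = Finset.univ.image (Fin.castLE hkr.le) := by
      ext x
      simp only [hS₁, Finset.mem_filter, Finset.mem_univ, true_and, Finset.mem_image]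
      constructor
      · intro hx
        exact ⟨⟨x.1, hx⟩, Fin.ext rfl⟩
      · rintro ⟨y, -, rfl⟩
        exact y.2
    rw [himg, Finset.card_image_of_injective _ (Fin.castLE_injective _), Finset.card_univ,
      Fintype.card_fin]
  have hcard2 : S₂.card = r - k := by
    have := Finset.card_filter_add_card_filter_not
      (s := (Finset.univ : Finset (Fin r))) (p := fun i : Fin r => (i : ℕ) < k)
    rw [Finset.card_univ, Fintype.card_fin] at this
    rw [hS₂]
    rw [hS₁] at hcard1
    omega
  have hsplitsum : ∀ f : Fin r → ℝ, ∑ i ∈ S₁, f i + ∑ i ∈ S₂, f i = ∑ i, f i := by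
    intro f
    rw [hS₁, hS₂]
    exact Finset.sum_filter_add_sum_filter_not _ _ _
  have h21 : ∑ i ∈ S₂, (1 - t i) = ∑ i ∈ S₁, t i := by
    rw [Finset.sum_sub_distrib, Finset.sum_const, hcard2, nsmul_eq_mul, mul_one]
    have := hsplitsum t
    rw [htsum] at this
    linarith
  have hb1 : ∑ i ∈ S₂, a i * (1 - t i) ≤ a κ * ∑ i ∈ S₂, (1 - t i) := by
    rw [Finset.mul_sum]
    refine Finset.sum_le_sum fun i hi => ?_
    have hik : k ≤ (i : ℕ) := by
      have := Finset.mem_filter.1 hi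
      omega
    have hκi : κ ≤ i := by
      rw [Fin.le_def]; simp only [hκ]; omega
    have h1t : 0 ≤ 1 - t i := by linarith [ht1 i]
    exact mul_le_mul_of_nonneg_right (ha_anti κ i hκi) h1t
  have hb2 : a κ * ∑ i ∈ S₁, t i ≤ ∑ i ∈ S₁, a i * t i := by
    rw [Finset.mul_sum]
    refine Finset.sum_le_sum fun i hi => ?_
    have hik : (i : ℕ) < k := by
      have := Finset.mem_filter.1 hi
      exact this.2
    have hiκ : i ≤ κ := by
      rw [Fin.le_def]; simp only [hκ]; omega
    exact mul_le_mul_of_nonneg_right (ha_anti i κ hiκ) (ht0 i)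
  have hgoal : ∑ j : Fin r, (if (j : ℕ) < k then 0 else σ j) ^ 2 = ∑ i ∈ S₂, a i := by
    rw [hS₂, Finset.sum_filter]
    refine Finset.sum_congr rfl fun i _ => ?_
    by_cases h : (i : ℕ) < k <;> simp [h, haa]
  have hexp : ∑ i ∈ S₂, a i = ∑ i ∈ S₂, a i * t i + ∑ i ∈ S₂, a i * (1 - t i) := by
    rw [← Finset.sum_add_distrib]
    exact Finset.sum_congr rfl fun i _ => by ring
  have hfin : ∑ i, a i * t i = ∑ i ∈ S₁, a i * t i + ∑ i ∈ S₂, a i * t i :=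
    (hsplitsum _).symm
  rw [hgoal]
  have : F2 (Matrix.diagonal σ * U) ≤ F2 (Matrix.diagonal σ - C) := by rw [← h2]; exact h1
  rw [hFU] at this
  have : ∑ i, a i * t i ≤ F2 (Matrix.diagonal σ - C) := this
  have h21' : a κ * ∑ i ∈ S₂, (1 - t i) = a κ * ∑ i ∈ S₁, t i := by rw [h21]
  linarith

theorem stmt5 {m n l k : ℕ} (hk : 1 ≤ k) (hkl : k ≤ l)
    (A : Matrix (Fin m) (Fin n) ℝ) (Q : Matrix (Fin m) (Fin l) ℝ) (hQ : Qᵀ * Q = 1)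
    (W : Matrix (Fin l) (Fin (min l n)) ℝ) (V : Matrix (Fin n) (Fin (min l n)) ℝ)
    (σ : Fin (min l n) → ℝ) (hW : Wᵀ * W = 1) (hV : Vᵀ * V = 1)
    (hσanti : Antitone σ) (hσ0 : ∀ j, 0 ≤ σ j)
    (hQA : Qᵀ * A = W * Matrix.diagonal σ * Vᵀ)
    (Bk : Matrix (Fin l) (Fin n) ℝ)
    (hBk : Bk = W * Matrix.diagonal (fun j : Fin (min l n) => if (j : ℕ) < k then σ j else 0) * Vᵀ)
    (B : Matrix (Fin l) (Fin n) ℝ) (hB : B.rank ≤ k) :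
    frobNorm (A - Q * Bk) ≤ frobNorm (A - Q * B) := by
  have hQRt : (A - Q * (Qᵀ * A))ᵀ * Q = 0 := by
    have hQR : Qᵀ * (A - Q * (Qᵀ * A)) = 0 := by
      rw [Matrix.mul_sub, ← Matrix.mul_assoc, hQ, Matrix.one_mul, sub_self]
    have := congrArg Matrix.transpose hQR
    simpa [Matrix.transpose_mul] using this
  have hdecomp : ∀ X : Matrix (Fin l) (Fin n) ℝ,
      F2 (A - Q * X) = F2 (A - Q * (Qᵀ * A)) + F2 (Qᵀ * A - X) := by
    intro X
    have h1 : A - Q * X = (A - Q * (Qᵀ * A)) + Q * (Qᵀ * A - X) := by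
      rw [Matrix.mul_sub]; abel
    rw [h1, F2_pythagoras _ _ (by rw [← Matrix.mul_assoc, hQRt, Matrix.zero_mul]),
      F2_orth_mul _ _ hQ]
  have hMBk : Qᵀ * A - Bk
      = W * Matrix.diagonal (fun j : Fin (min l n) => if (j : ℕ) < k then 0 else σ j) * Vᵀ := by
    rw [hQA, hBk, ← Matrix.sub_mul, ← Matrix.mul_sub, Matrix.diagonal_sub]
    have hfun : (fun j : Fin (min l n) => σ j - if (j : ℕ) < k then σ j else 0)
        = (fun j : Fin (min l n) => if (j : ℕ) < k then 0 else σ j) := by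
      funext j
      by_cases h : (j : ℕ) < k <;> simp [h]
    rw [hfun]
  have e1 : F2 (Qᵀ * A - Bk)
      = ∑ j : Fin (min l n), (if (j : ℕ) < k then 0 else σ j) ^ 2 := by
    rw [hMBk, F2_WDV _ _ _ hW hV]
  have e2 : Wᵀ * (Qᵀ * A - B) * V = Matrix.diagonal σ - Wᵀ * B * V := by
    rw [Matrix.mul_sub, Matrix.sub_mul]
    congr 1
    rw [hQA]
    simp only [Matrix.mul_assoc]
    rw [hV, Matrix.mul_one, ← Matrix.mul_assoc, hW, Matrix.one_mul]
  have hrk : (Wᵀ * B * V).rank ≤ k :=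
    le_trans (le_trans (Matrix.rank_mul_le_left _ _) (Matrix.rank_mul_le_right Wᵀ B)) hB
  have e3 : F2 (Matrix.diagonal σ - Wᵀ * B * V) ≤ F2 (Qᵀ * A - B) := by
    rw [← e2]
    calc F2 (Wᵀ * (Qᵀ * A - B) * V) ≤ F2 (Wᵀ * (Qᵀ * A - B)) := F2_mul_orth _ _ hV
      _ = F2 ((Wᵀ * (Qᵀ * A - B))ᵀ) := (F2_transpose _).symm
      _ = F2 ((Qᵀ * A - B)ᵀ * W) := by rw [Matrix.transpose_mul, Matrix.transpose_transpose]
      _ ≤ F2 ((Qᵀ * A - B)ᵀ) := F2_mul_orth _ _ hW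
      _ = F2 (Qᵀ * A - B) := F2_transpose _
  have hcore := core_EY hk σ hσanti hσ0 (Wᵀ * B * V) hrk
  have hle : F2 (A - Q * Bk) ≤ F2 (A - Q * B) := by
    rw [hdecomp Bk, hdecomp B, e1]
    linarith
  exact Real.sqrt_le_sqrt hle
end

section
/- Let Q be an m×ℓ matrix with orthonormal columns, A an m×n matrix, A_k the rank-k truncated SVD of A, and B_k the rank-k truncated SVD of QᵀA. Then ‖A − A_k‖_F ≤ ‖A − QB_k‖_F ≤ ‖A − QQᵀA_k‖_F. -/
open Matrix

set_option linter.unusedSectionVars false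
set_option maxHeartbeats 800000

section helpers
variable {α β γ : Type*} [Fintype α] [Fintype β] [Fintype γ]

lemma sum_sq_eq_trace (X : Matrix α β ℝ) :
    ∑ i, ∑ j, (X i j) ^ 2 = Matrix.trace (Xᵀ * X) := by
  simp only [Matrix.trace, Matrix.diag, Matrix.mul_apply, Matrix.transpose_apply, sq]
  exact Finset.sum_comm

lemma trace_gram_nonneg (X : Matrix α β ℝ) : 0 ≤ Matrix.trace (Xᵀ * X) := by
  rw [← sum_sq_eq_trace]; positivity

lemma gram_diag_nonneg (X : Matrix α β ℝ) (i : β) : 0 ≤ (Xᵀ * X) i i := by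
  simp only [Matrix.mul_apply, Matrix.transpose_apply]
  exact Finset.sum_nonneg fun j _ => mul_self_nonneg _

lemma trace_conj [DecidableEq β] (V : Matrix α β ℝ) (M : Matrix β β ℝ) (h : Vᵀ * V = 1) :
    Matrix.trace (V * M * Vᵀ) = Matrix.trace M := by
  rw [Matrix.trace_mul_comm, ← Matrix.mul_assoc, h, Matrix.one_mul]

/-- trace splits along an orthonormal-column matrix and its complement. -/
lemma trace_split [DecidableEq γ]
    (N : Matrix α β ℝ) (X : Matrix β γ ℝ) (hX : Xᵀ * X = 1) :
    Matrix.trace (Nᵀ * N) = Matrix.trace ((N * X)ᵀ * (N * X)) +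
      Matrix.trace ((N - N * (X * Xᵀ))ᵀ * (N - N * (X * Xᵀ))) := by
  set S := Nᵀ * N with hS
  set P := X * Xᵀ with hP
  set B := N * P with hB
  have hPP : P * P = P := by
    rw [hP, Matrix.mul_assoc, ← Matrix.mul_assoc Xᵀ X, hX, Matrix.one_mul]
  have hPt : Pᵀ = P := by rw [hP, Matrix.transpose_mul, Matrix.transpose_transpose]
  have t1 : Matrix.trace ((N * X)ᵀ * (N * X)) = Matrix.trace (S * P) := by
    rw [Matrix.transpose_mul,
      show Xᵀ * Nᵀ * (N * X) = Xᵀ * (Nᵀ * N) * X by simp [Matrix.mul_assoc],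
      Matrix.trace_mul_cycle, ← hS, ← hP, Matrix.trace_mul_comm]
  have t3 : Matrix.trace (Nᵀ * B) = Matrix.trace (S * P) := by
    rw [hB, ← Matrix.mul_assoc, ← hS]
  have t4 : Matrix.trace (Bᵀ * N) = Matrix.trace (S * P) := by
    rw [← Matrix.trace_transpose (Bᵀ * N), Matrix.transpose_mul, Matrix.transpose_transpose, t3]
  have t2 : Matrix.trace (Bᵀ * B) = Matrix.trace (S * P) := by
    rw [hB, Matrix.transpose_mul, hPt,
      show P * Nᵀ * (N * P) = P * (Nᵀ * N) * P by simp [Matrix.mul_assoc],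
      Matrix.trace_mul_cycle, hPP, ← hS, Matrix.trace_mul_comm]
  have expand : (N - B)ᵀ * (N - B) = Nᵀ * N - Nᵀ * B - (Bᵀ * N - Bᵀ * B) := by
    rw [Matrix.transpose_sub, Matrix.sub_mul, Matrix.mul_sub, Matrix.mul_sub]
  rw [expand, Matrix.trace_sub, Matrix.trace_sub, Matrix.trace_sub, t1, t2, t3, t4, ← hS]
  ring

/-- contraction: right-multiplying by a matrix with orthonormal columns decreases
the Frobenius norm. -/
lemma trace_contraction [DecidableEq γ] (N : Matrix α β ℝ) (X : Matrix β γ ℝ)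
    (hX : Xᵀ * X = 1) :
    Matrix.trace ((N * X)ᵀ * (N * X)) ≤ Matrix.trace (Nᵀ * N) := by
  have h := trace_split N X hX
  have h2 := trace_gram_nonneg (N - N * (X * Xᵀ))
  linarith

/-- projection: left-multiplying by `Qᵀ` with `QᵀQ = 1` decreases the Frobenius norm. -/
lemma trace_proj_le [DecidableEq β] (Q : Matrix α β ℝ) (N : Matrix α γ ℝ) (hQ : Qᵀ * Q = 1) :
    Matrix.trace ((Qᵀ * N)ᵀ * (Qᵀ * N)) ≤ Matrix.trace (Nᵀ * N) := by
  have h := trace_split Nᵀ Q hQ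
  have h2 := trace_gram_nonneg (Nᵀ - Nᵀ * (Q * Qᵀ))
  have e1 : Matrix.trace (Nᵀᵀ * Nᵀ) = Matrix.trace (Nᵀ * N) := by
    rw [Matrix.transpose_transpose, Matrix.trace_mul_comm]
  have e2 : Matrix.trace ((Nᵀ * Q)ᵀ * (Nᵀ * Q)) = Matrix.trace ((Qᵀ * N)ᵀ * (Qᵀ * N)) := by
    rw [Matrix.transpose_mul, Matrix.transpose_transpose, Matrix.transpose_mul,
      Matrix.transpose_transpose, Matrix.trace_mul_comm]
  rw [e1, e2] at h
  linarith

/-- expansion of the squared Frobenius norm of a difference. -/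
lemma trace_sub_expand (X Y : Matrix α β ℝ) :
    Matrix.trace ((X - Y)ᵀ * (X - Y)) =
      Matrix.trace (Xᵀ * X) - 2 * Matrix.trace (Yᵀ * X) + Matrix.trace (Yᵀ * Y) := by
  have e : (X - Y)ᵀ * (X - Y) = Xᵀ * X - Xᵀ * Y - (Yᵀ * X - Yᵀ * Y) := by
    rw [Matrix.transpose_sub, Matrix.sub_mul, Matrix.mul_sub, Matrix.mul_sub]
  have e2 : Matrix.trace (Xᵀ * Y) = Matrix.trace (Yᵀ * X) := by
    rw [← Matrix.trace_transpose (Xᵀ * Y), Matrix.transpose_mul, Matrix.transpose_transpose]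
  rw [e, Matrix.trace_sub, Matrix.trace_sub, Matrix.trace_sub, e2]
  ring

/-- trace of a product sandwiched by SVD-like factors. -/
lemma trace_svd_prod [DecidableEq β] [DecidableEq γ]
    (P : Matrix α β ℝ) (R : Matrix γ β ℝ) (d₁ d₂ : β → ℝ)
    (hP : Pᵀ * P = 1) (hR : Rᵀ * R = 1) :
    Matrix.trace ((P * Matrix.diagonal d₁ * Rᵀ)ᵀ * (P * Matrix.diagonal d₂ * Rᵀ)) =
      ∑ j, d₁ j * d₂ j := by
  have e : (P * Matrix.diagonal d₁ * Rᵀ)ᵀ * (P * Matrix.diagonal d₂ * Rᵀ)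
      = R * (Matrix.diagonal d₁ * Matrix.diagonal d₂) * Rᵀ := by
    rw [Matrix.transpose_mul, Matrix.transpose_mul, Matrix.transpose_transpose,
      Matrix.diagonal_transpose]
    simp only [Matrix.mul_assoc]
    rw [← Matrix.mul_assoc Pᵀ P, hP, Matrix.one_mul]
  rw [e, trace_conj R _ hR, Matrix.diagonal_mul_diagonal, Matrix.trace_diagonal]

/-- Gram matrix MᵀM of an SVD-like product. -/
lemma gram_svd [DecidableEq β]
    (P : Matrix α β ℝ) (R : Matrix γ β ℝ) (d : β → ℝ) (hP : Pᵀ * P = 1) :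
    (P * Matrix.diagonal d * Rᵀ)ᵀ * (P * Matrix.diagonal d * Rᵀ)
      = R * Matrix.diagonal (fun j => d j ^ 2) * Rᵀ := by
  rw [Matrix.transpose_mul, Matrix.transpose_mul, Matrix.transpose_transpose,
    Matrix.diagonal_transpose]
  simp only [Matrix.mul_assoc]
  rw [← Matrix.mul_assoc Pᵀ P, hP, Matrix.one_mul,
    ← Matrix.mul_assoc (Matrix.diagonal d) (Matrix.diagonal d) Rᵀ,
    Matrix.diagonal_mul_diagonal]
  simp only [Matrix.mul_assoc, sq]

/-- trace with a diagonal matrix in the middle, as a weighted sum of squared row norms. -/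
lemma trace_diag_middle [DecidableEq β] (μ : β → ℝ) (G : Matrix β γ ℝ) :
    Matrix.trace (Gᵀ * Matrix.diagonal μ * G) = ∑ i, μ i * ∑ a, (G i a) ^ 2 := by
  rw [Matrix.trace_mul_cycle]
  simp only [Matrix.trace, Matrix.diag]
  simp only [Matrix.mul_diagonal]
  simp only [Matrix.mul_apply, Matrix.transpose_apply]
  refine Finset.sum_congr rfl fun i _ => ?_
  rw [mul_comm]
  congr 1
  exact Finset.sum_congr rfl fun a _ => (sq (G i a)).symm

/-- squared row norms of `Vᵀ * X` are at most 1 when both have orthonormal columns. -/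
lemma row_norm_le_one [DecidableEq α] [DecidableEq β] [DecidableEq γ]
    (V : Matrix α β ℝ) (X : Matrix α γ ℝ) (hV : Vᵀ * V = 1) (hX : Xᵀ * X = 1) (i : β) :
    ∑ a, ((Vᵀ * X) i a) ^ 2 ≤ 1 := by
  have e1 : ∑ a, ((Vᵀ * X) i a) ^ 2 = ((Vᵀ * X) * (Vᵀ * X)ᵀ) i i := by
    simp only [Matrix.mul_apply, Matrix.transpose_apply, sq]
  have e2 : (Vᵀ * X) * (Vᵀ * X)ᵀ = Vᵀ * (X * Xᵀ) * V := by
    rw [Matrix.transpose_mul, Matrix.transpose_transpose]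
    simp only [Matrix.mul_assoc]
  set E : Matrix α α ℝ := 1 - X * Xᵀ with hE
  have hEt : Eᵀ = E := by
    rw [hE, Matrix.transpose_sub, Matrix.transpose_one, Matrix.transpose_mul,
      Matrix.transpose_transpose]
  have hEE : E * E = E := by
    rw [hE]
    have h1 : X * Xᵀ * (X * Xᵀ) = X * Xᵀ := by
      rw [Matrix.mul_assoc, ← Matrix.mul_assoc Xᵀ X, hX, Matrix.one_mul]
    simp only [Matrix.sub_mul, Matrix.mul_sub, Matrix.one_mul, Matrix.mul_one, h1]
    abel
  have key : (E * V)ᵀ * (E * V) = Vᵀ * E * V := by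
    rw [Matrix.transpose_mul, hEt, Matrix.mul_assoc, ← Matrix.mul_assoc E E V, hEE,
      ← Matrix.mul_assoc]
  have h3 : 0 ≤ (Vᵀ * E * V) i i := by rw [← key]; exact gram_diag_nonneg _ i
  have h4 : Vᵀ * E * V = 1 - Vᵀ * (X * Xᵀ) * V := by
    rw [hE, Matrix.mul_sub, Matrix.mul_one, Matrix.sub_mul, hV, Matrix.mul_assoc]
  rw [h4] at h3
  have h5 : ((1 : Matrix β β ℝ) - Vᵀ * (X * Xᵀ) * V) i i
      = 1 - (Vᵀ * (X * Xᵀ) * V) i i := by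
    simp [Matrix.sub_apply, Matrix.one_apply_eq]
  rw [h5] at h3
  rw [e1, e2]
  linarith

end helpers

section helpers2
variable {α β γ : Type*} [Fintype α] [Fintype β] [Fintype γ]

lemma gram_conj (A : Matrix α β ℝ) (X : Matrix β γ ℝ) :
    (A * X)ᵀ * (A * X) = Xᵀ * (Aᵀ * A) * X := by
  rw [Matrix.transpose_mul]; simp only [Matrix.mul_assoc]

lemma proj_conj_eq [DecidableEq α] [DecidableEq γ] (X : Matrix α γ ℝ) (hX : Xᵀ * X = 1)
    (V : Matrix α β ℝ) :
    ((1 - X * Xᵀ) * V)ᵀ * ((1 - X * Xᵀ) * V) = Vᵀ * (1 - X * Xᵀ) * V := by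
  set E : Matrix α α ℝ := 1 - X * Xᵀ with hE
  have hEt : Eᵀ = E := by
    rw [hE, Matrix.transpose_sub, Matrix.transpose_one, Matrix.transpose_mul,
      Matrix.transpose_transpose]
  have hEE : E * E = E := by
    rw [hE]
    have h1 : X * Xᵀ * (X * Xᵀ) = X * Xᵀ := by
      rw [Matrix.mul_assoc, ← Matrix.mul_assoc Xᵀ X, hX, Matrix.one_mul]
    simp only [Matrix.sub_mul, Matrix.mul_sub, Matrix.one_mul, Matrix.mul_one, h1]
    abel
  rw [Matrix.transpose_mul, hEt, Matrix.mul_assoc, ← Matrix.mul_assoc E E V, hEE,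
    ← Matrix.mul_assoc]

/-- Pythagoras/orthogonality identity for approximations of the form Q*Z. -/
lemma trace_QZ [DecidableEq β] (Q : Matrix α β ℝ) (hQ : Qᵀ * Q = 1)
    (A : Matrix α γ ℝ) (Z : Matrix β γ ℝ) :
    Matrix.trace ((A - Q * Z)ᵀ * (A - Q * Z)) =
      Matrix.trace (Aᵀ * A) - Matrix.trace ((Qᵀ * A)ᵀ * (Qᵀ * A)) +
        Matrix.trace ((Qᵀ * A - Z)ᵀ * (Qᵀ * A - Z)) := by
  have e1 : (Q * Z)ᵀ * (Q * Z) = Zᵀ * Z := by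
    rw [Matrix.transpose_mul]
    rw [show Zᵀ * Qᵀ * (Q * Z) = Zᵀ * (Qᵀ * Q) * Z by simp only [Matrix.mul_assoc]]
    rw [hQ, Matrix.mul_one]
  have e2 : (Q * Z)ᵀ * A = Zᵀ * (Qᵀ * A) := by
    rw [Matrix.transpose_mul]; simp only [Matrix.mul_assoc]
  have e3 : (Qᵀ * A)ᵀ * (Qᵀ * A) = Aᵀ * (Q * Qᵀ) * A := by
    rw [Matrix.transpose_mul, Matrix.transpose_transpose]; simp only [Matrix.mul_assoc]
  rw [trace_sub_expand A (Q * Z), trace_sub_expand (Qᵀ * A) Z, e1, e2]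
  have e4 : Zᵀ * (Qᵀ * A) = Zᵀ * Qᵀ * A := by simp only [Matrix.mul_assoc]
  ring

lemma proj_transpose2 {α γ : Type*} [Fintype α] [Fintype γ] [DecidableEq α]
    (X : Matrix α γ ℝ) : (1 - X * Xᵀ)ᵀ = 1 - X * Xᵀ := by
  rw [Matrix.transpose_sub, Matrix.transpose_one, Matrix.transpose_mul,
    Matrix.transpose_transpose]

lemma proj_idem2 {α γ : Type*} [Fintype α] [Fintype γ] [DecidableEq α] [DecidableEq γ]
    (X : Matrix α γ ℝ) (hX : Xᵀ * X = 1) :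
    (1 - X * Xᵀ) * (1 - X * Xᵀ) = 1 - X * Xᵀ := by
  have h1 : X * Xᵀ * (X * Xᵀ) = X * Xᵀ := by
    rw [Matrix.mul_assoc, ← Matrix.mul_assoc Xᵀ X, hX, Matrix.one_mul]
  simp only [Matrix.sub_mul, Matrix.mul_sub, Matrix.one_mul, Matrix.mul_one, h1]
  abel

lemma sum_tail {r k : ℕ} (g : Fin r → ℝ) :
    ∑ j : Fin r, (if (j : ℕ) < k then 0 else g j) =
      ∑ j, g j - ∑ j : Fin r, (if (j : ℕ) < k then g j else 0) := by
  rw [← Finset.sum_sub_distrib]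
  refine Finset.sum_congr rfl fun j _ => ?_
  by_cases h : (j : ℕ) < k <;> simp [h]

end helpers2

section selector
variable {p q : ℕ}

/-- column-selection matrix associated to an injection `e`. -/
def selMat (e : Fin p → Fin q) : Matrix (Fin q) (Fin p) ℝ :=
  Matrix.of fun i j => if i = e j then 1 else 0

lemma selMat_orthonormal {e : Fin p → Fin q} (he : Function.Injective e) :
    (selMat e)ᵀ * selMat e = 1 := by
  ext a b
  simp only [Matrix.mul_apply, Matrix.transpose_apply, selMat, Matrix.of_apply,
    Matrix.one_apply, ite_mul, one_mul, zero_mul]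
  rw [Finset.sum_ite_eq' Finset.univ (e a) (fun i => if i = e b then (1:ℝ) else 0)]
  simp [he.eq_iff, eq_comm]

lemma selMat_diag (e : Fin p → Fin q) (he : Function.Injective e) (d : Fin q → ℝ) :
    (selMat e)ᵀ * Matrix.diagonal d * selMat e = Matrix.diagonal (fun j => d (e j)) := by
  ext a b
  simp only [Matrix.mul_apply, Matrix.transpose_apply, selMat, Matrix.of_apply,
    Matrix.diagonal_apply, ite_mul, one_mul, zero_mul, mul_ite, mul_one, mul_zero,
    Finset.sum_ite_eq', Finset.sum_ite_eq, Finset.mem_univ, if_true]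
  simp only [he.eq_iff, eq_comm]
  split
  · next h => rw [h]
  · rfl

lemma diag_mul_selMat_eq_zero (e : Fin p → Fin q) (d : Fin q → ℝ)
    (hd : ∀ j, d (e j) = 0) : Matrix.diagonal d * selMat e = 0 := by
  ext i b
  simp only [Matrix.mul_apply, Matrix.diagonal_apply, selMat, Matrix.of_apply,
    ite_mul, one_mul, zero_mul, mul_ite, mul_one, mul_zero, Matrix.zero_apply,
    Finset.sum_ite_eq', Finset.sum_ite_eq, Finset.mem_univ, if_true]
  split
  · next h => rw [h]; exact hd b
  · rfl

end selector

lemma sum_ite_lt {r k : ℕ} (h : k ≤ r) (f : Fin r → ℝ) :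
    ∑ j : Fin r, (if (j : ℕ) < k then f j else 0) = ∑ a : Fin k, f (Fin.castLE h a) := by
  set g : ℕ → ℝ := fun j => if hj : j < r then f ⟨j, hj⟩ else 0 with hg
  have l1 : ∑ j : Fin r, (if (j : ℕ) < k then f j else 0)
      = ∑ j ∈ Finset.range r, (if j < k then g j else 0) := by
    rw [← Fin.sum_univ_eq_sum_range]
    refine Finset.sum_congr rfl fun j _ => ?_
    by_cases hj : (j : ℕ) < k <;> simp [hj, hg, j.isLt]
  have l2 : ∑ a : Fin k, f (Fin.castLE h a) = ∑ a ∈ Finset.range k, g a := by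
    rw [← Fin.sum_univ_eq_sum_range]
    refine Finset.sum_congr rfl fun a _ => ?_
    have : (a : ℕ) < r := lt_of_lt_of_le a.isLt h
    simp [hg, this]
    rfl
  rw [l1, l2, ← Finset.sum_filter]
  congr 1
  ext j
  simp only [Finset.mem_filter, Finset.mem_range]
  omega

lemma exch_max {n k : ℕ} (hk : k < n) (μ t : Fin n → ℝ) (hμ : Antitone μ)
    (hμ0 : ∀ i, 0 ≤ μ i) (ht0 : ∀ i, 0 ≤ t i) (ht1 : ∀ i, t i ≤ 1)
    (hts : ∑ i, t i ≤ k) :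
    ∑ i, μ i * t i ≤ ∑ i : Fin n, (if (i : ℕ) < k then μ i else 0) := by
  set κ : Fin n := ⟨k, hk⟩ with hκ
  have key : ∀ i : Fin n, μ i * t i - (if (i : ℕ) < k then μ i else 0)
      ≤ μ κ * (t i - (if (i : ℕ) < k then 1 else 0)) := by
    intro i
    by_cases h : (i : ℕ) < k
    · simp only [h, if_true]
      have h1 : μ κ ≤ μ i := hμ (by rw [Fin.le_def]; simpa [hκ] using h.le)
      nlinarith [ht1 i, hμ0 κ]
    · simp only [h, if_false]
      have h1 : μ i ≤ μ κ := hμ (by rw [Fin.le_def]; simp [hκ]; omega)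
      nlinarith [ht0 i]
  have hsum := Finset.sum_le_sum (s := Finset.univ) (fun i _ => key i)
  rw [Finset.sum_sub_distrib, ← Finset.mul_sum, Finset.sum_sub_distrib] at hsum
  have hone : ∑ i : Fin n, (if (i : ℕ) < k then (1:ℝ) else 0) = k := by
    rw [sum_ite_lt hk.le (fun _ => (1:ℝ))]
    simp
  rw [hone] at hsum
  nlinarith [hμ0 κ]

lemma exch_min {r k : ℕ} (hk : k < r) (μ t : Fin r → ℝ) (hμ : Antitone μ)
    (hμ0 : ∀ i, 0 ≤ μ i) (ht0 : ∀ i, 0 ≤ t i) (ht1 : ∀ i, t i ≤ 1)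
    (hts : (r : ℝ) - k ≤ ∑ i, t i) :
    ∑ i : Fin r, (if (i : ℕ) < k then 0 else μ i) ≤ ∑ i, μ i * t i := by
  set κ : Fin r := ⟨k, hk⟩ with hκ
  have key : ∀ i : Fin r, μ κ * (t i - (if (i : ℕ) < k then 0 else 1))
      ≤ μ i * t i - (if (i : ℕ) < k then 0 else μ i) := by
    intro i
    by_cases h : (i : ℕ) < k
    · simp only [h, if_true]
      have h1 : μ κ ≤ μ i := hμ (by rw [Fin.le_def]; simpa [hκ] using h.le)
      nlinarith [ht0 i]
    · simp only [h, if_false]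
      have h1 : μ i ≤ μ κ := hμ (by rw [Fin.le_def]; simp [hκ]; omega)
      nlinarith [ht1 i]
  have hsum := Finset.sum_le_sum (s := Finset.univ) (fun i _ => key i)
  rw [← Finset.mul_sum, Finset.sum_sub_distrib, Finset.sum_sub_distrib] at hsum
  have hone : ∑ i : Fin r, (if (i : ℕ) < k then (0:ℝ) else 1) = (r : ℝ) - k := by
    have : ∀ i : Fin r, (if (i : ℕ) < k then (0:ℝ) else 1)
        = 1 - (if (i : ℕ) < k then (1:ℝ) else 0) := by
      intro i; by_cases h : (i : ℕ) < k <;> simp [h]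
    rw [Finset.sum_congr rfl fun i _ => this i, Finset.sum_sub_distrib,
      sum_ite_lt hk.le (fun _ => (1:ℝ))]
    simp
  rw [hone] at hsum
  nlinarith [hμ0 κ]

theorem stmt7 {m n l k : ℕ} (hmn : n ≤ m) (hk : 1 ≤ k) (hkl : k ≤ l) (hkn : k < n)
    (A Ak U : Matrix (Fin m) (Fin n) ℝ) (V : Matrix (Fin n) (Fin n) ℝ)
    (σ : Fin n → ℝ) (hU : Uᵀ * U = 1) (hV : Vᵀ * V = 1)
    (hσanti : Antitone σ) (hσ0 : ∀ j, 0 ≤ σ j)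
    (hA : A = U * Matrix.diagonal σ * Vᵀ)
    (hAk : Ak = U * Matrix.diagonal (fun j : Fin n => if (j : ℕ) < k then σ j else 0) * Vᵀ)
    (Q : Matrix (Fin m) (Fin l) ℝ) (hQ : Qᵀ * Q = 1)
    (W : Matrix (Fin l) (Fin (min l n)) ℝ) (V' : Matrix (Fin n) (Fin (min l n)) ℝ)
    (σ' : Fin (min l n) → ℝ) (hW : Wᵀ * W = 1) (hV' : V'ᵀ * V' = 1)
    (hσ'anti : Antitone σ') (hσ'0 : ∀ j, 0 ≤ σ' j)
    (hQA : Qᵀ * A = W * Matrix.diagonal σ' * V'ᵀ)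
    (Bk : Matrix (Fin l) (Fin n) ℝ)
    (hBk : Bk = W * Matrix.diagonal (fun j : Fin (min l n) => if (j : ℕ) < k then σ' j else 0) * V'ᵀ) :
    frobNorm (A - Ak) ≤ frobNorm (A - Q * Bk) ∧
    frobNorm (A - Q * Bk) ≤ frobNorm (A - Q * (Qᵀ * Ak)) := by
  have hkr : k ≤ min l n := le_min hkl hkn.le
  have sqanti : Antitone (fun j : Fin n => σ j ^ 2) :=
    fun i j h => pow_le_pow_left₀ (hσ0 j) (hσanti h) 2
  have sqanti' : Antitone (fun j : Fin (min l n) => σ' j ^ 2) :=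
    fun i j h => pow_le_pow_left₀ (hσ'0 j) (hσ'anti h) 2
  -- basic trace computations
  have tA : Matrix.trace (Aᵀ * A) = ∑ j, σ j ^ 2 := by
    rw [hA, trace_svd_prod U V σ σ hU hV]
    exact Finset.sum_congr rfl fun j _ => (sq (σ j)).symm
  have tM : Matrix.trace ((Qᵀ * A)ᵀ * (Qᵀ * A)) = ∑ j, σ' j ^ 2 := by
    rw [hQA, trace_svd_prod W V' σ' σ' hW hV']
    exact Finset.sum_congr rfl fun j _ => (sq (σ' j)).symm
  have dAk : A - Ak
      = U * Matrix.diagonal (fun j : Fin n => if (j : ℕ) < k then 0 else σ j) * Vᵀ := by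
    rw [hA, hAk, ← Matrix.sub_mul, ← Matrix.mul_sub, Matrix.diagonal_sub]
    have hfun : (fun j : Fin n => σ j - if (j : ℕ) < k then σ j else 0)
        = fun j : Fin n => if (j : ℕ) < k then 0 else σ j := by
      funext i; by_cases h : (i : ℕ) < k <;> simp [h]
    rw [hfun]
  have fAk : Matrix.trace ((A - Ak)ᵀ * (A - Ak))
      = ∑ j : Fin n, (if (j : ℕ) < k then 0 else σ j ^ 2) := by
    rw [dAk, trace_svd_prod U V _ _ hU hV]
    refine Finset.sum_congr rfl fun j _ => ?_
    by_cases h : (j : ℕ) < k <;> simp [h, sq]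
  have dBk : Qᵀ * A - Bk
      = W * Matrix.diagonal (fun j : Fin (min l n) => if (j : ℕ) < k then 0 else σ' j) * V'ᵀ := by
    rw [hQA, hBk, ← Matrix.sub_mul, ← Matrix.mul_sub, Matrix.diagonal_sub]
    have hfun : (fun j : Fin (min l n) => σ' j - if (j : ℕ) < k then σ' j else 0)
        = fun j : Fin (min l n) => if (j : ℕ) < k then 0 else σ' j := by
      funext i; by_cases h : (i : ℕ) < k <;> simp [h]
    rw [hfun]
  have fBk : Matrix.trace ((Qᵀ * A - Bk)ᵀ * (Qᵀ * A - Bk))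
      = ∑ j : Fin (min l n), (if (j : ℕ) < k then 0 else σ' j ^ 2) := by
    rw [dBk, trace_svd_prod W V' _ _ hW hV']
    refine Finset.sum_congr rfl fun j _ => ?_
    by_cases h : (j : ℕ) < k <;> simp [h, sq]
  -- Gram matrices
  have gA : Aᵀ * A = V * Matrix.diagonal (fun j => σ j ^ 2) * Vᵀ := by
    rw [hA]; exact gram_svd U V σ hU
  have gM : (Qᵀ * A)ᵀ * (Qᵀ * A) = V' * Matrix.diagonal (fun j => σ' j ^ 2) * V'ᵀ := by
    rw [hQA]; exact gram_svd W V' σ' hW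
  -- ================= Core inequality 1 =================
  have core1 : ∑ j : Fin (min l n), (if (j : ℕ) < k then σ' j ^ 2 else 0)
      ≤ ∑ j : Fin n, (if (j : ℕ) < k then σ j ^ 2 else 0) := by
    have he₁ : Function.Injective (Fin.castLE hkr) := Fin.castLE_injective hkr
    obtain ⟨P₁, hP₁def⟩ : ∃ P : Matrix (Fin (min l n)) (Fin k) ℝ,
        P = selMat (Fin.castLE hkr) := ⟨_, rfl⟩
    have hP₁ : P₁ᵀ * P₁ = 1 := by rw [hP₁def]; exact selMat_orthonormal he₁
    obtain ⟨X₁, hX₁def⟩ : ∃ X : Matrix (Fin n) (Fin k) ℝ, X = V' * P₁ := ⟨_, rfl⟩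
    have hX₁ : X₁ᵀ * X₁ = 1 := by
      rw [hX₁def, Matrix.transpose_mul, Matrix.mul_assoc,
        ← Matrix.mul_assoc V'ᵀ V' P₁, hV', Matrix.one_mul, hP₁]
    have s1 : Matrix.trace (X₁ᵀ * ((Qᵀ * A)ᵀ * (Qᵀ * A)) * X₁)
        = ∑ j : Fin (min l n), (if (j : ℕ) < k then σ' j ^ 2 else 0) := by
      rw [gM]
      have e : X₁ᵀ * (V' * Matrix.diagonal (fun j => σ' j ^ 2) * V'ᵀ) * X₁
          = P₁ᵀ * Matrix.diagonal (fun j => σ' j ^ 2) * P₁ := by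
        rw [hX₁def, Matrix.transpose_mul]
        simp only [Matrix.mul_assoc]
        rw [← Matrix.mul_assoc V'ᵀ V', hV', Matrix.one_mul,
          ← Matrix.mul_assoc V'ᵀ V', hV', Matrix.one_mul]
      rw [e, hP₁def, selMat_diag _ he₁, Matrix.trace_diagonal,
        sum_ite_lt hkr (fun j => σ' j ^ 2)]
    have s2 : Matrix.trace (X₁ᵀ * ((Qᵀ * A)ᵀ * (Qᵀ * A)) * X₁)
        ≤ Matrix.trace (X₁ᵀ * (Aᵀ * A) * X₁) := by
      have eL : X₁ᵀ * ((Qᵀ * A)ᵀ * (Qᵀ * A)) * X₁ = (Qᵀ * (A * X₁))ᵀ * (Qᵀ * (A * X₁)) := by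
        rw [← gram_conj (Qᵀ * A) X₁, Matrix.mul_assoc]
      have eR : X₁ᵀ * (Aᵀ * A) * X₁ = (A * X₁)ᵀ * (A * X₁) := (gram_conj A X₁).symm
      rw [eL, eR]
      exact trace_proj_le Q (A * X₁) hQ
    have s3 : Matrix.trace (X₁ᵀ * (Aᵀ * A) * X₁)
        ≤ ∑ j : Fin n, (if (j : ℕ) < k then σ j ^ 2 else 0) := by
      have eG : X₁ᵀ * (Aᵀ * A) * X₁
          = (Vᵀ * X₁)ᵀ * Matrix.diagonal (fun j => σ j ^ 2) * (Vᵀ * X₁) := by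
        rw [gA, Matrix.transpose_mul, Matrix.transpose_transpose]
        simp only [Matrix.mul_assoc]
      rw [eG, trace_diag_middle]
      have hts : ∑ i, ∑ a, ((Vᵀ * X₁) i a) ^ 2 = (k : ℝ) := by
        rw [sum_sq_eq_trace (Vᵀ * X₁)]
        have e2 : (Vᵀ * X₁)ᵀ * (Vᵀ * X₁) = X₁ᵀ * (Vᵀᵀ * Vᵀ) * X₁ := gram_conj Vᵀ X₁
        have e3 : Vᵀᵀ * Vᵀ = 1 := by
          rw [Matrix.transpose_transpose]; exact mul_eq_one_comm.mp hV
        rw [e2, e3, Matrix.mul_one, hX₁, Matrix.trace_one]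
        simp
      exact exch_max hkn (fun j => σ j ^ 2) (fun i => ∑ a, ((Vᵀ * X₁) i a) ^ 2) sqanti
        (fun i => sq_nonneg _)
        (fun i => Finset.sum_nonneg fun a _ => sq_nonneg _)
        (fun i => row_norm_le_one V X₁ hV hX₁ i)
        (le_of_eq hts)
    linarith [s1, s2, s3]
  -- ================= Core inequality 2 =================
  have core2 : ∑ j : Fin (min l n), (if (j : ℕ) < k then 0 else σ' j ^ 2)
      ≤ Matrix.trace ((Qᵀ * A - Qᵀ * Ak)ᵀ * (Qᵀ * A - Qᵀ * Ak)) := by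
    rcases eq_or_lt_of_le hkr with heq | hlt
    · have hz : ∑ j : Fin (min l n), (if (j : ℕ) < k then 0 else σ' j ^ 2) = 0 :=
        Finset.sum_eq_zero fun j _ => by
          have hj : (j : ℕ) < k := by have := j.isLt; omega
          simp [hj]
      rw [hz]
      exact trace_gram_nonneg _
    · -- k < min l n
      obtain ⟨e₂, he₂val⟩ : ∃ e : Fin (n - k) → Fin n, ∀ j, (e j : ℕ) = k + (j : ℕ) :=
        ⟨fun j => ⟨k + (j : ℕ), by have := j.isLt; omega⟩, fun j => rfl⟩
      have he₂ : Function.Injective e₂ := by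
        intro a b h
        have h1 := he₂val a
        have h2 := he₂val b
        have : (e₂ a : ℕ) = (e₂ b : ℕ) := by rw [h]
        have : (a : ℕ) = (b : ℕ) := by omega
        exact Fin.ext this
      obtain ⟨P₂, hP₂def⟩ : ∃ P : Matrix (Fin n) (Fin (n - k)) ℝ, P = selMat e₂ := ⟨_, rfl⟩
      have hP₂ : P₂ᵀ * P₂ = 1 := by rw [hP₂def]; exact selMat_orthonormal he₂
      obtain ⟨X₂, hX₂def⟩ : ∃ X : Matrix (Fin n) (Fin (n - k)) ℝ, X = V * P₂ := ⟨_, rfl⟩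
      have hX₂ : X₂ᵀ * X₂ = 1 := by
        rw [hX₂def, Matrix.transpose_mul, Matrix.mul_assoc,
          ← Matrix.mul_assoc Vᵀ V P₂, hV, Matrix.one_mul, hP₂]
      -- the truncated part is killed by X₂
      have hZX : (Qᵀ * Ak) * X₂ = 0 := by
        rw [hAk, hX₂def]
        simp only [Matrix.mul_assoc]
        rw [← Matrix.mul_assoc Vᵀ V P₂, hV, Matrix.one_mul, hP₂def,
          diag_mul_selMat_eq_zero e₂ _ (fun j => by
            rw [if_neg]
            have := he₂val j
            omega)]
        simp [Matrix.mul_zero]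
      have h2 : (Qᵀ * A - Qᵀ * Ak) * X₂ = (Qᵀ * A) * X₂ := by
        rw [Matrix.sub_mul, hZX, sub_zero]
      have h1 : Matrix.trace (((Qᵀ * A - Qᵀ * Ak) * X₂)ᵀ * ((Qᵀ * A - Qᵀ * Ak) * X₂))
          ≤ Matrix.trace ((Qᵀ * A - Qᵀ * Ak)ᵀ * (Qᵀ * A - Qᵀ * Ak)) :=
        trace_contraction _ X₂ hX₂
      have h3 : Matrix.trace (((Qᵀ * A) * X₂)ᵀ * ((Qᵀ * A) * X₂))
          = ∑ i, σ' i ^ 2 * ∑ a, ((V'ᵀ * X₂) i a) ^ 2 := by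
        rw [gram_conj (Qᵀ * A) X₂, gM]
        have eG : X₂ᵀ * (V' * Matrix.diagonal (fun j => σ' j ^ 2) * V'ᵀ) * X₂
            = (V'ᵀ * X₂)ᵀ * Matrix.diagonal (fun j => σ' j ^ 2) * (V'ᵀ * X₂) := by
          rw [Matrix.transpose_mul, Matrix.transpose_transpose]
          simp only [Matrix.mul_assoc]
        rw [eG, trace_diag_middle]
      -- lower bound for the mass of t
      have hts : (↑(min l n) : ℝ) - k ≤ ∑ i, ∑ a, ((V'ᵀ * X₂) i a) ^ 2 := by
        rw [sum_sq_eq_trace (V'ᵀ * X₂)]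
        have e2 : (V'ᵀ * X₂)ᵀ * (V'ᵀ * X₂) = X₂ᵀ * (V' * V'ᵀ) * X₂ := by
          have := gram_conj V'ᵀ X₂
          rwa [Matrix.transpose_transpose] at this
        rw [e2]
        have e6 : X₂ᵀ * (V' * V'ᵀ) * X₂ = X₂ᵀ * X₂ - X₂ᵀ * (1 - V' * V'ᵀ) * X₂ := by
          rw [Matrix.mul_sub, Matrix.mul_one, Matrix.sub_mul]
          abel
        have e7 : Matrix.trace (X₂ᵀ * (1 - V' * V'ᵀ) * X₂) ≤ (n : ℝ) - ((min l n : ℕ) : ℝ) := by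
          rw [← proj_conj_eq V' hV' X₂]
          have hc := trace_contraction (1 - V' * V'ᵀ) X₂ hX₂
          have e8 : Matrix.trace ((1 - V' * V'ᵀ)ᵀ * (1 - V' * V'ᵀ)) = (n : ℝ) - ((min l n : ℕ) : ℝ) := by
            rw [proj_transpose2 V', proj_idem2 V' hV', Matrix.trace_sub, Matrix.trace_one,
              Matrix.trace_mul_comm, hV', Matrix.trace_one]
            simp
          rw [e8] at hc
          exact hc
        have e9 : Matrix.trace (X₂ᵀ * X₂) = (↑(n - k) : ℝ) := by
          rw [hX₂, Matrix.trace_one]; simp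
        rw [e6, Matrix.trace_sub, e9]
        have : ((n - k : ℕ) : ℝ) = (n : ℝ) - (k : ℝ) := by
          have : k ≤ n := hkn.le
          push_cast [Nat.cast_sub this]
          ring
        rw [this]
        have hln : ((min l n : ℕ) : ℝ) ≤ (n : ℝ) := by
          exact_mod_cast min_le_right l n
        linarith [e7]
      have main := exch_min hlt (fun j => σ' j ^ 2) (fun i => ∑ a, ((V'ᵀ * X₂) i a) ^ 2)
        sqanti' (fun i => sq_nonneg _)
        (fun i => Finset.sum_nonneg fun a _ => sq_nonneg _)
        (fun i => row_norm_le_one V' X₂ hV' hX₂ i)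
        hts
      calc ∑ j : Fin (min l n), (if (j : ℕ) < k then 0 else σ' j ^ 2)
          ≤ ∑ i, σ' i ^ 2 * ∑ a, ((V'ᵀ * X₂) i a) ^ 2 := main
        _ = Matrix.trace (((Qᵀ * A) * X₂)ᵀ * ((Qᵀ * A) * X₂)) := h3.symm
        _ = Matrix.trace (((Qᵀ * A - Qᵀ * Ak) * X₂)ᵀ * ((Qᵀ * A - Qᵀ * Ak) * X₂)) := by
            rw [h2]
        _ ≤ Matrix.trace ((Qᵀ * A - Qᵀ * Ak)ᵀ * (Qᵀ * A - Qᵀ * Ak)) := h1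
  -- ================= Assemble =================
  have HBk := trace_QZ Q hQ A Bk
  have HAk := trace_QZ Q hQ A (Qᵀ * Ak)
  have eσ := sum_tail (k := k) (fun j : Fin n => σ j ^ 2)
  have eσ' := sum_tail (k := k) (fun j : Fin (min l n) => σ' j ^ 2)
  constructor
  · apply Real.sqrt_le_sqrt
    rw [sum_sq_eq_trace, sum_sq_eq_trace, HBk, fAk, fBk, tA, tM]
    rw [eσ, eσ']
    linarith [core1]
  · apply Real.sqrt_le_sqrt
    rw [sum_sq_eq_trace, sum_sq_eq_trace, HBk, HAk, fBk]
    linarith [core2]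
end

section
/- (Hoffman–Wielandt for singular values) Let X and Y be m×n real matrices with m ≥ n. Then sqrt(Σ_{j=1}^n |σ_j(X) − σ_j(Y)|²) ≤ ‖X − Y‖_F. -/
open Matrix

open Finset

namespace HW

variable {n : ℕ}

noncomputable def ext0 (s : Fin n → ℝ) : ℕ → ℝ := fun r => if h : r < n then s ⟨r, h⟩ else 0

noncomputable def del (s : Fin n → ℝ) : ℕ → ℝ := fun r => ext0 s r - ext0 s (r + 1)

lemma del_nonneg {s : Fin n → ℝ} (hs : Antitone s) (h0 : ∀ j, 0 ≤ s j) (r : ℕ) :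
    0 ≤ del s r := by
  unfold del ext0
  split_ifs with h1 h2 h2
  · rw [sub_nonneg]
    exact hs (by simp [Fin.mk_le_mk])
  · simpa using h0 ⟨r, h1⟩
  · omega
  · simp

lemma sum_del (s : Fin n → ℝ) (a : Fin n) :
    ∑ r ∈ Finset.range n, (if (a : ℕ) ≤ r then del s r else 0) = s a := by
  have h1 : ∑ r ∈ Finset.range n, (if (a : ℕ) ≤ r then del s r else 0)
      = ∑ r ∈ Finset.Ico (a : ℕ) n, del s r := by
    rw [Finset.sum_ite, Finset.sum_const_zero, add_zero]
    apply Finset.sum_congr _ (fun _ _ => rfl)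
    ext r
    simp only [Finset.mem_filter, Finset.mem_Ico, Finset.mem_range]
    omega
  have h2 : ∀ N : ℕ, ∑ i ∈ Finset.range N, del s ((a : ℕ) + i)
      = ext0 s a - ext0 s ((a : ℕ) + N) := by
    intro N
    induction N with
    | zero => simp
    | succ k ih =>
      rw [Finset.sum_range_succ, ih]
      show _ = ext0 s ↑a - ext0 s (↑a + k + 1)
      unfold del
      ring
  rw [h1, Finset.sum_Ico_eq_sum_range, h2]
  have h3 : (a : ℕ) + (n - (a : ℕ)) = n := by omega
  rw [h3]
  unfold ext0
  rw [dif_neg (lt_irrefl n), dif_pos a.isLt]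
  simp

lemma sum_ind (r : ℕ) :
    ∑ j : Fin n, (if (j : ℕ) ≤ r then (1 : ℝ) else 0) = (min (r + 1) n : ℕ) := by
  rw [Fin.sum_univ_eq_sum_range (fun j => if j ≤ r then (1 : ℝ) else 0)]
  rw [Finset.sum_ite, Finset.sum_const_zero, add_zero, Finset.sum_const, nsmul_eq_mul, mul_one]
  congr 1
  have : Finset.filter (fun j => j ≤ r) (Finset.range n) = Finset.range (min (r + 1) n) := by
    ext x
    simp only [Finset.mem_filter, Finset.mem_range, Finset.mem_range]
    omega
  rw [this, Finset.card_range]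

lemma expand (s t : Fin n → ℝ) (E : Fin n → Fin n → ℝ) :
    ∑ j, ∑ k, s j * t k * E j k =
      ∑ r ∈ Finset.range n, ∑ u ∈ Finset.range n, del s r * del t u *
        (∑ j : Fin n, ∑ k : Fin n, (if (j : ℕ) ≤ r then (1:ℝ) else 0) * (if (k : ℕ) ≤ u then (1:ℝ) else 0)
          * E j k) := by
  have key : ∀ j k : Fin n, s j * t k * E j k
      = ∑ r ∈ Finset.range n, ∑ u ∈ Finset.range n, del s r * del t u *
        ((if (j : ℕ) ≤ r then (1:ℝ) else 0) * (if (k : ℕ) ≤ u then (1:ℝ) else 0) * E j k) := by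
    intro j k
    conv_lhs => rw [← sum_del s j, ← sum_del t k]
    rw [Finset.sum_mul_sum, Finset.sum_mul]
    apply Finset.sum_congr rfl
    intro r _
    rw [Finset.sum_mul]
    apply Finset.sum_congr rfl
    intro u _
    split_ifs <;> ring
  calc ∑ j, ∑ k, s j * t k * E j k
      = ∑ j : Fin n, ∑ k : Fin n, ∑ r ∈ Finset.range n, ∑ u ∈ Finset.range n,
          del s r * del t u *
          ((if (j : ℕ) ≤ r then (1:ℝ) else 0) * (if (k : ℕ) ≤ u then (1:ℝ) else 0) * E j k) :=
        Finset.sum_congr rfl fun j _ => Finset.sum_congr rfl fun k _ => key j k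
    _ = ∑ j : Fin n, ∑ r ∈ Finset.range n, ∑ k : Fin n, ∑ u ∈ Finset.range n,
          del s r * del t u *
          ((if (j : ℕ) ≤ r then (1:ℝ) else 0) * (if (k : ℕ) ≤ u then (1:ℝ) else 0) * E j k) :=
        Finset.sum_congr rfl fun j _ => Finset.sum_comm
    _ = ∑ r ∈ Finset.range n, ∑ j : Fin n, ∑ k : Fin n, ∑ u ∈ Finset.range n,
          del s r * del t u *
          ((if (j : ℕ) ≤ r then (1:ℝ) else 0) * (if (k : ℕ) ≤ u then (1:ℝ) else 0) * E j k) := by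
        rw [Finset.sum_comm]
    _ = ∑ r ∈ Finset.range n, ∑ j : Fin n, ∑ u ∈ Finset.range n, ∑ k : Fin n,
          del s r * del t u *
          ((if (j : ℕ) ≤ r then (1:ℝ) else 0) * (if (k : ℕ) ≤ u then (1:ℝ) else 0) * E j k) :=
        Finset.sum_congr rfl fun r _ => Finset.sum_congr rfl fun j _ => Finset.sum_comm
    _ = ∑ r ∈ Finset.range n, ∑ u ∈ Finset.range n, ∑ j : Fin n, ∑ k : Fin n,
          del s r * del t u *
          ((if (j : ℕ) ≤ r then (1:ℝ) else 0) * (if (k : ℕ) ≤ u then (1:ℝ) else 0) * E j k) :=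
        Finset.sum_congr rfl fun r _ => Finset.sum_comm
    _ = _ := by
        apply Finset.sum_congr rfl; intro r _
        apply Finset.sum_congr rfl; intro u _
        rw [Finset.mul_sum]
        apply Finset.sum_congr rfl; intro j _
        rw [Finset.mul_sum]

lemma core (s t : Fin n → ℝ) (hs : Antitone s) (ht : Antitone t)
    (hs0 : ∀ j, 0 ≤ s j) (ht0 : ∀ j, 0 ≤ t j)
    (E : Fin n → Fin n → ℝ) (hE0 : ∀ j k, 0 ≤ E j k)
    (hrow : ∀ j, ∑ k, E j k ≤ 1) (hcol : ∀ k, ∑ j, E j k ≤ 1) :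
    ∑ j, ∑ k, s j * t k * E j k ≤ ∑ c, s c * t c := by
  have hdiag : ∑ c, s c * t c
      = ∑ j, ∑ k, s j * t k * (if j = k then (1:ℝ) else 0) := by
    simp [mul_ite]
  rw [hdiag, expand s t E, expand s t (fun j k => if j = k then (1:ℝ) else 0)]
  apply Finset.sum_le_sum; intro r hr
  apply Finset.sum_le_sum; intro u hu
  rw [Finset.mem_range] at hr hu
  have hδ := mul_nonneg (del_nonneg hs hs0 r) (del_nonneg ht ht0 u)
  apply mul_le_mul_of_nonneg_left _ hδ
  -- G_E ≤ G_diag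
  have hdiag2 : ∑ j : Fin n, ∑ k : Fin n,
      (if (j : ℕ) ≤ r then (1:ℝ) else 0) * (if (k : ℕ) ≤ u then (1:ℝ) else 0)
        * (if j = k then (1:ℝ) else 0)
      = (min (min r u + 1) n : ℕ) := by
    have h1 : ∀ j : Fin n, ∑ k : Fin n,
        (if (j : ℕ) ≤ r then (1:ℝ) else 0) * (if (k : ℕ) ≤ u then (1:ℝ) else 0)
          * (if j = k then (1:ℝ) else 0)
        = (if (j : ℕ) ≤ min r u then (1:ℝ) else 0) := by
      intro j
      rw [Finset.sum_eq_single j]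
      · split_ifs <;> simp_all <;> omega
      · intro k _ hk
        simp [Ne.symm hk]
      · simp
    rw [Finset.sum_congr rfl fun j _ => h1 j]
    rw [sum_ind (min r u)]
  rw [hdiag2]
  -- bound G_E by min (r+1) n and min (u+1) n
  have hb1 : ∑ j : Fin n, ∑ k : Fin n,
      (if (j : ℕ) ≤ r then (1:ℝ) else 0) * (if (k : ℕ) ≤ u then (1:ℝ) else 0) * E j k
      ≤ (min (r + 1) n : ℕ) := by
    rw [← sum_ind (n := n) r]
    apply Finset.sum_le_sum
    intro j _
    split_ifs with h
    · simp only [one_mul]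
      calc ∑ k : Fin n, (if (k : ℕ) ≤ u then (1:ℝ) else 0) * E j k
          ≤ ∑ k : Fin n, E j k := by
            apply Finset.sum_le_sum
            intro k _
            split_ifs <;> simp [hE0 j k]
        _ ≤ 1 := hrow j
    · simp
  have hb2 : ∑ j : Fin n, ∑ k : Fin n,
      (if (j : ℕ) ≤ r then (1:ℝ) else 0) * (if (k : ℕ) ≤ u then (1:ℝ) else 0) * E j k
      ≤ (min (u + 1) n : ℕ) := by
    rw [Finset.sum_comm, ← sum_ind (n := n) u]
    apply Finset.sum_le_sum
    intro k _
    split_ifs with h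
    · calc ∑ j : Fin n, (if (j : ℕ) ≤ r then (1:ℝ) else 0) * 1 * E j k
          ≤ ∑ j : Fin n, E j k := by
            apply Finset.sum_le_sum
            intro j _
            split_ifs <;> simp [hE0 j k]
        _ ≤ 1 := hcol k
    · simp
  have : (min (min r u + 1) n : ℕ) = min (min (r+1) n) (min (u+1) n) := by omega
  rw [this, Nat.cast_min]
  exact le_min hb1 hb2



variable {m n : ℕ}

noncomputable def eig (A : Matrix (Fin m) (Fin n) ℝ) : Fin n → ℝ :=
  (Matrix.isHermitian_conjTranspose_mul_self A).eigenvalues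

noncomputable def Vm (A : Matrix (Fin m) (Fin n) ℝ) : Matrix (Fin n) (Fin n) ℝ :=
  ((Matrix.isHermitian_conjTranspose_mul_self A).eigenvectorUnitary : Matrix (Fin n) (Fin n) ℝ)

noncomputable def sval (A : Matrix (Fin m) (Fin n) ℝ) : Fin n → ℝ :=
  fun j => Real.sqrt (eig A j)

noncomputable def Pm (A : Matrix (Fin m) (Fin n) ℝ) : Matrix (Fin m) (Fin n) ℝ :=
  A * Vm A * diagonal (fun j => (sval A j)⁻¹)

lemma eig_nonneg (A : Matrix (Fin m) (Fin n) ℝ) (j : Fin n) : 0 ≤ eig A j :=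
  Matrix.eigenvalues_conjTranspose_mul_self_nonneg A j

lemma sval_nonneg (A : Matrix (Fin m) (Fin n) ℝ) (j : Fin n) : 0 ≤ sval A j :=
  Real.sqrt_nonneg _

lemma hV1 (A : Matrix (Fin m) (Fin n) ℝ) : (Vm A)ᴴ * Vm A = 1 := by
  have := ((Matrix.isHermitian_conjTranspose_mul_self A).eigenvectorUnitary).2
  rw [Matrix.mem_unitaryGroup_iff'] at this
  simpa [Matrix.star_eq_conjTranspose, Vm] using this

lemma hV2 (A : Matrix (Fin m) (Fin n) ℝ) : Vm A * (Vm A)ᴴ = 1 := by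
  have := ((Matrix.isHermitian_conjTranspose_mul_self A).eigenvectorUnitary).2
  rw [Matrix.mem_unitaryGroup_iff] at this
  simpa [Matrix.star_eq_conjTranspose, Vm] using this

lemma hspec (A : Matrix (Fin m) (Fin n) ℝ) :
    (Vm A)ᴴ * (Aᴴ * A) * Vm A = diagonal (eig A) := by
  have := (Matrix.isHermitian_conjTranspose_mul_self A).conjStarAlgAut_star_eigenvectorUnitary
  rw [Unitary.conjStarAlgAut_star_apply] at this
  simpa [Matrix.star_eq_conjTranspose, Vm, eig, Function.comp] using this

lemma hMM (A : Matrix (Fin m) (Fin n) ℝ) :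
    (A * Vm A)ᴴ * (A * Vm A) = diagonal (eig A) := by
  rw [conjTranspose_mul, ← hspec A]
  simp only [Matrix.mul_assoc]

lemma col_sq (A : Matrix (Fin m) (Fin n) ℝ) (j : Fin n) :
    ∑ i, ((A * Vm A) i j) ^ 2 = eig A j := by
  have h := congrArg (fun M => M j j) (hMM A)
  simp only [mul_apply, conjTranspose_apply, star_trivial, diagonal_apply_eq] at h
  simp only [mul_apply, sq]
  rw [← h]

lemma col_zero (A : Matrix (Fin m) (Fin n) ℝ) (j : Fin n) (h : eig A j = 0) (i : Fin m) :
    (A * Vm A) i j = 0 := by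
  have h2 : ∑ i, ((A * Vm A) i j) ^ 2 = 0 := by rw [col_sq A j, h]
  have h3 := (Finset.sum_eq_zero_iff_of_nonneg (fun i _ => sq_nonneg ((A * Vm A) i j))).mp h2
  exact pow_eq_zero_iff (n := 2) (by norm_num) |>.mp (h3 i (Finset.mem_univ i))

lemma hPP (A : Matrix (Fin m) (Fin n) ℝ) :
    (Pm A)ᴴ * Pm A = diagonal (fun j => if eig A j = 0 then (0:ℝ) else 1) := by
  have hstar : (star fun j => (sval A j)⁻¹) = fun j => (sval A j)⁻¹ := by
    funext j; simp
  unfold Pm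
  rw [conjTranspose_mul, diagonal_conjTranspose, hstar]
  calc diagonal (fun j => (sval A j)⁻¹) * (A * Vm A)ᴴ * (A * Vm A * diagonal fun j => (sval A j)⁻¹)
      = diagonal (fun j => (sval A j)⁻¹) * ((A * Vm A)ᴴ * (A * Vm A)) * diagonal fun j => (sval A j)⁻¹ := by
        simp only [Matrix.mul_assoc]
    _ = (diagonal fun j => (sval A j)⁻¹) * diagonal (eig A) * diagonal fun j => (sval A j)⁻¹ := by
        rw [hMM A]
    _ = diagonal fun j => (sval A j)⁻¹ * eig A j * (sval A j)⁻¹ := by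
        rw [diagonal_mul_diagonal, diagonal_mul_diagonal]
    _ = _ := by
        apply congrArg diagonal
        funext j
        by_cases h : eig A j = 0
        · simp [h, sval]
        · rw [if_neg h]
          have hpos : 0 < eig A j := lt_of_le_of_ne (eig_nonneg A j) (Ne.symm h)
          have hsne : sval A j ≠ 0 := Real.sqrt_ne_zero'.mpr hpos
          have hs : sval A j * sval A j = eig A j := Real.mul_self_sqrt (eig_nonneg A j)
          field_simp
          linarith [hs]

lemma hAVP (A : Matrix (Fin m) (Fin n) ℝ) :
    A * Vm A = Pm A * diagonal (sval A) := by
  unfold Pm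
  ext i j
  rw [mul_diagonal, mul_diagonal]
  by_cases h : eig A j = 0
  · rw [col_zero A j h i]
    ring
  · have hpos : 0 < eig A j := lt_of_le_of_ne (eig_nonneg A j) (Ne.symm h)
    have hsne : sval A j ≠ 0 := by
      simp only [sval]
      exact (Real.sqrt_ne_zero'.mpr hpos)
    field_simp

lemma hA_eq (A : Matrix (Fin m) (Fin n) ℝ) :
    A = Pm A * diagonal (sval A) * (Vm A)ᴴ := by
  rw [← hAVP A, Matrix.mul_assoc, hV2 A, Matrix.mul_one]

lemma hPdiag (A : Matrix (Fin m) (Fin n) ℝ) :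
    Pm A * diagonal (fun j => if eig A j = 0 then (0:ℝ) else 1) = Pm A := by
  ext i j
  rw [mul_diagonal]
  by_cases h : eig A j = 0
  · simp only [h, if_true]
    have : Pm A i j = 0 := by
      unfold Pm
      rw [mul_diagonal]
      have : sval A j = 0 := by simp [sval, h]
      rw [this]
      simp
    rw [this]; ring
  · simp [h]

lemma hPPidem (A : Matrix (Fin m) (Fin n) ℝ) :
    (Pm A * (Pm A)ᴴ) * (Pm A * (Pm A)ᴴ) = Pm A * (Pm A)ᴴ := by
  calc (Pm A * (Pm A)ᴴ) * (Pm A * (Pm A)ᴴ)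
      = Pm A * ((Pm A)ᴴ * Pm A) * (Pm A)ᴴ := by simp only [Matrix.mul_assoc]
    _ = (Pm A * diagonal (fun j => if eig A j = 0 then (0:ℝ) else 1)) * (Pm A)ᴴ := by
        rw [hPP A, Matrix.mul_assoc]
    _ = Pm A * (Pm A)ᴴ := by rw [hPdiag A]

lemma psd_one_sub {k : ℕ} {R : Matrix (Fin k) (Fin k) ℝ} (hsym : Rᴴ = R)
    (hidem : R * R = R) : PosSemidef (1 - R) := by
  have h1 : (1 - R)ᴴ = 1 - R := by
    rw [conjTranspose_sub, hsym, conjTranspose_one]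
  have h2 : (1 - R) * (1 - R) = 1 - R := by
    simp only [Matrix.mul_sub, Matrix.sub_mul, Matrix.mul_one, Matrix.one_mul, hidem]
    try abel
  have h3 : 1 - R = (1 - R)ᴴ * (1 - R) := by rw [h1, h2]
  rw [h3]
  exact posSemidef_conjTranspose_mul_self _

lemma psd_diag {k : ℕ} {M : Matrix (Fin k) (Fin k) ℝ} (hM : PosSemidef M) (j : Fin k) :
    0 ≤ M j j := by
  exact hM.diag_nonneg

/-- If `PᴴP` is diagonal with entries `≤ 1` and `QQᴴ` is idempotent (and symmetric),
then rows of `PᴴQ` have squared norm at most 1. -/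
lemma gram_bound {P Q : Matrix (Fin m) (Fin n) ℝ} {p : Fin n → ℝ}
    (hP : Pᴴ * P = diagonal p) (hp : ∀ j, p j ≤ 1)
    (hQsym : (Q * Qᴴ)ᴴ = Q * Qᴴ) (hQidem : (Q * Qᴴ) * (Q * Qᴴ) = Q * Qᴴ) (j : Fin n) :
    ∑ k, ((Pᴴ * Q) j k) ^ 2 ≤ 1 := by
  have hpsd := (psd_one_sub hQsym hQidem).conjTranspose_mul_mul_same P
  have hdiag := psd_diag hpsd j
  have hexp : Pᴴ * (1 - Q * Qᴴ) * P = Pᴴ * P - Pᴴ * (Q * Qᴴ) * P := by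
    rw [Matrix.mul_sub, Matrix.mul_one, Matrix.sub_mul]
  rw [hexp] at hdiag
  have hentry : (Pᴴ * (Q * Qᴴ) * P) j j = ∑ k, ((Pᴴ * Q) j k) ^ 2 := by
    have h1 : Pᴴ * (Q * Qᴴ) * P = (Pᴴ * Q) * (Pᴴ * Q)ᴴ := by
      rw [conjTranspose_mul, conjTranspose_conjTranspose]
      simp only [Matrix.mul_assoc]
    rw [h1]
    simp only [mul_apply, conjTranspose_apply, star_trivial, sq]
  have hPjj : (Pᴴ * P) j j = p j := by rw [hP]; simp
  rw [Matrix.sub_apply, hentry, hPjj] at hdiag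
  linarith [hp j]

lemma trace_diag (s t : Fin n → ℝ) (M N : Matrix (Fin n) (Fin n) ℝ) :
    trace (diagonal s * M * diagonal t * N) = ∑ j, ∑ k, s j * t k * (M j k * N k j) := by
  simp only [trace, diag_apply, mul_apply, diagonal_apply, ite_mul, mul_ite, zero_mul, mul_zero,
    Finset.sum_ite_eq, Finset.sum_ite_eq', Finset.mem_univ, if_true]
  refine Finset.sum_congr rfl fun j _ => Finset.sum_congr rfl fun k _ => by ring

lemma frob_eq_trace (X Y : Matrix (Fin m) (Fin n) ℝ) :
    ∑ i, ∑ j, X i j * Y i j = trace (Xᴴ * Y) := by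
  simp only [trace, diag_apply, mul_apply, conjTranspose_apply, star_trivial]
  rw [Finset.sum_comm]

lemma trace_form (X Y : Matrix (Fin m) (Fin n) ℝ) :
    ∑ i, ∑ j, X i j * Y i j =
      ∑ j, ∑ k, sval X j * sval Y k *
        (((Pm X)ᴴ * Pm Y) j k * (((Vm Y)ᴴ * Vm X) k j)) := by
  rw [frob_eq_trace, ← trace_diag]
  have hXc : Xᴴ = Vm X * (diagonal (sval X) * (Pm X)ᴴ) := by
    conv_lhs => rw [hA_eq X]
    rw [conjTranspose_mul, conjTranspose_mul, conjTranspose_conjTranspose,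
      diagonal_conjTranspose]
    simp
  calc trace (Xᴴ * Y)
      = trace (Vm X * ((diagonal (sval X) * (Pm X)ᴴ) * Y)) := by
        rw [hXc, Matrix.mul_assoc]
    _ = trace (((diagonal (sval X) * (Pm X)ᴴ) * Y) * Vm X) := trace_mul_comm _ _
    _ = trace (diagonal (sval X) * ((Pm X)ᴴ * Pm Y) * diagonal (sval Y) * ((Vm Y)ᴴ * Vm X)) := by
        conv_lhs => rw [hA_eq Y]
        simp only [Matrix.mul_assoc]



noncomputable def ψ (A : Matrix (Fin m) (Fin n) ℝ) : Equiv.Perm (Fin n) :=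
  (Tuple.sort (eig A)).symm.trans (Fin.revPerm)

lemma sv_eq (A : Matrix (Fin m) (Fin n) ℝ) (j : Fin n) :
    sv A j = Real.sqrt (eig A (Tuple.sort (eig A) j.rev)) := rfl

lemma sval_eq_sv (A : Matrix (Fin m) (Fin n) ℝ) (i : Fin n) :
    sval A i = sv A (ψ A i) := by
  have h1 : (ψ A i).rev = (Tuple.sort (eig A)).symm i := by
    simp [ψ, Fin.rev_rev]
  rw [sv_eq, h1, Equiv.apply_symm_apply]
  rfl

lemma sv_antitone (A : Matrix (Fin m) (Fin n) ℝ) : Antitone (sv A) := by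
  intro a b hab
  rw [sv_eq, sv_eq]
  apply Real.sqrt_le_sqrt
  exact Tuple.monotone_sort (eig A) (Fin.rev_le_rev.mpr hab)

lemma sv_nonneg (A : Matrix (Fin m) (Fin n) ℝ) (j : Fin n) : 0 ≤ sv A j :=
  Real.sqrt_nonneg _

lemma sum_sv_sq (A : Matrix (Fin m) (Fin n) ℝ) :
    ∑ j, (sv A j) ^ 2 = ∑ i, ∑ j, (A i j) ^ 2 := by
  have h1 : ∑ j : Fin n, (sv A j) ^ 2 = ∑ j : Fin n, eig A j := by
    have e1 : ∀ j : Fin n, (sv A j) ^ 2 = eig A (Tuple.sort (eig A) j.rev) := by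
      intro j; rw [sv_eq]; exact Real.sq_sqrt (eig_nonneg A _)
    simp only [e1]
    rw [show (fun j : Fin n => eig A (Tuple.sort (eig A) j.rev))
        = (fun j : Fin n => eig A (Tuple.sort (eig A) (Fin.revPerm j))) from rfl]
    rw [Equiv.sum_comp Fin.revPerm (fun j => eig A (Tuple.sort (eig A) j)),
      Equiv.sum_comp (Tuple.sort (eig A)) (eig A)]
  have hsp : Aᴴ * A = Vm A * diagonal (eig A) * (Vm A)ᴴ := by
    have := (Matrix.isHermitian_conjTranspose_mul_self A).spectral_theorem
    simpa [Matrix.star_eq_conjTranspose, Vm, eig, Function.comp] using this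
  have h2 : trace (Aᴴ * A) = ∑ j : Fin n, eig A j := by
    rw [hsp, Matrix.trace_mul_comm, ← Matrix.mul_assoc, hV1, Matrix.one_mul, trace_diagonal]
  rw [h1, ← h2, ← frob_eq_trace A A]
  simp [sq]

lemma vonNeumann (X Y : Matrix (Fin m) (Fin n) ℝ) :
    ∑ i, ∑ j, X i j * Y i j ≤ ∑ c, sv X c * sv Y c := by
  set M := (Pm X)ᴴ * Pm Y with hMdef
  set N := (Vm Y)ᴴ * Vm X with hNdef
  have hPPsym : ∀ (A : Matrix (Fin m) (Fin n) ℝ), (Pm A * (Pm A)ᴴ)ᴴ = Pm A * (Pm A)ᴴ := by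
    intro A
    rw [conjTranspose_mul, conjTranspose_conjTranspose]
  have hind_le : ∀ (A : Matrix (Fin m) (Fin n) ℝ) (j : Fin n),
      (fun j => if eig A j = 0 then (0:ℝ) else 1) j ≤ 1 := by
    intro A j; dsimp only; split_ifs <;> norm_num
  -- row and column norms of N are 1
  have hNN : Nᴴ * N = 1 := by
    rw [hNdef, conjTranspose_mul, conjTranspose_conjTranspose]
    calc (Vm X)ᴴ * Vm Y * ((Vm Y)ᴴ * Vm X)
        = (Vm X)ᴴ * (Vm Y * (Vm Y)ᴴ) * Vm X := by simp only [Matrix.mul_assoc]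
      _ = 1 := by rw [hV2 Y, Matrix.mul_one, hV1 X]
  have hNNT : N * Nᴴ = 1 := by
    rw [hNdef, conjTranspose_mul, conjTranspose_conjTranspose]
    calc (Vm Y)ᴴ * Vm X * ((Vm X)ᴴ * Vm Y)
        = (Vm Y)ᴴ * (Vm X * (Vm X)ᴴ) * Vm Y := by simp only [Matrix.mul_assoc]
      _ = 1 := by rw [hV2 X, Matrix.mul_one, hV1 Y]
  have hNcol : ∀ j : Fin n, ∑ k, (N k j) ^ 2 = 1 := by
    intro j
    have h := congrArg (fun K => K j j) hNN
    simp only [mul_apply, conjTranspose_apply, star_trivial, one_apply_eq] at h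
    simp only [sq]
    exact h
  have hNrow : ∀ k : Fin n, ∑ j, (N k j) ^ 2 = 1 := by
    intro k
    have h := congrArg (fun K => K k k) hNNT
    simp only [mul_apply, conjTranspose_apply, star_trivial, one_apply_eq] at h
    simp only [sq]
    exact h
  have hMrow : ∀ j : Fin n, ∑ k, (M j k) ^ 2 ≤ 1 := fun j =>
    gram_bound (hPP X) (hind_le X) (hPPsym Y) (hPPidem Y) j
  have hMcol : ∀ k : Fin n, ∑ j, (M j k) ^ 2 ≤ 1 := by
    intro k
    have hM' : ∀ j, M j k = ((Pm Y)ᴴ * Pm X) k j := by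
      intro j
      have : (Pm Y)ᴴ * Pm X = Mᴴ := by
        rw [hMdef, conjTranspose_mul, conjTranspose_conjTranspose]
      rw [this, conjTranspose_apply, star_trivial]
    calc ∑ j, (M j k) ^ 2 = ∑ j, (((Pm Y)ᴴ * Pm X) k j) ^ 2 := by
          exact Finset.sum_congr rfl fun j _ => by rw [hM' j]
      _ ≤ 1 := gram_bound (hPP Y) (hind_le Y) (hPPsym X) (hPPidem X) k
  -- row/column bounds for the absolute products
  have rowbound : ∀ j : Fin n, ∑ k, |M j k * N k j| ≤ 1 := by
    intro j
    have hcs : ∑ k, |M j k * N k j|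
        = ∑ k, Real.sqrt ((M j k) ^ 2) * Real.sqrt ((N k j) ^ 2) :=
      Finset.sum_congr rfl fun k _ => by
        rw [abs_mul, Real.sqrt_sq_eq_abs, Real.sqrt_sq_eq_abs]
    rw [hcs]
    calc ∑ k, Real.sqrt ((M j k) ^ 2) * Real.sqrt ((N k j) ^ 2)
        ≤ Real.sqrt (∑ k, (M j k) ^ 2) * Real.sqrt (∑ k, (N k j) ^ 2) :=
          Real.sum_sqrt_mul_sqrt_le _ (fun k => sq_nonneg _) (fun k => sq_nonneg _)
      _ ≤ 1 * 1 := by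
          apply mul_le_mul
          · exact Real.sqrt_le_one.mpr (hMrow j)
          · exact Real.sqrt_le_one.mpr (le_of_eq (hNcol j))
          · exact Real.sqrt_nonneg _
          · norm_num
      _ = 1 := by norm_num
  have colbound : ∀ k : Fin n, ∑ j, |M j k * N k j| ≤ 1 := by
    intro k
    have hcs : ∑ j, |M j k * N k j|
        = ∑ j, Real.sqrt ((M j k) ^ 2) * Real.sqrt ((N k j) ^ 2) :=
      Finset.sum_congr rfl fun j _ => by
        rw [abs_mul, Real.sqrt_sq_eq_abs, Real.sqrt_sq_eq_abs]
    rw [hcs]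
    calc ∑ j, Real.sqrt ((M j k) ^ 2) * Real.sqrt ((N k j) ^ 2)
        ≤ Real.sqrt (∑ j, (M j k) ^ 2) * Real.sqrt (∑ j, (N k j) ^ 2) :=
          Real.sum_sqrt_mul_sqrt_le _ (fun j => sq_nonneg _) (fun j => sq_nonneg _)
      _ ≤ 1 * 1 := by
          apply mul_le_mul
          · exact Real.sqrt_le_one.mpr (hMcol k)
          · exact Real.sqrt_le_one.mpr (le_of_eq (hNrow k))
          · exact Real.sqrt_nonneg _
          · norm_num
      _ = 1 := by norm_num
  -- the reindexed substochastic kernel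
  set E : Fin n → Fin n → ℝ := fun a b =>
    |M ((ψ X).symm a) ((ψ Y).symm b) * N ((ψ Y).symm b) ((ψ X).symm a)| with hEdef
  have hre : ∑ j, ∑ k, sval X j * sval Y k * |M j k * N k j|
      = ∑ a, ∑ b, sv X a * sv Y b * E a b := by
    apply Fintype.sum_equiv (ψ X)
    intro j
    apply Fintype.sum_equiv (ψ Y)
    intro k
    rw [hEdef]
    simp only [Equiv.symm_apply_apply]
    rw [sval_eq_sv X j, sval_eq_sv Y k]
  have hE0 : ∀ a b, 0 ≤ E a b := fun a b => abs_nonneg _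
  have hErow : ∀ a, ∑ b, E a b ≤ 1 := by
    intro a
    have := Equiv.sum_comp (ψ Y).symm
      (fun k => |M ((ψ X).symm a) k * N k ((ψ X).symm a)|)
    rw [hEdef]
    calc ∑ b, |M ((ψ X).symm a) ((ψ Y).symm b) * N ((ψ Y).symm b) ((ψ X).symm a)|
        = ∑ k, |M ((ψ X).symm a) k * N k ((ψ X).symm a)| := this
      _ ≤ 1 := rowbound _
  have hEcol : ∀ b, ∑ a, E a b ≤ 1 := by
    intro b
    have := Equiv.sum_comp (ψ X).symm
      (fun j => |M j ((ψ Y).symm b) * N ((ψ Y).symm b) j|)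
    rw [hEdef]
    calc ∑ a, |M ((ψ X).symm a) ((ψ Y).symm b) * N ((ψ Y).symm b) ((ψ X).symm a)|
        = ∑ j, |M j ((ψ Y).symm b) * N ((ψ Y).symm b) j| := this
      _ ≤ 1 := colbound _
  calc ∑ i, ∑ j, X i j * Y i j
      = ∑ j, ∑ k, sval X j * sval Y k * (M j k * N k j) := trace_form X Y
    _ ≤ ∑ j, ∑ k, sval X j * sval Y k * |M j k * N k j| :=
        Finset.sum_le_sum fun j _ => Finset.sum_le_sum fun k _ =>
          mul_le_mul_of_nonneg_left (le_abs_self _)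
            (mul_nonneg (sval_nonneg X j) (sval_nonneg Y k))
    _ = ∑ a, ∑ b, sv X a * sv Y b * E a b := hre
    _ ≤ ∑ c, sv X c * sv Y c :=
        core (sv X) (sv Y) (sv_antitone X) (sv_antitone Y) (sv_nonneg X) (sv_nonneg Y)
          E hE0 hErow hEcol

end HW

theorem stmt10' {m n : ℕ} (hmn : n ≤ m) (X Y : Matrix (Fin m) (Fin n) ℝ) :
    Real.sqrt (∑ j : Fin n, (sv X j - sv Y j) ^ 2) ≤
      Real.sqrt (∑ i, ∑ j, ((X - Y) i j) ^ 2) := by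
  apply Real.sqrt_le_sqrt
  have hX := HW.sum_sv_sq X
  have hY := HW.sum_sv_sq Y
  have hvn := HW.vonNeumann X Y
  have e1 : ∑ j, (sv X j - sv Y j) ^ 2
      = ∑ j, (sv X j) ^ 2 + ∑ j, (sv Y j) ^ 2 - 2 * ∑ j, sv X j * sv Y j := by
    rw [Finset.mul_sum, ← Finset.sum_add_distrib, ← Finset.sum_sub_distrib]
    exact Finset.sum_congr rfl fun j _ => by ring
  have e2 : ∑ i, ∑ j, ((X - Y) i j) ^ 2
      = ∑ i, ∑ j, (X i j) ^ 2 + ∑ i, ∑ j, (Y i j) ^ 2 - 2 * ∑ i, ∑ j, X i j * Y i j := by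
    rw [Finset.mul_sum, ← Finset.sum_add_distrib, ← Finset.sum_sub_distrib]
    refine Finset.sum_congr rfl fun i _ => ?_
    rw [Finset.mul_sum, ← Finset.sum_add_distrib, ← Finset.sum_sub_distrib]
    refine Finset.sum_congr rfl fun j _ => ?_
    simp only [Matrix.sub_apply]
    ring
  rw [e1, e2]
  linarith

theorem stmt10 {m n : ℕ} (hmn : n ≤ m) (X Y : Matrix (Fin m) (Fin n) ℝ) :
    Real.sqrt (∑ j : Fin n, (sv X j - sv Y j) ^ 2) ≤ frobNorm (X - Y) :=
  stmt10' hmn X Y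
end

section
/- Let H₁ and Σ₁ be matrices with Σ₁ = diag(σ₁,...,σ_k) diagonal positive, where H₁ has k columns. Then the Frobenius-norm quantity satisfies sqrt(trace(Σ₁H₁ᵀ(I + H₁H₁ᵀ)^{-1}H₁Σ₁)) ≤ (√k · ‖H₁Σ₁‖₂ · σ₁) / sqrt(σ₁² + ‖H₁Σ₁‖₂²). -/
open Matrix

/-- Column norm is bounded by the spectral norm. -/
lemma col_sq_le_specNorm_sq {m n : ℕ} (A : Matrix (Fin m) (Fin n) ℝ) (j : Fin n) :
    ∑ a, (A a j) ^ 2 ≤ specNorm A ^ 2 := by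
  set e : EuclideanSpace ℝ (Fin n) := EuclideanSpace.single j (1 : ℝ) with he_def
  have h1 : ‖(Matrix.toEuclideanLin A).toContinuousLinearMap e‖ ≤ specNorm A * ‖e‖ :=
    (Matrix.toEuclideanLin A).toContinuousLinearMap.le_opNorm e
  have he : ‖e‖ = 1 := by simp [he_def, EuclideanSpace.norm_single]
  rw [he, mul_one] at h1
  have h2 : (Matrix.toEuclideanLin A).toContinuousLinearMap e =
      (WithLp.equiv 2 (Fin m → ℝ)).symm (A *ᵥ (WithLp.equiv 2 (Fin n → ℝ)) e) := rfl
  have h3 : ‖(Matrix.toEuclideanLin A).toContinuousLinearMap e‖ ^ 2 = ∑ a, (A a j) ^ 2 := by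
    rw [h2]
    have hea : ∀ a, ((WithLp.equiv 2 (Fin n → ℝ)) e) a = if a = j then (1:ℝ) else 0 := by
      intro a
      rw [he_def]
      simp [EuclideanSpace.single_apply]
    rw [EuclideanSpace.norm_eq, Real.sq_sqrt (by positivity)]
    refine Finset.sum_congr rfl fun a _ => ?_
    simp only [Real.norm_eq_abs, sq_abs]
    congr 1
    simp [Matrix.mulVec, dotProduct, he_def, EuclideanSpace.single_apply, mul_ite]
  calc ∑ a, (A a j) ^ 2 = ‖(Matrix.toEuclideanLin A).toContinuousLinearMap e‖ ^ 2 := h3.symm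
    _ ≤ specNorm A ^ 2 := by
        have := norm_nonneg ((Matrix.toEuclideanLin A).toContinuousLinearMap e)
        nlinarith

/-- Key quadratic-form bound: hᵀ (I + HHᵀ)⁻¹ h ≤ ‖h‖²/(1+‖h‖²), cleared-denominator form. -/
lemma key_bound {p k : ℕ} (H : Matrix (Fin p) (Fin k) ℝ) (j : Fin k) :
    0 ≤ (fun a => H a j) ⬝ᵥ ((1 + H * Hᵀ)⁻¹ *ᵥ (fun a => H a j)) ∧
    ((fun a => H a j) ⬝ᵥ ((1 + H * Hᵀ)⁻¹ *ᵥ (fun a => H a j))) *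
        (1 + (fun a => H a j) ⬝ᵥ (fun a => H a j))
      ≤ (fun a => H a j) ⬝ᵥ (fun a => H a j) := by
  obtain ⟨A, hA⟩ : ∃ A : Matrix (Fin p) (Fin p) ℝ, A = 1 + H * Hᵀ := ⟨_, rfl⟩
  obtain ⟨h, hh⟩ : ∃ h : Fin p → ℝ, h = fun a => H a j := ⟨_, rfl⟩
  rw [← hA, ← hh]
  obtain ⟨x, hx⟩ : ∃ x : Fin p → ℝ, x = A⁻¹ *ᵥ h := ⟨_, rfl⟩
  rw [← hx]
  obtain ⟨v, hv⟩ : ∃ v : ℝ, v = h ⬝ᵥ x := ⟨_, rfl⟩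
  obtain ⟨s, hs⟩ : ∃ s : ℝ, s = h ⬝ᵥ h := ⟨_, rfl⟩
  rw [← hv, ← hs]
  have hApd : A.PosDef := by
    rw [hA]
    exact Matrix.PosDef.add_posSemidef Matrix.PosDef.one
      (Matrix.posSemidef_self_mul_conjTranspose H)
  have hdet : IsUnit A.det := hApd.det_pos.ne'.isUnit
  have hAx : A *ᵥ x = h := by
    rw [hx, Matrix.mulVec_mulVec, Matrix.mul_nonsing_inv A hdet, Matrix.one_mulVec]
  have hvq : v = x ⬝ᵥ (A *ᵥ x) := by
    rw [hAx, hv, dotProduct_comm]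
  have hv2 : v = x ⬝ᵥ x + (Hᵀ *ᵥ x) ⬝ᵥ (Hᵀ *ᵥ x) := by
    rw [hvq, hA, Matrix.add_mulVec, Matrix.one_mulVec, dotProduct_add]
    congr 1
    rw [← Matrix.mulVec_mulVec, dotProduct_mulVec, ← Matrix.mulVec_transpose]
  have hterm : ((Hᵀ *ᵥ x) j) = v := by
    rw [hv, hh]
    simp [Matrix.mulVec, dotProduct, Matrix.transpose_apply]
  have hsum : v ^ 2 ≤ (Hᵀ *ᵥ x) ⬝ᵥ (Hᵀ *ᵥ x) := by
    have h1 := Finset.single_le_sum (f := fun i => ((Hᵀ *ᵥ x) i) ^ 2)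
      (fun i _ => sq_nonneg _) (Finset.mem_univ j)
    rw [hterm] at h1
    calc v ^ 2 ≤ ∑ i, ((Hᵀ *ᵥ x) i) ^ 2 := h1
      _ = (Hᵀ *ᵥ x) ⬝ᵥ (Hᵀ *ᵥ x) := by simp [dotProduct, sq]
  have hxx : 0 ≤ x ⬝ᵥ x := by
    simpa [dotProduct, sq] using
      Finset.sum_nonneg (fun i (_ : i ∈ Finset.univ) => mul_self_nonneg (x i))
  have hs0 : 0 ≤ s := by
    rw [hs]
    simpa [dotProduct, sq] using
      Finset.sum_nonneg (fun i (_ : i ∈ Finset.univ) => mul_self_nonneg (h i))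
  have hineq : x ⬝ᵥ x + v ^ 2 ≤ v := by linarith [hsum, hv2.le, hv2.ge]
  have hv0 : 0 ≤ v := by nlinarith [sq_nonneg v, hxx, hineq]
  have hcs : v ^ 2 ≤ s * (x ⬝ᵥ x) := by
    have h1 := Finset.sum_mul_sq_le_sq_mul_sq Finset.univ h x
    rw [hv, hs]
    simpa [dotProduct, sq] using h1
  refine ⟨hv0, ?_⟩
  rcases eq_or_lt_of_le hv0 with hv0' | hv0'
  · rw [← hv0']; simpa using hs0
  · nlinarith [mul_le_mul_of_nonneg_left hineq hs0, hcs, hv0']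

theorem stmt12 {p k : ℕ} (hk : 0 < k) (σ : Fin k → ℝ)
    (hσanti : Antitone σ) (hσpos : ∀ j, 0 < σ j)
    (H₁ : Matrix (Fin p) (Fin k) ℝ) :
    Real.sqrt
        ((Matrix.diagonal σ * H₁ᵀ * (1 + H₁ * H₁ᵀ)⁻¹ * H₁ * Matrix.diagonal σ).trace)
      ≤ Real.sqrt k * specNorm (H₁ * Matrix.diagonal σ) * σ ⟨0, hk⟩ /
        Real.sqrt (σ ⟨0, hk⟩ ^ 2 + specNorm (H₁ * Matrix.diagonal σ) ^ 2) := by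
  obtain ⟨M, hM⟩ : ∃ M : Matrix (Fin p) (Fin p) ℝ, M = (1 + H₁ * H₁ᵀ)⁻¹ := ⟨_, rfl⟩
  obtain ⟨N, hN⟩ : ∃ N : ℝ, N = specNorm (H₁ * Matrix.diagonal σ) := ⟨_, rfl⟩
  obtain ⟨σ₁, hσ₁⟩ : ∃ σ₁ : ℝ, σ₁ = σ ⟨0, hk⟩ := ⟨_, rfl⟩
  rw [← hM, ← hN, ← hσ₁]
  have hσ₁pos : 0 < σ₁ := hσ₁ ▸ hσpos _
  have hN0 : 0 ≤ N := hN ▸ norm_nonneg _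
  have htrace : (Matrix.diagonal σ * H₁ᵀ * M * H₁ * Matrix.diagonal σ).trace =
      ∑ j, σ j ^ 2 * ((fun a => H₁ a j) ⬝ᵥ (M *ᵥ (fun a => H₁ a j))) := by
    rw [Matrix.trace]
    refine Finset.sum_congr rfl fun j _ => ?_
    have e0 : Matrix.diagonal σ * H₁ᵀ * M * H₁ * Matrix.diagonal σ =
        Matrix.diagonal σ * (H₁ᵀ * M * H₁) * Matrix.diagonal σ := by
      simp only [Matrix.mul_assoc]
    rw [Matrix.diag_apply, e0, Matrix.mul_diagonal, Matrix.diagonal_mul]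
    have e2 : (H₁ᵀ * M * H₁) j j = (fun a => H₁ a j) ⬝ᵥ (M *ᵥ fun a => H₁ a j) := by
      simp only [Matrix.mul_apply, Matrix.transpose_apply, dotProduct, Matrix.mulVec,
        Finset.sum_mul]
      rw [Finset.sum_comm]
      refine Finset.sum_congr rfl fun a _ => ?_
      rw [Finset.mul_sum]
      refine Finset.sum_congr rfl fun b _ => ?_
      ring
    rw [e2]; ring
  have hterm : ∀ j : Fin k, σ j ^ 2 * ((fun a => H₁ a j) ⬝ᵥ (M *ᵥ (fun a => H₁ a j)))
      ≤ σ₁ ^ 2 * N ^ 2 / (σ₁ ^ 2 + N ^ 2) := by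
    intro j
    obtain ⟨hv0, hvs⟩ := key_bound H₁ j
    rw [← hM] at hv0 hvs
    obtain ⟨v, hv⟩ : ∃ v : ℝ, v = (fun a => H₁ a j) ⬝ᵥ (M *ᵥ (fun a => H₁ a j)) := ⟨_, rfl⟩
    obtain ⟨s, hs⟩ : ∃ s : ℝ, s = (fun a => H₁ a j) ⬝ᵥ (fun a => H₁ a j) := ⟨_, rfl⟩
    rw [← hv]
    rw [← hv] at hv0
    rw [← hv, ← hs] at hvs
    have hs0 : 0 ≤ s := by
      rw [hs]
      simpa [dotProduct, sq] using
        Finset.sum_nonneg (fun i (_ : i ∈ Finset.univ) => mul_self_nonneg (H₁ i j))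
    have hcol : σ j ^ 2 * s ≤ N ^ 2 := by
      have h1 : ∑ a, ((H₁ * Matrix.diagonal σ) a j) ^ 2 ≤ N ^ 2 :=
        hN ▸ col_sq_le_specNorm_sq (H₁ * Matrix.diagonal σ) j
      have h2 : ∑ a, ((H₁ * Matrix.diagonal σ) a j) ^ 2 = σ j ^ 2 * s := by
        rw [hs]
        simp only [dotProduct, Matrix.mul_diagonal, Finset.mul_sum]
        exact Finset.sum_congr rfl fun a _ => by ring
      linarith [h2 ▸ h1]
    have hσj : 0 < σ j := hσpos j
    have hσle : σ j ≤ σ₁ := hσ₁ ▸ hσanti (Fin.le_def.mpr (Nat.zero_le _))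
    have hden2 : 0 < σ₁ ^ 2 + N ^ 2 := by positivity
    rw [le_div_iff₀ hden2]
    -- aux facts
    have hv1 : v ≤ 1 := by nlinarith [hvs, hs0, hv0]
    have hav : σ j ^ 2 * v ≤ σ₁ ^ 2 := by nlinarith [hv1, hv0, hσj, hσle, hσ₁pos]
    have h2 : σ₁ ^ 2 * s - σ j ^ 2 * v * s ≥ σ₁ ^ 2 * v := by
      nlinarith [hvs, mul_le_mul_of_nonneg_right (mul_le_mul hσle hσle hσj.le hσ₁pos.le)
        (mul_nonneg hv0 hs0), hσ₁pos]
    have h3 : σ j ^ 2 * (σ₁ ^ 2 * s) - σ j ^ 2 * (σ j ^ 2 * v * s) ≥ σ j ^ 2 * (σ₁ ^ 2 * v) := by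
      nlinarith [mul_le_mul_of_nonneg_left h2 (sq_nonneg (σ j))]
    have h4 : N ^ 2 * (σ₁ ^ 2 - σ j ^ 2 * v) ≥ (σ j ^ 2 * s) * (σ₁ ^ 2 - σ j ^ 2 * v) :=
      mul_le_mul_of_nonneg_right hcol (by linarith [hav])
    nlinarith [h3, h4]
  have hsum : (Matrix.diagonal σ * H₁ᵀ * M * H₁ * Matrix.diagonal σ).trace
      ≤ k * (σ₁ ^ 2 * N ^ 2 / (σ₁ ^ 2 + N ^ 2)) := by
    rw [htrace]
    calc ∑ j, σ j ^ 2 * ((fun a => H₁ a j) ⬝ᵥ (M *ᵥ (fun a => H₁ a j)))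
        ≤ ∑ _j : Fin k, σ₁ ^ 2 * N ^ 2 / (σ₁ ^ 2 + N ^ 2) :=
          Finset.sum_le_sum fun j _ => hterm j
      _ = k * (σ₁ ^ 2 * N ^ 2 / (σ₁ ^ 2 + N ^ 2)) := by
          simp [Finset.sum_const, nsmul_eq_mul]
  have hrhs : Real.sqrt (k * (σ₁ ^ 2 * N ^ 2 / (σ₁ ^ 2 + N ^ 2)))
      = Real.sqrt k * N * σ₁ / Real.sqrt (σ₁ ^ 2 + N ^ 2) := by
    rw [Real.sqrt_mul (Nat.cast_nonneg k), Real.sqrt_div (by positivity),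
      Real.sqrt_mul (sq_nonneg σ₁), Real.sqrt_sq hσ₁pos.le, Real.sqrt_sq hN0]
    ring
  calc Real.sqrt ((Matrix.diagonal σ * H₁ᵀ * M * H₁ * Matrix.diagonal σ).trace)
      ≤ Real.sqrt (k * (σ₁ ^ 2 * N ^ 2 / (σ₁ ^ 2 + N ^ 2))) := Real.sqrt_le_sqrt hsum
    _ = Real.sqrt k * N * σ₁ / Real.sqrt (σ₁ ^ 2 + N ^ 2) := hrhs
end

section
/- For every ψ > 0, max(1/(1 + sqrt(1 + ψ²)), sqrt(1 + ψ²)·log((1 + sqrt(1 + ψ²))/ψ) − 1) ≤ log(2·sqrt(1 + ψ²)/ψ). -/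
open Matrix

theorem stmt19 (ψ : ℝ) (hψ : 0 < ψ) :
    max (1 / (1 + Real.sqrt (1 + ψ ^ 2)))
        (Real.sqrt (1 + ψ ^ 2) * Real.log ((1 + Real.sqrt (1 + ψ ^ 2)) / ψ) - 1)
      ≤ Real.log (2 * Real.sqrt (1 + ψ ^ 2) / ψ) := by
  set s := Real.sqrt (1 + ψ ^ 2) with hsdef
  have hs2 : s ^ 2 = 1 + ψ ^ 2 := Real.sq_sqrt (by positivity)
  have hs0 : 0 ≤ s := Real.sqrt_nonneg _
  have hs1 : 1 < s := by nlinarith [sq_nonneg ψ]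
  have hψs : ψ < s := by nlinarith
  -- log ψ in terms of s
  have hψ2 : ψ ^ 2 = (s - 1) * (s + 1) := by nlinarith
  have hlogψ : Real.log ψ = (Real.log (s - 1) + Real.log (s + 1)) / 2 := by
    have h1 : Real.log (ψ ^ 2) = 2 * Real.log ψ := by
      rw [Real.log_pow]; push_cast; ring
    have h2 : Real.log (ψ ^ 2) = Real.log (s - 1) + Real.log (s + 1) := by
      rw [hψ2, Real.log_mul (by linarith) (by linarith)]
    linarith
  -- RHS expansion
  have hrhs : Real.log (2 * s / ψ) = Real.log 2 + Real.log s - Real.log ψ := by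
    rw [Real.log_div (by positivity) (by positivity),
        Real.log_mul (by norm_num) (by linarith)]
  -- key inequality
  have hkey : Real.log (s + 1) - Real.log (s - 1) ≤ 2 / (s - 1) := by
    have h := Real.log_le_sub_one_of_pos
      (show (0:ℝ) < (s + 1) / (s - 1) from div_pos (by linarith) (by linarith))
    rw [Real.log_div (by linarith) (by linarith)] at h
    have hne : s - 1 ≠ 0 := by linarith
    have : (s + 1) / (s - 1) - 1 = 2 / (s - 1) := by
      field_simp; ring
    linarith [this ▸ h]
  rw [le_div_iff₀ (by linarith : (0:ℝ) < s - 1)] at hkey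
  have hlog21 : Real.log (s + 1) ≤ Real.log 2 + Real.log s := by
    rw [← Real.log_mul (by norm_num) (by linarith)]
    exact Real.log_le_log (by positivity) (by linarith)
  rw [max_le_iff]
  constructor
  · -- 1/(1+s) ≤ 1/2 ≤ log 2 ≤ RHS
    have h1 : (1:ℝ) / (1 + s) ≤ 1 / 2 := by
      rw [div_le_div_iff₀ (by linarith) (by norm_num)]; linarith
    have h2 : (0.6931471803 : ℝ) < Real.log 2 := Real.log_two_gt_d9
    have h3 : Real.log ψ ≤ Real.log s := Real.log_le_log hψ (le_of_lt hψs)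
    rw [hrhs]; linarith
  · have hlhs : Real.log ((1 + s) / ψ) = Real.log (s + 1) - Real.log ψ := by
      rw [Real.log_div (by linarith) (by linarith)]; ring_nf
    rw [hrhs, hlhs, hlogψ]
    nlinarith [hkey, hlog21, hs1]
end
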